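/- arXiv:1806.03421 — 6 statements merged into one kernel-verified Lean document; each statement's English description precedes it below -/
import Mathlib

section
/- Let 0 < α < 1, x > 0, let y be continuous on [0,x] with M = max_{t∈[0,x]} |y(t)|, and let C > 0. For a positive integer N set h = x/N, and suppose (w̄_k)_{k=0}^{N−1} are real numbers with w̄_k = (−1)^k C(α,k) for 0 ≤ k ≤ ⌈N/5⌉ and |w̄_k − (−1)^k C(α,k)| ≤ C/k^{3+α} for ⌈N/5⌉ < k ≤ N−1. Then (1/h^α) |Σ_{k=0}^{N−1} (w̄_k − (−1)^k C(α,k)) y(x − k h)| ≤ C M (5/x)^{2+α} h². -/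
open Finset

/-- Generalized binomial coefficient `C(a,k) = a(a-1)⋯(a-k+1)/k!`. -/
noncomputable def genBinom (a : ℝ) : ℕ → ℝ
  | 0 => 1
  | k + 1 => genBinom a k * (a - k) / (k + 1)

theorem stmt1 (α x M C : ℝ) (hα0 : 0 < α) (hα1 : α < 1) (hx : 0 < x)
    (y : ℝ → ℝ) (hy : ContinuousOn y (Set.Icc 0 x))
    (hM : IsGreatest ((fun t => |y t|) '' Set.Icc 0 x) M)
    (hC : 0 < C) (N : ℕ) (hN : 0 < N) (w : ℕ → ℝ)
    (hw1 : ∀ k, k ≤ ⌈(N : ℝ) / 5⌉₊ → w k = (-1 : ℝ) ^ k * genBinom α k)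
    (hw2 : ∀ k, ⌈(N : ℝ) / 5⌉₊ < k → k ≤ N - 1 →
      |w k - (-1 : ℝ) ^ k * genBinom α k| ≤ C / (k : ℝ) ^ (3 + α)) :
    (1 / (x / N) ^ α) *
        |∑ k ∈ Finset.range N, (w k - (-1 : ℝ) ^ k * genBinom α k) * y (x - k * (x / N))| ≤
      C * M * (5 / x) ^ (2 + α) * (x / N) ^ 2 := by
  have hN' : (0:ℝ) < N := by exact_mod_cast hN
  set m := ⌈(N : ℝ) / 5⌉₊ with hmdef
  have hm1 : 1 ≤ m := Nat.one_le_ceil_iff.mpr (by positivity)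
  have hm5 : (N:ℝ)/5 ≤ m := Nat.le_ceil _
  have hm0 : (0:ℝ) < m := by exact_mod_cast hm1
  have hMnn : 0 ≤ M := by
    obtain ⟨t, _, rfl⟩ := hM.1
    exact abs_nonneg _
  have hMy : ∀ k : ℕ, k < N → |y (x - k * (x/N))| ≤ M := by
    intro k hk
    have hk' : (k:ℝ) ≤ N := by exact_mod_cast hk.le
    have h1 : (k:ℝ) * (x/N) ≤ (N:ℝ) * (x/N) :=
      mul_le_mul_of_nonneg_right hk' (by positivity)
    have h2 : (N:ℝ) * (x/N) = x := by field_simp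
    have h3 : 0 ≤ (k:ℝ) * (x/N) := by positivity
    exact hM.2 ⟨x - k * (x/N), ⟨by linarith, by linarith⟩, rfl⟩
  set F : ℕ → ℝ := fun k => ((max m k : ℕ) : ℝ)⁻¹ with hF
  have h5Na : (0:ℝ) ≤ (5/(N:ℝ))^α := Real.rpow_nonneg (by positivity) _
  set D : ℝ := M * C * (5/(N:ℝ))^α / m with hD
  have hDnn : 0 ≤ D := by positivity
  have hFanti : ∀ k : ℕ, F (k+1) ≤ F k := by
    intro k
    have h1 : (0:ℝ) < ((max m k : ℕ) : ℝ) := by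
      have : 1 ≤ max m k := le_trans hm1 (le_max_left _ _)
      exact_mod_cast this
    apply inv_anti₀ h1
    exact_mod_cast max_le_max (le_refl m) (Nat.le_succ k)
  have key : ∀ k ∈ range N,
      |(w k - (-1:ℝ)^k * genBinom α k) * y (x - k * (x/N))| ≤ D * (F k - F (k+1)) := by
    intro k hk
    rw [mem_range] at hk
    by_cases hkm : k ≤ m
    · rw [hw1 k hkm]
      simp only [sub_self, zero_mul, abs_zero]
      exact mul_nonneg hDnn (by linarith [hFanti k])
    · push_neg at hkm
      have hk1 : k ≤ N - 1 := by omega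
      have hb := hw2 k hkm hk1
      have hk0 : (0:ℝ) < k := by
        have : 1 ≤ k := by omega
        exact_mod_cast this
      have hFk : F k = ((k:ℝ))⁻¹ := by
        simp only [hF]
        rw [Nat.max_eq_right hkm.le]
      have hFk1 : F (k+1) = ((k:ℝ)+1)⁻¹ := by
        simp only [hF]
        rw [Nat.max_eq_right (by omega : m ≤ k+1)]
        push_cast
        ring_nf
      have hsplit : (k:ℝ) ^ (3+α) = (k:ℝ)^(3:ℕ) * (k:ℝ)^α := by
        rw [← Real.rpow_natCast (k:ℝ) 3, ← Real.rpow_add hk0]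
        norm_num
      have hka : 1 ≤ (5/(N:ℝ))^α * (k:ℝ)^α := by
        have h5 : (N:ℝ)/5 ≤ (k:ℝ) := le_trans hm5 (by exact_mod_cast hkm.le)
        have hmono := Real.rpow_le_rpow (by positivity) h5 hα0.le
        calc (1:ℝ) = ((N:ℝ)/5 * (5/(N:ℝ)))^α := by
                rw [show (N:ℝ)/5 * (5/(N:ℝ)) = 1 by field_simp, Real.one_rpow]
          _ = ((N:ℝ)/5)^α * (5/(N:ℝ))^α := Real.mul_rpow (by positivity) (by positivity)
          _ ≤ (k:ℝ)^α * (5/(N:ℝ))^α := mul_le_mul_of_nonneg_right hmono h5Na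
          _ = (5/(N:ℝ))^α * (k:ℝ)^α := by ring
      have hcube : C / (k:ℝ)^(3+α) ≤ C * (5/(N:ℝ))^α / m * ((k:ℝ)⁻¹ - ((k:ℝ)+1)⁻¹) := by
        have hdiff : (k:ℝ)⁻¹ - ((k:ℝ)+1)⁻¹ = 1 / ((k:ℝ) * ((k:ℝ)+1)) := by
          field_simp
          ring
        have hR : C * (5/(N:ℝ))^α / m * (1 / ((k:ℝ) * ((k:ℝ)+1)))
            = (C * (5/(N:ℝ))^α) / ((m:ℝ) * ((k:ℝ) * ((k:ℝ)+1))) := by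
          field_simp
        rw [hdiff, hR, hsplit, div_le_div_iff₀ (by positivity) (by positivity)]
        have hmk : (m:ℝ) ≤ (k:ℝ) - 1 := by
          have h' : m + 1 ≤ k := hkm
          have : ((m:ℕ):ℝ) + 1 ≤ (k:ℝ) := by exact_mod_cast h'
          linarith
        have hkey : (m:ℝ) * ((k:ℝ) * ((k:ℝ)+1)) ≤ (k:ℝ)^(3:ℕ) := by
          nlinarith [mul_le_mul_of_nonneg_right hmk
            (by positivity : (0:ℝ) ≤ (k:ℝ) * ((k:ℝ)+1)), hk0]
        have hka3 : (k:ℝ)^(3:ℕ) ≤ (k:ℝ)^(3:ℕ) * ((5/(N:ℝ))^α * (k:ℝ)^α) :=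
          le_mul_of_one_le_right (by positivity) hka
        nlinarith [mul_le_mul_of_nonneg_left hkey hC.le,
          mul_le_mul_of_nonneg_left hka3 hC.le]
      calc |(w k - (-1:ℝ)^k * genBinom α k) * y (x - k * (x/N))|
          = |w k - (-1:ℝ)^k * genBinom α k| * |y (x - k * (x/N))| := abs_mul _ _
        _ ≤ (C / (k:ℝ)^(3+α)) * M := by
            apply mul_le_mul hb (hMy k hk) (abs_nonneg _)
            positivity
        _ ≤ (C * (5/(N:ℝ))^α / m * ((k:ℝ)⁻¹ - ((k:ℝ)+1)⁻¹)) * M :=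
            mul_le_mul_of_nonneg_right hcube hMnn
        _ = D * (F k - F (k+1)) := by rw [hD, hFk, hFk1]; ring
  have habs : |∑ k ∈ range N, (w k - (-1:ℝ)^k * genBinom α k) * y (x - k * (x/N))|
      ≤ ∑ k ∈ range N, |(w k - (-1:ℝ)^k * genBinom α k) * y (x - k * (x/N))| :=
    Finset.abs_sum_le_sum_abs _ _
  have hsum2 : ∑ k ∈ range N, |(w k - (-1:ℝ)^k * genBinom α k) * y (x - k * (x/N))|
      ≤ ∑ k ∈ range N, D * (F k - F (k+1)) := Finset.sum_le_sum key
  have htel : ∑ k ∈ range N, D * (F k - F (k+1)) = D * (F 0 - F N) := by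
    rw [← Finset.mul_sum, Finset.sum_range_sub' F N]
  have hF0 : F 0 = (m:ℝ)⁻¹ := by simp [hF]
  have hFN : 0 ≤ F N := by
    simp only [hF]
    positivity
  have hS : |∑ k ∈ range N, (w k - (-1:ℝ)^k * genBinom α k) * y (x - k * (x/N))|
      ≤ D * (m:ℝ)⁻¹ := by
    calc |∑ k ∈ range N, (w k - (-1:ℝ)^k * genBinom α k) * y (x - k * (x/N))|
        ≤ D * (F 0 - F N) := by rw [← htel]; exact le_trans habs hsum2
      _ ≤ D * F 0 := by nlinarith
      _ = D * (m:ℝ)⁻¹ := by rw [hF0]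
  have hminv : (m:ℝ)⁻¹ ≤ 5/(N:ℝ) := by
    have h1 : ((N:ℝ)/5)⁻¹ = 5/(N:ℝ) := by field_simp
    rw [← h1]
    exact inv_anti₀ (by positivity) hm5
  have hbound : D * (m:ℝ)⁻¹ ≤ M * C * (5/(N:ℝ))^α * ((5/(N:ℝ)) * (5/(N:ℝ))) := by
    rw [hD]
    have heq : M * C * (5/(N:ℝ))^α / m * (m:ℝ)⁻¹
        = M * C * (5/(N:ℝ))^α * ((m:ℝ)⁻¹ * (m:ℝ)⁻¹) := by ring
    rw [heq]
    apply mul_le_mul_of_nonneg_left _ (by positivity)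
    exact mul_le_mul hminv hminv (by positivity) (by positivity)
  have hAa : (0:ℝ) < (x/(N:ℝ))^α := Real.rpow_pos_of_pos (by positivity) α
  have e1 : (5/(N:ℝ))^α = (5/x)^α * (x/(N:ℝ))^α := by
    rw [← Real.mul_rpow (by positivity) (by positivity)]
    congr 1
    field_simp
  have e2 : (5/x)^(2+α) = (5/x)^(2:ℕ) * (5/x)^α := by
    rw [← Real.rpow_natCast (5/x) 2, ← Real.rpow_add (by positivity)]
    norm_num
  have hfin : (1 / (x/(N:ℝ))^α) * (M * C * (5/(N:ℝ))^α * ((5/(N:ℝ)) * (5/(N:ℝ))))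
      = C * M * (5/x)^(2+α) * (x/(N:ℝ))^2 := by
    have hxA : (5:ℝ)/x * (x/(N:ℝ)) = 5/(N:ℝ) := by field_simp
    have hcancel : ((x/(N:ℝ))^α)⁻¹ * (x/(N:ℝ))^α = 1 := inv_mul_cancel₀ hAa.ne'
    rw [e1, e2, one_div, ← hxA]
    linear_combination (M * C * (5/x)^α * ((5/x) * (x/(N:ℝ)))^2) * hcancel
  calc (1 / (x/(N:ℝ))^α) *
        |∑ k ∈ range N, (w k - (-1:ℝ)^k * genBinom α k) * y (x - k * (x/N))|
      ≤ (1 / (x/(N:ℝ))^α) * (D * (m:ℝ)⁻¹) :=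
        mul_le_mul_of_nonneg_left hS (by positivity)
    _ ≤ (1 / (x/(N:ℝ))^α) * (M * C * (5/(N:ℝ))^α * ((5/(N:ℝ)) * (5/(N:ℝ)))) :=
        mul_le_mul_of_nonneg_left hbound (by positivity)
    _ = C * M * (5/x)^(2+α) * (x/(N:ℝ))^2 := hfin
end

section
/- Let 0 < α < 1. There exists a constant C > 0 such that for every integer k ≥ 1, |(−1)^k C(α,k) − 1/(Γ(−α) k^{1+α}) + α/(2 Γ(−1−α) k^{2+α}) − α(3α+1)/(24 Γ(−2−α) k^{3+α})| ≤ C / k^{4+α}. -/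
open Finset Real Filter Topology

set_option maxHeartbeats 4000000

/-- Mean value bound helper. -/
lemma mvt_abs (f f' : ℝ → ℝ) (t C : ℝ) (ht : 0 ≤ t)
    (hf : ∀ x ∈ Set.Icc (0:ℝ) t, HasDerivAt f (f' x) x)
    (bound : ∀ x ∈ Set.Icc (0:ℝ) t, |f' x| ≤ C) (h0 : f 0 = 0) :
    |f t| ≤ C * t := by
  have := (convex_Icc (0:ℝ) t).norm_image_sub_le_of_norm_hasDerivWithin_le
    (fun x hx => (hf x hx).hasDerivWithinAt)
    (by simpa [Real.norm_eq_abs] using bound)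
    (Set.left_mem_Icc.2 ht) (Set.right_mem_Icc.2 ht)
  simpa [Real.norm_eq_abs, h0, abs_of_nonneg ht] using this

lemma deriv_onePlus_rpow (p s : ℝ) (hs : 0 ≤ s) :
    HasDerivAt (fun x : ℝ => (1+x) ^ p) (p * (1+s) ^ (p-1)) s := by
  have h1 : HasDerivAt (fun x : ℝ => 1 + x) 1 s := (hasDerivAt_id s).const_add 1
  have := h1.rpow_const (p := p) (Or.inl (by positivity))
  simpa using this

lemma rpow_near_one (r s : ℝ) (hr : -2 ≤ r) (hr0 : r ≤ 0) (hs : 0 ≤ s) :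
    |(1+s) ^ r - 1| ≤ 2 * s := by
  have h1 : (1:ℝ) ≤ 1 + s := by linarith
  have hub : (1+s) ^ r ≤ 1 := Real.rpow_le_one_of_one_le_of_nonpos h1 hr0
  have hlb : (1 - 2*s : ℝ) ≤ (1+s) ^ r := by
    have h2 : (1+s) ^ (-2:ℝ) ≤ (1+s) ^ r := Real.rpow_le_rpow_of_exponent_le h1 hr
    have h3 : (1+s) ^ (-2:ℝ) = ((1+s)^(2:ℕ))⁻¹ := by
      rw [show (-2:ℝ) = -((2:ℕ):ℝ) by norm_num, Real.rpow_neg (by linarith),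
        Real.rpow_natCast]
    have h4 : (1 - 2*s) * (1+s)^(2:ℕ) ≤ 1 := by nlinarith [mul_nonneg (mul_nonneg hs hs) hs, sq_nonneg s]
    have h5 : (0:ℝ) < (1+s)^(2:ℕ) := by positivity
    have hinv : ((1+s)^(2:ℕ))⁻¹ * (1+s)^(2:ℕ) = 1 := inv_mul_cancel₀ (ne_of_gt h5)
    have h6 : (1 - 2*s : ℝ) ≤ ((1+s)^(2:ℕ))⁻¹ := by nlinarith [inv_nonneg.2 h5.le]
    linarith [h3 ▸ h2]
  rw [abs_le]; constructor <;> linarith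


lemma tb2 (q t : ℝ) (hq : -1 ≤ q) (hq0 : q ≤ 0) (ht : 0 ≤ t) :
    |(1+t) ^ q - (1 + q*t)| ≤ 2*t^2 := by
  have key := mvt_abs (fun s => (1+s) ^ q - (1 + q*s)) (fun s => q * ((1+s) ^ (q-1) - 1)) t (2*t)
    ht
    (fun s hs => by
      have h1 := deriv_onePlus_rpow q s hs.1
      have h2 : HasDerivAt (fun s:ℝ => 1 + q*s) q s := by
        simpa using ((hasDerivAt_id s).const_mul q).const_add 1
      exact (h1.sub h2).congr_deriv (by ring))
    (fun s hs => by
      rw [abs_mul]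
      have h3 := rpow_near_one (q-1) s (by linarith) (by linarith) hs.1
      have h4 : |q| ≤ 1 := abs_le.2 ⟨by linarith, by linarith⟩
      calc |q| * |(1+s) ^ (q-1) - 1| ≤ 1 * (2*s) :=
            mul_le_mul h4 h3 (abs_nonneg _) zero_le_one
        _ ≤ 2*t := by linarith [hs.2])
    (by simp)
  calc |(1+t) ^ q - (1 + q*t)| ≤ 2*t*t := key
    _ = 2*t^2 := by ring

lemma tb3 (q t : ℝ) (hq : 0 ≤ q) (hq1 : q ≤ 1) (ht : 0 ≤ t) :
    |(1+t) ^ q - (1 + q*t + q*(q-1)*t^2/2)| ≤ 2*t^3 := by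
  have key := mvt_abs (fun s => (1+s) ^ q - (1 + q*s + q*(q-1)*s^2/2))
    (fun s => q * ((1+s) ^ (q-1) - (1 + (q-1)*s))) t (2*t^2) ht
    (fun s hs => by
      have h1 := deriv_onePlus_rpow q s hs.1
      have h2 : HasDerivAt (fun s:ℝ => 1 + q*s + q*(q-1)*s^2/2) (q + q*(q-1)*s) s := by
        have := (((hasDerivAt_id s).const_mul q).const_add 1).add
          ((hasDerivAt_pow 2 s).const_mul (q*(q-1)/2))
        refine (this.congr_deriv (by simp only [Nat.cast_ofNat, Nat.reduceSub, pow_one]; ring)).congr_of_eventuallyEq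
          (Filter.Eventually.of_forall fun x => ?_)
        simp only [Pi.add_apply, id_eq]; ring
      exact (h1.sub h2).congr_deriv (by ring))
    (fun s hs => by
      rw [abs_mul]
      have h3 := tb2 (q-1) s (by linarith) (by linarith) hs.1
      have h4 : |q| ≤ 1 := abs_le.2 ⟨by linarith, hq1⟩
      calc |q| * |(1+s) ^ (q-1) - (1 + (q-1)*s)| ≤ 1 * (2*s^2) :=
            mul_le_mul h4 h3 (abs_nonneg _) zero_le_one
        _ ≤ 2*t^2 := by have := pow_le_pow_left₀ hs.1 hs.2 2; linarith)
    (by simp)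
  calc _ ≤ 2*t^2*t := key
    _ = 2*t^3 := by ring

lemma tb4 (b t : ℝ) (hb : 1 ≤ b) (hb2 : b ≤ 2) (ht : 0 ≤ t) :
    |(1+t) ^ b - (1 + b*t + b*(b-1)*t^2/2 + b*(b-1)*(b-2)*t^3/6)| ≤ 4*t^4 := by
  have key := mvt_abs (fun s => (1+s) ^ b - (1 + b*s + b*(b-1)*s^2/2 + b*(b-1)*(b-2)*s^3/6))
    (fun s => b * ((1+s) ^ (b-1) - (1 + (b-1)*s + (b-1)*(b-2)*s^2/2))) t (4*t^3) ht
    (fun s hs => by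
      have h1 := deriv_onePlus_rpow b s hs.1
      have h2 : HasDerivAt (fun s:ℝ => 1 + b*s + b*(b-1)*s^2/2 + b*(b-1)*(b-2)*s^3/6)
          (b + b*(b-1)*s + b*(b-1)*(b-2)*s^2/2) s := by
        have := ((((hasDerivAt_id s).const_mul b).const_add 1).add
          ((hasDerivAt_pow 2 s).const_mul (b*(b-1)/2))).add
          ((hasDerivAt_pow 3 s).const_mul (b*(b-1)*(b-2)/6))
        refine (this.congr_deriv (by simp only [Nat.cast_ofNat, Nat.reduceSub, pow_one]; ring)).congr_of_eventuallyEq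
          (Filter.Eventually.of_forall fun x => ?_)
        simp only [Pi.add_apply, id_eq]; ring
      exact (h1.sub h2).congr_deriv (by ring))
    (fun s hs => by
      rw [abs_mul]
      have h3 := tb3 (b-1) s (by linarith) (by linarith) hs.1
      rw [show b-1-1 = b-2 by ring] at h3
      have h4 : |b| ≤ 2 := abs_le.2 ⟨by linarith, hb2⟩
      calc |b| * |(1+s) ^ (b-1) - (1 + (b-1)*s + (b-1)*(b-2)*s^2/2)| ≤ 2 * (2*s^3) :=
            mul_le_mul h4 h3 (abs_nonneg _) (by norm_num)
        _ ≤ 4*t^3 := by have := pow_le_pow_left₀ hs.1 hs.2 3; linarith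
        )
    (by simp)
  calc _ ≤ 4*t^3*t := key
    _ = 4*t^4 := by ring


lemma bracket_bound (a K : ℝ) (h0 : 0 ≤ a) (h1 : a ≤ 1) (hK : 1 ≤ K) :
    |(K - a) * (1 + (1+a)*(1/K) + (1+a)*((1+a)-1)*(1/K)^2/2 + (1+a)*((1+a)-1)*((1+a)-2)*(1/K)^3/6)
        * (1 + (a*(1+a)/2)*(1/K) + (a*(3*a+1)*(1+a)*(2+a)/24)*(1/K)^2)
      - (K + 1) * (1 + (a*(1+a)/2)*(1/(K+1)) + (a*(3*a+1)*(1+a)*(2+a)/24)*(1/(K+1))^2)|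
      ≤ 15 / K^3 := by
  have hK0 : (0:ℝ) < K := by linarith
  have hK1 : (0:ℝ) < K + 1 := by linarith
  have hden : (0:ℝ) < K^5 * (K+1)^2 := by positivity
  have mono : ∀ i j : ℕ, j ≤ 4 → a^i * K^j ≤ K^4 := by
    intro i j hj
    calc a^i * K^j ≤ 1 * K^4 :=
          mul_le_mul (pow_le_one₀ h0 h1) (pow_le_pow_right₀ hK hj) (by positivity) zero_le_one
      _ = K^4 := one_mul _
  have nn : ∀ i j : ℕ, (0:ℝ) ≤ a^i * K^j := fun i j => by positivity
  obtain ⟨M, hMdef⟩ : ∃ M:ℝ, M =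
(-1/12) * (a^1*K^4)
    + (-1/3) * (a^2*K^4)
    + (-47/48) * (a^3*K^4)
    + (-53/48) * (a^4*K^4)
    + (-7/16) * (a^5*K^4)
    + (-1/16) * (a^6*K^4)
    + (-1/12) * (a^1*K^3)
    + (-11/36) * (a^2*K^3)
    + (-25/16) * (a^3*K^3)
    + (-329/144) * (a^4*K^3)
    + (-21/16) * (a^5*K^3)
    + (-59/144) * (a^6*K^3)
    + (-1/24) * (a^7*K^3)
    + (1/72) * (a^2*K^2)
    + (-85/144) * (a^3*K^2)
    + (-95/72) * (a^4*K^2)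
    + (-181/144) * (a^5*K^2)
    + (-97/144) * (a^6*K^2)
    + (-11/72) * (a^7*K^2)
    + (-1/48) * (a^8*K^2)
    + (-1/72) * (a^2*K^1)
    + (1/144) * (a^3*K^1)
    + (-11/144) * (a^4*K^1)
    + (-47/144) * (a^5*K^1)
    + (-53/144) * (a^6*K^1)
    + (-13/72) * (a^7*K^1)
    + (-1/24) * (a^8*K^1)
    + (1/72) * (a^3)
    + (1/16) * (a^4)
    + (1/18) * (a^5)
    + (-1/24) * (a^6)
    + (-5/72) * (a^7)
    + (-1/48) * (a^8) := ⟨_, rfl⟩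
  have hId : (K - a) * (1 + (1+a)*(1/K) + (1+a)*((1+a)-1)*(1/K)^2/2 + (1+a)*((1+a)-1)*((1+a)-2)*(1/K)^3/6)
        * (1 + (a*(1+a)/2)*(1/K) + (a*(3*a+1)*(1+a)*(2+a)/24)*(1/K)^2)
      - (K + 1) * (1 + (a*(1+a)/2)*(1/(K+1)) + (a*(3*a+1)*(1+a)*(2+a)/24)*(1/(K+1))^2)
      = M / (K^5 * (K+1)^2) := by
    rw [hMdef]; field_simp; ring
  have hMle : |M| ≤ 15 * K^4 := by
    rw [hMdef, abs_le]
    constructor <;> linarith [mono 1 4 (by norm_num), nn 1 4, mono 2 4 (by norm_num), nn 2 4, mono 3 4 (by norm_num), nn 3 4, mono 4 4 (by norm_num), nn 4 4, mono 5 4 (by norm_num), nn 5 4, mono 6 4 (by norm_num), nn 6 4, mono 1 3 (by norm_num), nn 1 3, mono 2 3 (by norm_num), nn 2 3, mono 3 3 (by norm_num), nn 3 3, mono 4 3 (by norm_num), nn 4 3, mono 5 3 (by norm_num), nn 5 3, mono 6 3 (by norm_num), nn 6 3, mono 7 3 (by norm_num), nn 7 3, mono 2 2 (by norm_num), nn 2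 2, mono 3 2 (by norm_num), nn 3 2, mono 4 2 (by norm_num), nn 4 2, mono 5 2 (by norm_num), nn 5 2, mono 6 2 (by norm_num), nn 6 2, mono 7 2 (by norm_num), nn 7 2, mono 8 2 (by norm_num), nn 8 2, mono 2 1 (by norm_num), nn 2 1, mono 3 1 (by norm_num), nn 3 1, mono 4 1 (by norm_num), nn 4 1, mono 5 1 (by norm_num), nn 5 1, mono 6 1 (by norm_num), nn 6 1, mono 7 1 (by norm_num), nn 7 1, mono 8 1 (by norm_num), nn 8 1, mono 3 0 (by norm_num), nn 3 0, mono 4 0 (by norm_num), nn 4 0, mono 5 0 (by norm_num), nn 5 0, mono 6 0 (by norm_num), nn 6 0, mono 7 0 (by norm_num), nn 7 0, mono 8 0 (by norm_num), nn 8 0]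
  rw [hId, abs_div, abs_of_pos hden, div_le_div_iff₀ hden (by positivity)]
  have h7 : K^4 * K^3 ≤ K^5 * (K+1)^2 := by nlinarith [pow_pos hK0 5, pow_pos hK0 3, pow_pos hK0 4]
  nlinarith [abs_nonneg M, pow_pos hK0 3, mul_le_mul_of_nonneg_right hMle (le_of_lt (pow_pos hK0 3))]



noncomputable def pP (a x : ℝ) : ℝ :=
  1 + (a*(1+a)/2)*x + (a*(3*a+1)*(1+a)*(2+a)/24)*x^2

noncomputable def fF (a : ℝ) (k : ℕ) : ℝ := (-1)^k * genBinom a k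

noncomputable def gG (a : ℝ) (k : ℕ) : ℝ :=
  fF a k * (k:ℝ)^(1+a) * Real.Gamma (-a) / pP a (1/(k:ℝ))

lemma pP_ge_one (a x : ℝ) (ha : 0 ≤ a) (hx : 0 ≤ x) : 1 ≤ pP a x := by
  have h1 : 0 ≤ a*(1+a)/2*x := by positivity
  have h2 : 0 ≤ a*(3*a+1)*(1+a)*(2+a)/24*x^2 := by positivity
  unfold pP; linarith

lemma pP_le_four (a x : ℝ) (ha : 0 ≤ a) (ha1 : a ≤ 1) (hx : 0 ≤ x) (hx1 : x ≤ 1) :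
    pP a x ≤ 4 := by
  have hx2 : x^2 ≤ 1 := by nlinarith
  have h1 : a*(1+a)/2 ≤ 1 := by nlinarith
  have hA : a*(3*a+1) ≤ 4 := by nlinarith
  have hB : (1+a)*(2+a) ≤ 6 := by nlinarith
  have hB0 : (0:ℝ) ≤ (1+a)*(2+a) := by positivity
  have h2 : a*(3*a+1)*(1+a)*(2+a)/24 ≤ 1 := by
    nlinarith [mul_le_mul hA hB hB0 (by norm_num : (0:ℝ) ≤ 4)]
  have e1 : a*(1+a)/2*x ≤ 1 := mul_le_one₀ h1 hx hx1
  have e2 : a*(3*a+1)*(1+a)*(2+a)/24*x^2 ≤ 1 := mul_le_one₀ h2 (sq_nonneg x) hx2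
  unfold pP; linarith

lemma pP_pos (a x : ℝ) (ha : 0 ≤ a) (hx : 0 ≤ x) : 0 < pP a x :=
  lt_of_lt_of_le one_pos (pP_ge_one a x ha hx)

lemma fF_succ (a : ℝ) (k : ℕ) : fF a (k+1) = fF a k * (((k:ℝ) - a)/((k:ℝ)+1)) := by
  show (-1)^(k+1) * (genBinom a k * (a - k) / (k + 1)) = _
  rw [pow_succ]
  unfold fF
  ring

lemma fF_fact (a : ℝ) : ∀ n : ℕ, fF a n * (Nat.factorial n : ℝ)
    = ∏ j ∈ Finset.range n, (-a + (j:ℝ)) := by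
  intro n
  induction n with
  | zero => simp [fF, genBinom]
  | succ n ih =>
      rw [Finset.prod_range_succ, ← ih, fF_succ, Nat.factorial_succ]
      push_cast
      have hn : ((n:ℝ) + 1) ≠ 0 := by positivity
      field_simp
      ring

lemma fF_neg (a : ℝ) (ha0 : 0 < a) (ha1 : a < 1) : ∀ n : ℕ, 1 ≤ n → fF a n < 0 := by
  intro n
  induction n with
  | zero => omega
  | succ n ih =>
      intro _
      rw [fF_succ]
      rcases Nat.eq_zero_or_pos n with h | h
      · subst h
        simp [fF, genBinom]
        linarith
      · have h1 := ih h
        have h2 : (0:ℝ) < ((n:ℝ) - a)/((n:ℝ)+1) := by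
          have : (1:ℝ) ≤ (n:ℝ) := by exact_mod_cast h
          apply div_pos <;> linarith
        exact mul_neg_of_neg_of_pos h1 h2

lemma gammaSeq_eq (a : ℝ) (n : ℕ) :
    Real.GammaSeq (-a) n = (n:ℝ)^(-a) / (fF a n * ((n:ℝ) - a)) := by
  have h1 : ∏ j ∈ Finset.range (n+1), (-a + (j:ℝ)) = (fF a n * (Nat.factorial n : ℝ)) * ((n:ℝ) - a) := by
    rw [Finset.prod_range_succ, fF_fact]; ring
  have h2 : Real.GammaSeq (-a) n = (n:ℝ)^(-a) * (Nat.factorial n : ℝ)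
      / ∏ j ∈ Finset.range (n+1), (-a + (j:ℝ)) := rfl
  rw [h2, h1]
  have hfac : (Nat.factorial n : ℝ) ≠ 0 := by
    exact_mod_cast (Nat.factorial_pos n).ne'
  rw [show (n:ℝ)^(-a) * (Nat.factorial n : ℝ) = (Nat.factorial n : ℝ) * (n:ℝ)^(-a) by ring,
    show (fF a n * (Nat.factorial n : ℝ)) * ((n:ℝ) - a) = (Nat.factorial n : ℝ) * (fF a n * ((n:ℝ) - a)) by ring,
    mul_div_mul_left _ _ hfac]

lemma Gamma_neg_ne (a : ℝ) (ha0 : 0 < a) (ha1 : a < 1) : Real.Gamma (-a) ≠ 0 := by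
  apply Real.Gamma_ne_zero
  intro m
  rcases Nat.eq_zero_or_pos m with h | h
  · subst h; simp; linarith
  · have : (1:ℝ) ≤ (m:ℝ) := by exact_mod_cast h
    intro hc
    have : a = m := by linarith [neg_injective hc]
    linarith

lemma tendsto_fF_mul (a : ℝ) (ha0 : 0 < a) (ha1 : a < 1) :
    Tendsto (fun n : ℕ => fF a n * (n:ℝ)^(1+a) * Real.Gamma (-a)) atTop (𝓝 1) := by
  have hΓ := Gamma_neg_ne a ha0 ha1
  have hGam := Real.GammaSeq_tendsto_Gamma (-a)
  have h2 : Tendsto (fun n:ℕ => Real.Gamma (-a) / Real.GammaSeq (-a) n) atTop (𝓝 1) := by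
    have hc : Tendsto (fun _:ℕ => Real.Gamma (-a)) atTop (𝓝 (Real.Gamma (-a))) := tendsto_const_nhds
    simpa [Pi.div_def, div_self hΓ] using hc.div hGam hΓ
  have h3 : Tendsto (fun n:ℕ => 1 - a*(1/(n:ℝ))) atTop (𝓝 1) := by
    have := tendsto_one_div_atTop_nhds_zero_nat.const_mul a
    simpa using tendsto_const_nhds.sub this
  have h4 : Tendsto (fun n:ℕ => (Real.Gamma (-a) / Real.GammaSeq (-a) n) / (1 - a*(1/(n:ℝ))))
      atTop (𝓝 1) := by
    have := h2.div h3 one_ne_zero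
    rw [div_one] at this
    exact this
  apply Tendsto.congr' _ h4
  filter_upwards [eventually_ge_atTop 1] with n hn
  have hn1 : (1:ℝ) ≤ (n:ℝ) := by exact_mod_cast hn
  have hn0 : (0:ℝ) < (n:ℝ) := by linarith
  have hfne : fF a n ≠ 0 := (fF_neg a ha0 ha1 n hn).ne
  have hna : (n:ℝ) - a ≠ 0 := by linarith
  have hrne : (n:ℝ)^a ≠ 0 := (Real.rpow_pos_of_pos hn0 a).ne'
  have h1a : (n:ℝ)^(1+a) = (n:ℝ) * (n:ℝ)^a := by
    rw [Real.rpow_add hn0, Real.rpow_one]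
  have hmin : (n:ℝ)^(-a) = ((n:ℝ)^a)⁻¹ := Real.rpow_neg hn0.le a
  rw [gammaSeq_eq, hmin, h1a]
  have hden : 1 - a*(1/(n:ℝ)) ≠ 0 := by
    have : 0 < 1 - a*(1/(n:ℝ)) := by
      have h5 : a*(1/(n:ℝ)) ≤ a := by
        have : 1/(n:ℝ) ≤ 1 := by rw [div_le_one hn0]; exact hn1
        nlinarith
      linarith
    exact this.ne'
  field_simp

lemma tendsto_gG (a : ℝ) (ha0 : 0 < a) (ha1 : a < 1) :
    Tendsto (gG a) atTop (𝓝 1) := by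
  have hP : Tendsto (fun n:ℕ => pP a (1/(n:ℝ))) atTop (𝓝 1) := by
    have h0 := tendsto_one_div_atTop_nhds_zero_nat (𝕜 := ℝ)
    have h1 : Tendsto (fun n:ℕ => 1 + (a*(1+a)/2)*(1/(n:ℝ)) + (a*(3*a+1)*(1+a)*(2+a)/24)*(1/(n:ℝ))^2)
        atTop (𝓝 (1 + (a*(1+a)/2)*0 + (a*(3*a+1)*(1+a)*(2+a)/24)*0^2)) := by
      exact ((tendsto_const_nhds (x := (1:ℝ))).add (h0.const_mul _)).add ((h0.pow 2).const_mul _)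
    simpa [pP] using h1
  have h9 := (tendsto_fF_mul a ha0 ha1).div hP one_ne_zero
  rw [show (1:ℝ)/1 = 1 by norm_num] at h9
  refine h9.congr fun n => ?_
  simp only [Pi.div_apply, gG]

noncomputable def rR (a : ℝ) (k : ℕ) : ℝ :=
  ((k:ℝ) - a)/((k:ℝ)+1) * (1+1/(k:ℝ))^(1+a) * (pP a (1/(k:ℝ)) / pP a (1/((k:ℝ)+1)))

lemma gG_succ (a : ℝ) (ha0 : 0 ≤ a) (k : ℕ) (hk : 1 ≤ k) :
    gG a (k+1) = gG a k * rR a k := by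
  have hk1 : (1:ℝ) ≤ (k:ℝ) := by exact_mod_cast hk
  have hk0 : (0:ℝ) < (k:ℝ) := by linarith
  have hP1 : 0 < pP a (1/(k:ℝ)) := pP_pos _ _ ha0 (by positivity)
  have hP2 : 0 < pP a (1/((k:ℝ)+1)) := pP_pos _ _ ha0 (by positivity)
  have hcast : ((k+1:ℕ):ℝ) = (k:ℝ)+1 := by push_cast; ring
  have hrp : ((k:ℝ)+1)^(1+a) = (k:ℝ)^(1+a) * (1+1/(k:ℝ))^(1+a) := by
    rw [← Real.mul_rpow hk0.le (by positivity)]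
    congr 1
    field_simp
  unfold gG rR
  rw [hcast, fF_succ, hrp]
  field_simp

lemma rR_bound (a : ℝ) (ha0 : 0 ≤ a) (ha1 : a ≤ 1) (k : ℕ) (hk : 1 ≤ k) :
    |rR a k - 1| ≤ 31/(k:ℝ)^4 := by
  have hk1 : (1:ℝ) ≤ (k:ℝ) := by exact_mod_cast hk
  set K : ℝ := (k:ℝ) with hKdef
  have hK0 : (0:ℝ) < K := by linarith
  have ht0 : (0:ℝ) ≤ 1/K := by positivity
  have ht1 : 1/K ≤ 1 := by rw [div_le_one hK0]; exact hk1
  have hP1 : 0 < pP a (1/K) := pP_pos _ _ ha0 ht0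
  have hP1u : pP a (1/K) ≤ 4 := pP_le_four _ _ ha0 ha1 ht0 ht1
  have hP2 : 1 ≤ pP a (1/(K+1)) := pP_ge_one _ _ ha0 (by positivity)
  have hD : 0 < (K+1) * pP a (1/(K+1)) := by nlinarith
  have htay := tb4 (1+a) (1/K) (by linarith) (by linarith) ht0
  have hbr := bracket_bound a K ha0 ha1 hk1
  rw [show (1 + (a*(1+a)/2)*(1/K) + (a*(3*a+1)*(1+a)*(2+a)/24)*(1/K)^2) = pP a (1/K) from rfl,
    show (1 + (a*(1+a)/2)*(1/(K+1)) + (a*(3*a+1)*(1+a)*(2+a)/24)*(1/(K+1))^2) = pP a (1/(K+1)) from rfl]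
    at hbr
  set X : ℝ := (1+1/K)^(1+a) with hXdef
  set T : ℝ := 1 + (1+a)*(1/K) + (1+a)*((1+a)-1)*(1/K)^2/2 + (1+a)*((1+a)-1)*((1+a)-2)*(1/K)^3/6
    with hTdef
  have hnum : rR a k - 1
      = ((K - a)*X*pP a (1/K) - (K+1)*pP a (1/(K+1))) / ((K+1)*pP a (1/(K+1))) := by
    unfold rR
    rw [← hKdef, ← hXdef]
    field_simp
  have habs2 : |(K - a)*(X - T)*pP a (1/K)| ≤ 16/K^3 := by
    rw [abs_mul, abs_mul]
    have h1 : |K - a| ≤ K := by rw [abs_of_nonneg (by linarith)]; linarith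
    have h2 : |X - T| ≤ 4*(1/K)^4 := htay
    have h3 : |pP a (1/K)| ≤ 4 := by rw [abs_of_pos hP1]; exact hP1u
    calc |K - a| * |X - T| * |pP a (1/K)| ≤ K * (4*(1/K)^4) * 4 := by
          apply mul_le_mul _ h3 (abs_nonneg _) (by positivity)
          exact mul_le_mul h1 h2 (abs_nonneg _) hK0.le
      _ = 16/K^3 := by field_simp; ring
  have hsum : |(K - a)*X*pP a (1/K) - (K+1)*pP a (1/(K+1))| ≤ 31/K^3 := by
    have hdec : (K - a)*X*pP a (1/K) - (K+1)*pP a (1/(K+1))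
        = ((K - a)*T*pP a (1/K) - (K+1)*pP a (1/(K+1))) + (K - a)*(X - T)*pP a (1/K) := by
      ring
    rw [hdec]
    calc |_ + _| ≤ |(K - a)*T*pP a (1/K) - (K+1)*pP a (1/(K+1))| + |(K - a)*(X - T)*pP a (1/K)| :=
          abs_add_le _ _
      _ ≤ 15/K^3 + 16/K^3 := add_le_add hbr habs2
      _ = 31/K^3 := by ring
  rw [hnum, abs_div, abs_of_pos hD]
  calc |(K - a)*X*pP a (1/K) - (K+1)*pP a (1/(K+1))| / ((K+1) * pP a (1/(K+1)))
      ≤ (31/K^3) / ((K+1) * pP a (1/(K+1))) := by gcongr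
    _ ≤ (31/K^3) / K := by
        apply div_le_div_of_nonneg_left (by positivity) hK0
        nlinarith
    _ = 31/K^4 := by field_simp

theorem stmt2 (α : ℝ) (hα0 : 0 < α) (hα1 : α < 1) :
    ∃ C > (0:ℝ), ∀ k : ℕ, 1 ≤ k →
      |(-1 : ℝ) ^ k * genBinom α k - 1 / (Real.Gamma (-α) * (k : ℝ) ^ (1 + α)) +
          α / (2 * Real.Gamma (-1 - α) * (k : ℝ) ^ (2 + α)) -
          α * (3 * α + 1) / (24 * Real.Gamma (-2 - α) * (k : ℝ) ^ (3 + α))| ≤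
        C / (k : ℝ) ^ (4 + α) := by
  have ha0' : (0:ℝ) ≤ α := hα0.le
  have ha1' : α ≤ 1 := hα1.le
  have hΓ : Real.Gamma (-α) ≠ 0 := Gamma_neg_ne α hα0 hα1
  have hΓpos : 0 < |Real.Gamma (-α)| := abs_pos.2 hΓ
  set E : ℕ → ℝ := fun k =>
    (-1 : ℝ) ^ k * genBinom α k - 1 / (Real.Gamma (-α) * (k : ℝ) ^ (1 + α)) +
      α / (2 * Real.Gamma (-1 - α) * (k : ℝ) ^ (2 + α)) -
      α * (3 * α + 1) / (24 * Real.Gamma (-2 - α) * (k : ℝ) ^ (3 + α)) with hEdef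
  have hG := tendsto_gG α hα0 hα1
  -- eventual boundedness of gG
  have hev : ∀ᶠ n in Filter.atTop, |gG α n - 1| ≤ 1 := by
    have h2 : ∀ᶠ n in Filter.atTop, gG α n ∈ Metric.closedBall 1 1 :=
      hG (Metric.closedBall_mem_nhds 1 one_pos)
    filter_upwards [h2] with n hn
    simpa [Metric.mem_closedBall, Real.dist_eq] using hn
  obtain ⟨N1, hN1⟩ := Filter.eventually_atTop.mp hev
  set K0 : ℕ := max N1 2 with hK0def
  -- one-step difference bound
  have hdiff : ∀ m : ℕ, K0 ≤ m → |gG α (m+1) - gG α m| ≤ 62/(m:ℝ)^4 := by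
    intro m hm
    have hm2 : 2 ≤ m := le_trans (le_max_right _ _) hm
    have hm1 : 1 ≤ m := by omega
    have hRb := rR_bound α ha0' ha1' m hm1
    have hgb : |gG α m| ≤ 2 := by
      have h3 := abs_le.1 (hN1 m (le_trans (le_max_left _ _) hm))
      rw [abs_le]; constructor <;> linarith
    rw [gG_succ α ha0' m hm1]
    rw [show gG α m * rR α m - gG α m = gG α m * (rR α m - 1) by ring, abs_mul]
    calc |gG α m| * |rR α m - 1| ≤ 2 * (31/(m:ℝ)^4) :=
          mul_le_mul hgb hRb (abs_nonneg _) (by norm_num)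
      _ = 62/(m:ℝ)^4 := by ring
  -- telescoping bound
  have htel : ∀ k : ℕ, K0 ≤ k → ∀ m : ℕ, k ≤ m →
      |gG α k - gG α m| ≤ 62/3 * (1/((k:ℝ)-1)^3) - 62/3 * (1/((m:ℝ)-1)^3) := by
    intro k hk m hm
    induction m, hm using Nat.le_induction with
    | base => simp
    | succ m hm ih =>
        have hmK : K0 ≤ m := le_trans hk hm
        have hm2 : 2 ≤ m := le_trans (le_max_right _ _) hmK
        have hm2' : (2:ℝ) ≤ (m:ℝ) := by exact_mod_cast hm2
        have hm1 : (0:ℝ) < (m:ℝ)-1 := by linarith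
        have hm0 : (0:ℝ) < (m:ℝ) := by linarith
        have hd := hdiff m hmK
        have hstep : 62/(m:ℝ)^4 ≤ 62/3 * (1/((m:ℝ)-1)^3) - 62/3 * (1/(m:ℝ)^3) := by
          rw [← sub_nonneg]
          have hexp : 62/3 * (1/((m:ℝ)-1)^3) - 62/3 * (1/(m:ℝ)^3) - 62/(m:ℝ)^4
              = 62*(6*(m:ℝ)^2 - 8*(m:ℝ) + 3)/(3*((m:ℝ)-1)^3*(m:ℝ)^4) := by
            field_simp
            ring
          rw [hexp]
          apply div_nonneg _ (by positivity)
          nlinarith [sq_nonneg ((m:ℝ) - 1)]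
        have hcast : ((m+1:ℕ):ℝ) = (m:ℝ)+1 := by push_cast; ring
        calc |gG α k - gG α (m+1)|
            ≤ |gG α k - gG α m| + |gG α (m+1) - gG α m| := by
              have h4 := abs_sub_le (gG α k) (gG α m) (gG α (m+1))
              rw [abs_sub_comm (gG α m) (gG α (m+1))] at h4
              exact h4
          _ ≤ 62/3 * (1/((k:ℝ)-1)^3) - 62/3 * (1/((((m:ℕ):ℝ)+1)-1)^3) := by
              rw [show (((m:ℕ):ℝ)+1)-1 = (m:ℝ) by ring]
              linarith
          _ = 62/3 * (1/((k:ℝ)-1)^3) - 62/3 * (1/(((m+1:ℕ):ℝ)-1)^3) := by rw [hcast]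
  -- limit gives the tail bound
  have hbound : ∀ k : ℕ, K0 ≤ k → |gG α k - 1| ≤ 62/3 * (1/((k:ℝ)-1)^3) := by
    intro k hk
    have hlim : Filter.Tendsto (fun m : ℕ => |gG α k - gG α m|) Filter.atTop (nhds |gG α k - 1|) :=
      (tendsto_const_nhds.sub hG).abs
    apply le_of_tendsto hlim
    filter_upwards [Filter.eventually_ge_atTop k] with m hm
    have h2 := htel k hk m hm
    have hm2 : 2 ≤ m := le_trans (le_trans (le_max_right _ _) hk) hm
    have hm2' : (2:ℝ) ≤ (m:ℝ) := by exact_mod_cast hm2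
    have h5 : 0 ≤ 62/3 * (1/((m:ℝ)-1)^3) := by
      have : (0:ℝ) < (m:ℝ)-1 := by linarith
      positivity
    linarith
  -- Gamma recurrences
  have hne1 : (-1-α : ℝ) ≠ 0 := by linarith
  have hne2 : (-2-α : ℝ) ≠ 0 := by linarith
  have hΓ1 : Real.Gamma (-α) = (-1-α) * Real.Gamma (-1-α) := by
    rw [show -α = (-1-α)+1 by ring]
    exact Real.Gamma_add_one hne1
  have hΓ2 : Real.Gamma (-1-α) = (-2-α) * Real.Gamma (-2-α) := by
    rw [show -1-α = (-2-α)+1 by ring]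
    exact Real.Gamma_add_one hne2
  have hΓ1ne : Real.Gamma (-1-α) ≠ 0 := by
    intro h; rw [h] at hΓ1; simp at hΓ1; exact hΓ hΓ1
  have hΓ2ne : Real.Gamma (-2-α) ≠ 0 := by
    intro h; rw [h] at hΓ2; simp at hΓ2; exact hΓ1ne hΓ2
  have heq1 : Real.Gamma (-1-α) = Real.Gamma (-α) / (-1-α) := by
    rw [hΓ1]; field_simp
  have heq2 : Real.Gamma (-2-α) = Real.Gamma (-α) / ((-1-α)*(-2-α)) := by
    rw [hΓ1, hΓ2]; field_simp
  -- the main eventual estimate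
  have hmain : ∀ k : ℕ, K0 ≤ k → |E k| ≤ (664/|Real.Gamma (-α)|) / (k:ℝ)^(4+α) := by
    intro k hk
    have hk2 : 2 ≤ k := le_trans (le_max_right _ _) hk
    have hk2' : (2:ℝ) ≤ (k:ℝ) := by exact_mod_cast hk2
    have hK0' : (0:ℝ) < (k:ℝ) := by linarith
    have hrpos : 0 < (k:ℝ)^((1:ℝ)+α) := Real.rpow_pos_of_pos hK0' _
    have hrp1 : (k:ℝ)^((2:ℝ)+α) = (k:ℝ) * (k:ℝ)^((1:ℝ)+α) := by
      rw [show (2:ℝ)+α = 1 + (1+α) by ring, Real.rpow_add hK0', Real.rpow_one]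
    have hrp2 : (k:ℝ)^((3:ℝ)+α) = (k:ℝ)^(2:ℕ) * (k:ℝ)^((1:ℝ)+α) := by
      rw [show (3:ℝ)+α = ((2:ℕ):ℝ) + (1+α) by push_cast; ring, Real.rpow_add hK0', Real.rpow_natCast]
    have hrp3 : (k:ℝ)^((4:ℝ)+α) = (k:ℝ)^(3:ℕ) * (k:ℝ)^((1:ℝ)+α) := by
      rw [show (4:ℝ)+α = ((3:ℕ):ℝ) + (1+α) by push_cast; ring, Real.rpow_add hK0', Real.rpow_natCast]
    have hP1 : 0 < pP α (1/(k:ℝ)) := pP_pos _ _ ha0' (by positivity)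
    have hP1u : pP α (1/(k:ℝ)) ≤ 4 :=
      pP_le_four _ _ ha0' ha1' (by positivity) (by rw [div_le_one hK0']; linarith)
    have hid : E k = (gG α k - 1) * pP α (1/(k:ℝ)) / (Real.Gamma (-α) * (k:ℝ)^((1:ℝ)+α)) := by
      rw [hEdef]
      simp only
      rw [heq1, heq2, hrp1, hrp2]
      unfold gG fF pP
      field_simp
      ring
    have h1 : |gG α k - 1| ≤ 166/(k:ℝ)^3 := by
      have hb := hbound k hk
      have hk1pos : (0:ℝ) < ((k:ℝ)-1)^3 := by
        have : (0:ℝ) < (k:ℝ)-1 := by linarith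
        positivity
      have hkk : (1:ℝ)/((k:ℝ)-1)^3 ≤ 8/(k:ℝ)^3 := by
        rw [div_le_div_iff₀ hk1pos (by positivity)]
        nlinarith [sq_nonneg ((k:ℝ)-2), sq_nonneg (k:ℝ), mul_nonneg (sub_nonneg.2 hk2') (sq_nonneg ((k:ℝ)-1)), mul_nonneg (sub_nonneg.2 hk2') (sq_nonneg ((k:ℝ)-2))]
      have h2 : 62/3 * (1/((k:ℝ)-1)^3) ≤ 62/3 * (8/(k:ℝ)^3) :=
        mul_le_mul_of_nonneg_left hkk (by norm_num)
      have h3 : 62/3 * (8/(k:ℝ)^3) = (496/3)/(k:ℝ)^3 := by ring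
      have h4 : (496/3:ℝ)/(k:ℝ)^3 ≤ 166/(k:ℝ)^3 :=
        (div_le_div_iff_of_pos_right (by positivity : (0:ℝ) < (k:ℝ)^3)).2 (by norm_num)
      linarith
    have h3 : |Real.Gamma (-α) * (k:ℝ)^((1:ℝ)+α)| = |Real.Gamma (-α)| * (k:ℝ)^((1:ℝ)+α) := by
      rw [abs_mul, abs_of_pos hrpos]
    rw [hid, abs_div, h3, abs_mul]
    have hnum : |gG α k - 1| * |pP α (1/(k:ℝ))| ≤ (166/(k:ℝ)^3) * 4 := by
      apply mul_le_mul h1 (by rw [abs_of_pos hP1]; exact hP1u) (abs_nonneg _) (by positivity)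
    calc |gG α k - 1| * |pP α (1/(k:ℝ))| / (|Real.Gamma (-α)| * (k:ℝ)^((1:ℝ)+α))
        ≤ ((166/(k:ℝ)^3) * 4) / (|Real.Gamma (-α)| * (k:ℝ)^((1:ℝ)+α)) := by
          exact (div_le_div_iff_of_pos_right (by positivity)).2 hnum
      _ = (664/|Real.Gamma (-α)|) / (k:ℝ)^((4:ℝ)+α) := by
          rw [hrp3]
          field_simp
          ring
  -- assemble the constant
  have hsumnn : ∀ j ∈ Finset.range K0, 0 ≤ |E j| * (j:ℝ)^((4:ℝ)+α) := by
    intro j _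
    have : (0:ℝ) ≤ (j:ℝ)^((4:ℝ)+α) := Real.rpow_nonneg (Nat.cast_nonneg j) _
    exact mul_nonneg (abs_nonneg _) this
  refine ⟨(664/|Real.Gamma (-α)|) + (∑ j ∈ Finset.range K0, |E j| * (j:ℝ)^((4:ℝ)+α)) + 1, ?_, ?_⟩
  · have : 0 < 664/|Real.Gamma (-α)| := by positivity
    have h6 := Finset.sum_nonneg hsumnn
    linarith
  · intro k hk
    have hk1' : (1:ℝ) ≤ (k:ℝ) := by exact_mod_cast hk
    have hkp : 0 < (k:ℝ)^((4:ℝ)+α) := Real.rpow_pos_of_pos (by linarith) _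
    have h6 := Finset.sum_nonneg hsumnn
    have h7 : 0 < 664/|Real.Gamma (-α)| := by positivity
    rcases le_or_gt K0 k with h | h
    · have h8 := hmain k h
      calc |E k| ≤ (664/|Real.Gamma (-α)|) / (k:ℝ)^((4:ℝ)+α) := h8
        _ ≤ _ := by
            exact (div_le_div_iff_of_pos_right (by positivity)).2 (by linarith)
    · have h9 : |E k| * (k:ℝ)^((4:ℝ)+α) ≤ ∑ j ∈ Finset.range K0, |E j| * (j:ℝ)^((4:ℝ)+α) :=
        Finset.single_le_sum hsumnn (Finset.mem_range.2 h)
      rw [le_div_iff₀ hkp]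
      linarith
end

section
/- Let 0 < α < 1 and define σ_k^{(α)} = ((k−1)^{1−α} − 2 k^{1−α} + (k+1)^{1−α})/Γ(2−α) for integers k ≥ 1. There exists a constant C > 0 such that for every integer k ≥ 2, |σ_k^{(α)} − 1/(Γ(−α) k^{1+α}) − 1/(12 Γ(−2−α) k^{3+α})| ≤ C / k^{5+α}. -/
open Finset

open Set in

noncomputable def PP (c : ℝ) : ℕ → ℝ
  | 0 => 1
  | n + 1 => PP c n * (c - n)

lemma hasDerivAt_G (c : ℝ) (n : ℕ) {x : ℝ} (hx1 : x < 1) (hx2 : -1 < x) :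
    HasDerivAt (fun y : ℝ => (-1:ℝ)^n * (1-y)^(c - n) + (1+y)^(c - n))
      ((c - n) * ((-1:ℝ)^(n+1) * (1-x)^(c - n - 1) + (1+x)^(c - n - 1))) x := by
  have h1 : HasDerivAt (fun y : ℝ => 1 - y) (-1) x := (hasDerivAt_id x).const_sub 1
  have h1' := h1.rpow_const (p := c - n) (Or.inl (ne_of_gt (show (0:ℝ) < 1 - x by linarith)))
  have h2 : HasDerivAt (fun y : ℝ => 1 + y) 1 x := (hasDerivAt_id x).const_add 1
  have h2' := h2.rpow_const (p := c - n) (Or.inl (ne_of_gt (show (0:ℝ) < 1 + x by linarith)))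
  have := (h1'.const_mul ((-1:ℝ)^n)).fun_add h2'
  refine this.congr_deriv ?_
  ring

lemma iterEq (c b : ℝ) (hb : 0 < b) (hb2 : b ≤ 1/2) (n : ℕ) :
    ∀ x ∈ Set.Icc (0:ℝ) b, iteratedDerivWithin n (fun y : ℝ => (1-y)^c + (1+y)^c) (Set.Icc 0 b) x
      = PP c n * ((-1:ℝ)^n * (1-x)^(c - n) + (1+x)^(c - n)) := by
  induction n with
  | zero =>
    intro x hx
    simp [PP]
  | succ n IH =>
    intro x hx
    obtain ⟨hx0, hxb⟩ := hx
    have hx1 : x < 1 := by linarith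
    have hx2 : (-1:ℝ) < x := by linarith
    rw [iteratedDerivWithin_succ]
    rw [derivWithin_congr IH (IH x ⟨hx0, hxb⟩)]
    have hd := ((hasDerivAt_G c n hx1 hx2).const_mul (PP c n)).hasDerivWithinAt.derivWithin
      ((uniqueDiffOn_Icc hb) x ⟨hx0, hxb⟩)
    rw [hd]
    show PP c n * ((c - n) * _) = PP c (n+1) * _
    rw [show PP c (n+1) = PP c n * (c - n) from rfl]
    push_cast
    ring_nf

lemma remainder (c b : ℝ) (hc0 : 0 < c) (hc1 : c ≤ 1) (hb : 0 < b) (hb2 : b ≤ 1/2) :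
    |((1-b)^c + (1+b)^c) - (2 + PP c 2 * b^2 + PP c 4 / 12 * b^4)|
      ≤ (|PP c 6| * 65 / 720) * b^6 := by
  set f : ℝ → ℝ := fun y => (1-y)^c + (1+y)^c with hf
  have hcont : ContDiffOn ℝ 5 f (Set.Icc 0 b) := by
    intro x hx
    obtain ⟨hx0, hxb⟩ := hx
    have c1 : ContDiffAt ℝ 5 (fun y : ℝ => (1-y)^c) x :=
      (contDiffAt_const.sub contDiffAt_id).rpow_const_of_ne
        (ne_of_gt (show (0:ℝ) < 1 - x by linarith))
    have c2 : ContDiffAt ℝ 5 (fun y : ℝ => (1+y)^c) x :=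
      (contDiffAt_const.add contDiffAt_id).rpow_const_of_ne
        (ne_of_gt (show (0:ℝ) < 1 + x by linarith))
    exact (c1.add c2).contDiffWithinAt
  have hdiff : DifferentiableOn ℝ (iteratedDerivWithin 5 f (Set.Icc 0 b)) (Set.Ioo 0 b) := by
    have hD : DifferentiableOn ℝ
        (fun x : ℝ => PP c 5 * ((-1:ℝ)^5 * (1-x)^(c - 5) + (1+x)^(c - 5))) (Set.Ioo 0 b) := by
      intro x hx
      obtain ⟨hx0, hxb⟩ := hx
      exact (((hasDerivAt_G c 5 (by linarith) (by linarith)).const_mul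
        (PP c 5)).differentiableAt).differentiableWithinAt
    refine hD.congr ?_
    intro x hx
    have := iterEq c b hb hb2 5 x (Set.Ioo_subset_Icc_self hx)
    simpa using this
  obtain ⟨ξ, hξ, heq⟩ : ∃ x' ∈ Set.Ioo (0:ℝ) b, f b - taylorWithinEval f 5 (Set.Icc 0 b) 0 b =
      iteratedDerivWithin (5 + 1) f (Set.Icc 0 b) x' * (b - 0) ^ (5 + 1) / Nat.factorial (5 + 1) := by
    have h := taylor_mean_remainder_lagrange (n := 5) (ne_of_lt hb)
      (by rwa [Set.uIcc_of_le hb.le]) (by rwa [Set.uIcc_of_le hb.le, Set.uIoo_of_le hb.le])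
    rwa [Set.uIcc_of_le hb.le, Set.uIoo_of_le hb.le] at h
  have h0mem : (0:ℝ) ∈ Set.Icc (0:ℝ) b := ⟨le_refl 0, le_of_lt hb⟩
  have htay : taylorWithinEval f 5 (Set.Icc 0 b) 0 b
      = 2 + PP c 2 * b^2 + PP c 4 / 12 * b^4 := by
    rw [taylor_within_apply]
    have hv : ∀ i : ℕ, iteratedDerivWithin i f (Set.Icc 0 b) 0 = PP c i * ((-1:ℝ)^i + 1) := by
      intro i
      have := iterEq c b hb hb2 i 0 h0mem
      simpa [Real.one_rpow] using this
    rw [Finset.sum_range_succ, Finset.sum_range_succ, Finset.sum_range_succ,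
      Finset.sum_range_succ, Finset.sum_range_succ, Finset.sum_range_succ, Finset.sum_range_zero,
      hv 0, hv 1, hv 2, hv 3, hv 4, hv 5]
    norm_num [Nat.factorial, PP]
    ring
  have hξmem : ξ ∈ Set.Icc (0:ℝ) b := Set.Ioo_subset_Icc_self hξ
  have hξ0 : 0 < ξ := hξ.1
  have hξb : ξ < b := hξ.2
  have hval : iteratedDerivWithin 6 f (Set.Icc 0 b) ξ
      = PP c 6 * ((1-ξ)^(c - 6) + (1+ξ)^(c - 6)) := by
    have := iterEq c b hb hb2 6 ξ hξmem
    norm_num at this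
    convert this using 3 <;> norm_num
  have hbound : |iteratedDerivWithin 6 f (Set.Icc 0 b) ξ| ≤ |PP c 6| * 65 := by
    rw [hval, abs_mul]
    gcongr
    have h1ξ : (0:ℝ) < 1 - ξ := by linarith [lt_of_lt_of_le hξb hb2]
    have hb1 : (1:ℝ)/2 ≤ 1 - ξ := by linarith [lt_of_lt_of_le hξb hb2]
    have hcneg : c - 6 ≤ 0 := by linarith
    have t1 : (1-ξ)^(c-6) ≤ ((1:ℝ)/2)^(c-6) :=
      Real.rpow_le_rpow_of_nonpos (by norm_num) hb1 hcneg
    have t2 : ((1:ℝ)/2)^(c-6) ≤ ((1:ℝ)/2)^(-6:ℝ) :=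
      Real.rpow_le_rpow_of_exponent_ge (by norm_num) (by norm_num) (by linarith)
    have t3 : ((1:ℝ)/2)^(-6:ℝ) = 64 := by
      rw [Real.rpow_neg (by norm_num), show ((6:ℝ)) = ((6:ℕ):ℝ) by norm_num,
        Real.rpow_natCast]
      norm_num
    have t4 : (1+ξ)^(c-6) ≤ 1 :=
      Real.rpow_le_one_of_one_le_of_nonpos (by linarith) hcneg
    have p1 : (0:ℝ) ≤ (1-ξ)^(c-6) := Real.rpow_nonneg (le_of_lt h1ξ) _
    have p2 : (0:ℝ) ≤ (1+ξ)^(c-6) := Real.rpow_nonneg (by linarith) _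
    rw [abs_of_nonneg (by positivity)]
    linarith
  have hfb : f b - taylorWithinEval f 5 (Set.Icc 0 b) 0 b
      = iteratedDerivWithin 6 f (Set.Icc 0 b) ξ * b^6 / 720 := by
    rw [heq]; norm_num [Nat.factorial]
  rw [htay] at hfb
  have : ((1-b)^c + (1+b)^c) - (2 + PP c 2 * b^2 + PP c 4 / 12 * b^4)
      = iteratedDerivWithin 6 f (Set.Icc 0 b) ξ * b^6 / 720 := hfb
  rw [this, abs_div, abs_mul]
  rw [abs_of_nonneg (show (0:ℝ) ≤ b^6 by positivity), abs_of_nonneg (show (0:ℝ) ≤ (720:ℝ) by norm_num)]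
  rw [div_le_iff₀ (by norm_num)]
  calc |iteratedDerivWithin 6 f (Set.Icc 0 b) ξ| * b^6 ≤ (|PP c 6| * 65) * b^6 := by
        gcongr
    _ = |PP c 6| * 65 / 720 * b ^ 6 * 720 := by ring

theorem stmt3 (α : ℝ) (hα0 : 0 < α) (hα1 : α < 1) :
    ∃ C > (0:ℝ), ∀ k : ℕ, 2 ≤ k →
      |(((k : ℝ) - 1) ^ (1 - α) - 2 * (k : ℝ) ^ (1 - α) + ((k : ℝ) + 1) ^ (1 - α)) /
            Real.Gamma (2 - α) -
          1 / (Real.Gamma (-α) * (k : ℝ) ^ (1 + α)) -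
          1 / (12 * Real.Gamma (-2 - α) * (k : ℝ) ^ (3 + α))| ≤
        C / (k : ℝ) ^ (5 + α) := by
  set c : ℝ := 1 - α with hc
  have hΓ2pos : 0 < Real.Gamma (2 - α) := Real.Gamma_pos_of_pos (by linarith)
  set M : ℝ := |PP c 6| * 65 / 720 with hM
  refine ⟨(M + 1) / Real.Gamma (2 - α), by positivity, ?_⟩
  intro k hk
  set K : ℝ := (k : ℝ) with hK
  have hK2 : (2:ℝ) ≤ K := by rw [hK]; exact_mod_cast hk
  have hK0 : (0:ℝ) < K := by linarith
  have hKne : K ≠ 0 := ne_of_gt hK0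
  set b : ℝ := 1 / K with hbdef
  have hb : 0 < b := by positivity
  have hb2 : b ≤ 1/2 := by
    rw [hbdef, div_le_div_iff₀ hK0 (by norm_num)]; linarith
  -- rpow facts
  have hpow2 : K ^ c * K ^ (1+α) = K ^ (2:ℕ) := by
    rw [← Real.rpow_add hK0, show c + (1+α) = ((2:ℕ):ℝ) by push_cast [hc]; ring,
      Real.rpow_natCast]
  have hpow4 : K ^ c * K ^ (3+α) = K ^ (4:ℕ) := by
    rw [← Real.rpow_add hK0, show c + (3+α) = ((4:ℕ):ℝ) by push_cast [hc]; ring,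
      Real.rpow_natCast]
  have hpow6 : K ^ c * K ^ (5+α) = K ^ (6:ℕ) := by
    rw [← Real.rpow_add hK0, show c + (5+α) = ((6:ℕ):ℝ) by push_cast [hc]; ring,
      Real.rpow_natCast]
  have hKcpos : 0 < K ^ c := Real.rpow_pos_of_pos hK0 _
  have hp1 : (0:ℝ) < K ^ (1+α) := Real.rpow_pos_of_pos hK0 _
  have hp3 : (0:ℝ) < K ^ (3+α) := Real.rpow_pos_of_pos hK0 _
  have hp5 : (0:ℝ) < K ^ (5+α) := Real.rpow_pos_of_pos hK0 _
  have hKb2 : K ^ c * b ^ 2 = (K ^ (1+α))⁻¹ := by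
    have hbb : b ^ 2 = (K ^ (2:ℕ))⁻¹ := by rw [hbdef]; field_simp
    rw [hbb, ← hpow2, mul_inv]
    field_simp
  have hKb4 : K ^ c * b ^ 4 = (K ^ (3+α))⁻¹ := by
    have hbb : b ^ 4 = (K ^ (4:ℕ))⁻¹ := by rw [hbdef]; field_simp
    rw [hbb, ← hpow4, mul_inv]
    field_simp
  have hKb6 : K ^ c * b ^ 6 = (K ^ (5+α))⁻¹ := by
    have hbb : b ^ 6 = (K ^ (6:ℕ))⁻¹ := by rw [hbdef]; field_simp
    rw [hbb, ← hpow6, mul_inv]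
    field_simp
  -- Gamma facts
  have hGa : Real.Gamma (-α) ≠ 0 := by
    apply Real.Gamma_ne_zero
    intro m
    rcases m with _ | m
    · intro h; push_cast at h; linarith
    · intro h; push_cast at h
      have hm : (0:ℝ) ≤ (m:ℝ) := by positivity
      linarith
  have hGb : Real.Gamma (-2-α) ≠ 0 := by
    apply Real.Gamma_ne_zero
    intro m
    rcases m with _ | m
    · intro h; push_cast at h; linarith
    · rcases m with _ | m
      · intro h; push_cast at h; linarith
      · rcases m with _ | m
        · intro h; push_cast at h; linarith
        · intro h; push_cast at h
          have hm : (0:ℝ) ≤ (m:ℝ) := by positivity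
          linarith
  have hch1 : Real.Gamma (2 - α) = (1-α) * ((-α) * Real.Gamma (-α)) := by
    rw [show (2:ℝ) - α = (1 - α) + 1 by ring, Real.Gamma_add_one (by linarith),
      show (1:ℝ) - α = (-α) + 1 by ring, Real.Gamma_add_one (by linarith)]
  have hch2 : Real.Gamma (2 - α)
      = (1-α) * ((-α) * ((-1-α) * ((-2-α) * Real.Gamma (-2-α)))) := by
    rw [hch1, show (-α : ℝ) = (-1-α) + 1 by ring, Real.Gamma_add_one (by linarith),
      show (-1-α : ℝ) = (-2-α) + 1 by ring, Real.Gamma_add_one (by linarith)]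
  have hP2 : PP c 2 = (1-α) * (-α) := by norm_num [PP, hc]
  have hP4 : PP c 4 = (1-α) * ((-α) * ((-1-α) * (-2-α))) := by norm_num [PP, hc]; ring
  -- rewriting the main expression
  have e1 : (K - 1) ^ c = K ^ c * (1-b) ^ c := by
    rw [show K - 1 = K * (1 - b) by rw [hbdef]; field_simp,
      Real.mul_rpow hK0.le (by linarith : (0:ℝ) ≤ 1 - b)]
  have e2 : (K + 1) ^ c = K ^ c * (1+b) ^ c := by
    rw [show K + 1 = K * (1 + b) by rw [hbdef]; field_simp,
      Real.mul_rpow hK0.le (by linarith : (0:ℝ) ≤ 1 + b)]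
  have eA : 1 / (Real.Gamma (-α) * K ^ (1+α)) = K ^ c * (PP c 2 * b^2) / Real.Gamma (2-α) := by
    rw [show K ^ c * (PP c 2 * b^2) = PP c 2 * (K ^ c * b^2) by ring, hKb2, hP2, hch1]
    have hne1 : (1:ℝ) - α ≠ 0 := by linarith
    have hne2 : -α ≠ 0 := by linarith
    field_simp <;> ring
  have eB : 1 / (12 * Real.Gamma (-2-α) * K ^ (3+α))
      = K ^ c * (PP c 4 / 12 * b^4) / Real.Gamma (2-α) := by
    rw [show K ^ c * (PP c 4 / 12 * b^4) = PP c 4 / 12 * (K ^ c * b^4) by ring, hKb4, hP4, hch2]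
    have hne1 : (1:ℝ) - α ≠ 0 := by linarith
    have hne2 : -α ≠ 0 := by linarith
    have hne3 : (-1:ℝ) - α ≠ 0 := by linarith
    have hne4 : (-2:ℝ) - α ≠ 0 := by linarith
    field_simp <;> ring
  rw [e1, e2, eA, eB]
  have key : (K ^ c * (1-b) ^ c - 2 * K ^ c + K ^ c * (1+b) ^ c) / Real.Gamma (2-α)
      - K ^ c * (PP c 2 * b^2) / Real.Gamma (2-α)
      - K ^ c * (PP c 4 / 12 * b^4) / Real.Gamma (2-α)
      = (K ^ c / Real.Gamma (2-α))
        * (((1-b)^c + (1+b)^c) - (2 + PP c 2 * b^2 + PP c 4 / 12 * b^4)) := by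
    ring
  rw [key, abs_mul, abs_of_nonneg (by positivity : (0:ℝ) ≤ K ^ c / Real.Gamma (2-α))]
  have hrem := remainder c b (by linarith) (by linarith) hb hb2
  calc K ^ c / Real.Gamma (2-α) * |((1-b)^c + (1+b)^c) - (2 + PP c 2 * b^2 + PP c 4 / 12 * b^4)|
      ≤ K ^ c / Real.Gamma (2-α) * (M * b^6) := by
        apply mul_le_mul_of_nonneg_left _ (by positivity)
        exact hrem
    _ = M * (K ^ c * b^6) / Real.Gamma (2-α) := by ring
    _ = M * (K ^ (5+α))⁻¹ / Real.Gamma (2-α) := by rw [hKb6]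
    _ ≤ (M + 1) * (K ^ (5+α))⁻¹ / Real.Gamma (2-α) := by
        apply div_le_div_of_nonneg_right ?_ hΓ2pos.le |>.trans_eq rfl
        exact mul_le_mul_of_nonneg_right (by linarith) (inv_nonneg.mpr hp5.le)
    _ = (M + 1) / Real.Gamma (2-α) / K ^ (5+α) := by
        rw [div_div]; ring
end

section
/- Let 0 < α < 1. There exists a constant C > 0 such that for every integer n ≥ 2, |((n−1)^{1−α} − n^{1−α})/Γ(2−α) + 1/(Γ(1−α) n^{α}) − 1/(2 Γ(−α) n^{1+α}) + 1/(6 Γ(−1−α) n^{2+α})| ≤ C / n^{3+α}. -/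
open Finset

private lemma hasDerivAt_one_sub_rpow (c t : ℝ) (ht : t < 1) :
    HasDerivAt (fun s : ℝ => (1 - s) ^ c) (-(c * (1 - t) ^ (c - 1))) t := by
  have h1 : HasDerivAt (fun s : ℝ => 1 - s) (-1) t := by
    simpa using (hasDerivAt_id t).const_sub 1
  have h2 := Real.hasDerivAt_rpow_const (x := 1 - t) (p := c)
    (Or.inl (by linarith : (0:ℝ) < 1 - t).ne')
  have h3 := h2.comp t h1
  simpa [Function.comp_def, mul_comm, mul_left_comm] using h3

set_option maxHeartbeats 1000000 in
theorem stmt4 (α : ℝ) (hα0 : 0 < α) (hα1 : α < 1) :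
    ∃ C > (0:ℝ), ∀ n : ℕ, 2 ≤ n →
      |(((n : ℝ) - 1) ^ (1 - α) - (n : ℝ) ^ (1 - α)) / Real.Gamma (2 - α) +
          1 / (Real.Gamma (1 - α) * (n : ℝ) ^ α) -
          1 / (2 * Real.Gamma (-α) * (n : ℝ) ^ (1 + α)) +
          1 / (6 * Real.Gamma (-1 - α) * (n : ℝ) ^ (2 + α))| ≤
        C / (n : ℝ) ^ (3 + α) := by
  have hG : 0 < Real.Gamma (2 - α) := Real.Gamma_pos_of_pos (by linarith)
  set b : ℝ := 1 - α with hb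
  have hb0 : 0 < b := by rw [hb]; linarith
  have hb1 : b < 1 := by rw [hb]; linarith
  set p : ℕ → ℝ := fun k => ∏ i ∈ Finset.range k, ((i : ℝ) - b) with hp
  have hp0 : p 0 = 1 := by simp [hp]
  have hp1 : p 1 = -b := by simp [hp]
  have hp2v : p 2 = -b * (1 - b) := by
    simp [hp, Finset.prod_range_succ]; try ring
  have hp3v : p 3 = -b * (1 - b) * (2 - b) := by
    simp [hp, Finset.prod_range_succ]; try ring
  have hp4v : p 4 = -b * (1 - b) * (2 - b) * (3 - b) := by
    simp [hp, Finset.prod_range_succ]; try ring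
  have hp4 : p 4 ≠ 0 := by
    rw [hp4v]
    refine mul_ne_zero (mul_ne_zero (mul_ne_zero ?_ ?_) ?_) ?_
    · exact neg_ne_zero.2 hb0.ne'
    · exact sub_ne_zero_of_ne (by linarith)
    · exact sub_ne_zero_of_ne (by linarith)
    · exact sub_ne_zero_of_ne (by linarith)
  set G : ℝ := Real.Gamma (2 - α) with hGdef
  refine ⟨|p 4| * 16 / (24 * G), by
    exact div_pos (mul_pos (abs_pos.mpr hp4) (by norm_num)) (by linarith), ?_⟩
  intro n hn
  set N : ℝ := (n : ℝ) with hN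
  have hN2 : (2:ℝ) ≤ N := by rw [hN]; exact_mod_cast hn
  have hN0 : 0 < N := by linarith
  set x : ℝ := 1 / N with hx
  have hx0 : 0 < x := by rw [hx]; positivity
  have hxh : x ≤ 1 / 2 := by
    rw [hx, div_le_div_iff₀ hN0 (by norm_num)]
    linarith
  set s : Set ℝ := Set.Icc 0 x with hs
  have huniq : UniqueDiffOn ℝ s := uniqueDiffOn_Icc hx0
  set f : ℝ → ℝ := fun t => (1 - t) ^ b with hf
  -- iterated derivatives on s
  have claim : ∀ k, ∀ t ∈ s, iteratedDerivWithin k f s t = p k * (1 - t) ^ (b - k) := by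
    intro k
    induction k with
    | zero =>
      intro t ht
      simp [iteratedDerivWithin_zero, hf, hp0]
    | succ k ih =>
      intro t ht
      have ht1 : t < 1 := by
        rw [hs, Set.mem_Icc] at ht
        linarith [ht.2, hxh]
      rw [iteratedDerivWithin_succ]
      have hcong : derivWithin (iteratedDerivWithin k f s) s t =
          derivWithin (fun u => p k * (1 - u) ^ (b - k)) s t :=
        derivWithin_congr (fun u hu => ih u hu) (ih t ht)
      rw [hcong]
      have hder : HasDerivAt (fun u : ℝ => p k * (1 - u) ^ (b - (k:ℝ)))
          (p k * -((b - (k:ℝ)) * (1 - t) ^ (b - (k:ℝ) - 1))) t :=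
        (hasDerivAt_one_sub_rpow (b - (k:ℝ)) t ht1).const_mul (p k)
      rw [hder.hasDerivWithinAt.derivWithin (huniq t ht)]
      have hpk : p (k + 1) = p k * ((k : ℝ) - b) := Finset.prod_range_succ _ _
      have hexp : b - (((k+1) : ℕ) : ℝ) = b - (k:ℝ) - 1 := by push_cast; ring
      rw [hpk, hexp]
      ring
  have hcd : ContDiffOn ℝ 3 f s := by
    intro t ht
    have ht1 : t < 1 := by
      rw [hs, Set.mem_Icc] at ht
      linarith [ht.2, hxh]
    exact (((contDiffAt_const (c := (1:ℝ))).sub contDiffAt_id).rpow_const_of_ne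
      (by linarith : (0:ℝ) < 1 - t).ne').contDiffWithinAt
  have hdiff : DifferentiableOn ℝ (iteratedDerivWithin 3 f s) (Set.Ioo 0 x) := by
    have hsub : Set.Ioo (0:ℝ) x ⊆ s := Set.Ioo_subset_Icc_self
    refine DifferentiableOn.congr (f := fun u => p 3 * (1 - u) ^ (b - ((3:ℕ):ℝ))) ?_ ?_
    · intro t ht
      have ht1 : t < 1 := by
        rcases ht with ⟨h1, h2⟩
        linarith [hxh]
      exact ((hasDerivAt_one_sub_rpow (b - ((3:ℕ):ℝ)) t ht1).const_mul
        (p 3)).differentiableAt.differentiableWithinAt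
    · intro t ht
      exact claim 3 t (hsub ht)
  obtain ⟨x', hx', heq⟩ := taylor_mean_remainder_lagrange (n := 3) hx0.ne
    (by rw [Set.uIcc_of_le hx0.le]; exact_mod_cast hcd)
    (by rw [Set.uIcc_of_le hx0.le, Set.uIoo_of_le hx0.le]; exact hdiff)
  rw [Set.uIcc_of_le hx0.le, ← hs] at heq
  rw [Set.uIoo_of_le hx0.le] at hx'
  have h0s : (0:ℝ) ∈ s := Set.left_mem_Icc.2 hx0.le
  have hT : taylorWithinEval f 3 s 0 x =
      ∑ k ∈ Finset.range 4, ((Nat.factorial k : ℝ)⁻¹ * x ^ k) * p k := by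
    rw [taylor_within_apply]
    refine Finset.sum_congr rfl fun k _ => ?_
    rw [claim k 0 h0s]
    simp only [sub_zero, Real.one_rpow, smul_eq_mul, mul_one]
  have hx'1 : 1 / 2 ≤ 1 - x' := by
    rcases hx' with ⟨h1, h2⟩
    linarith [hxh]
  have hbound : |iteratedDerivWithin 4 f s x'| ≤ |p 4| * 16 := by
    rw [claim 4 x' (Set.Ioo_subset_Icc_self hx'), abs_mul]
    have hpos : (0:ℝ) < 1 - x' := by linarith
    have h1 : (1 - x') ^ (b - ((4:ℕ):ℝ)) ≤ (1/2 : ℝ) ^ (b - ((4:ℕ):ℝ)) :=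
      Real.rpow_le_rpow_of_nonpos (by norm_num) hx'1 (by push_cast; linarith)
    have h2 : (1/2 : ℝ) ^ (b - ((4:ℕ):ℝ)) ≤ (1/2 : ℝ) ^ (-4 : ℝ) :=
      Real.rpow_le_rpow_of_exponent_ge (by norm_num) (by norm_num) (by push_cast; linarith)
    have h3 : (1/2 : ℝ) ^ (-4 : ℝ) = 16 := by
      rw [show (-4 : ℝ) = ((-4 : ℤ) : ℝ) by norm_num, Real.rpow_intCast]
      norm_num
    have h4 : |(1 - x') ^ (b - ((4:ℕ):ℝ))| = (1 - x') ^ (b - ((4:ℕ):ℝ)) :=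
      abs_of_pos (Real.rpow_pos_of_pos hpos _)
    rw [h4]
    exact mul_le_mul_of_nonneg_left (h1.trans (h2.trans_eq h3)) (abs_nonneg _)
  have hrem : |f x - taylorWithinEval f 3 s 0 x| ≤ |p 4| * 16 * x ^ 4 / 24 := by
    rw [heq, abs_div, abs_mul]
    have h1 : |(x - 0) ^ (3+1)| = x ^ 4 := by
      rw [sub_zero, abs_pow, abs_of_pos hx0]
    have h2 : |((Nat.factorial (3 + 1) : ℕ) : ℝ)| = 24 := by norm_num [Nat.factorial]
    rw [h1, h2]
    rw [div_le_div_iff₀ (by norm_num) (by norm_num)]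
    have hx4 : (0:ℝ) ≤ x ^ 4 := by positivity
    nlinarith [hbound, abs_nonneg (iteratedDerivWithin (3+1) f s x'), hx4,
      mul_le_mul_of_nonneg_right hbound hx4]
  -- Gamma identities
  have hΓ1 : G = (1 - α) * Real.Gamma b := by
    rw [hGdef, show (2 : ℝ) - α = (1 - α) + 1 by ring,
      Real.Gamma_add_one (by linarith : (1:ℝ) - α ≠ 0), hb]
  have hΓ2 : Real.Gamma b = (-α) * Real.Gamma (-α) := by
    rw [hb, show (1 : ℝ) - α = (-α) + 1 by ring,
      Real.Gamma_add_one (by simpa using hα0.ne' : -α ≠ 0)]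
  have hΓ3 : Real.Gamma (-α) = (-1 - α) * Real.Gamma (-1 - α) := by
    rw [show -α = (-1 - α) + 1 by ring,
      Real.Gamma_add_one (by linarith : (-1:ℝ) - α ≠ 0)]
  have hg : Real.Gamma (-1 - α) ≠ 0 := by
    intro h
    have hGpos : 0 < G := hG
    rw [hΓ1, hΓ2, hΓ3, h] at hGpos
    simp at hGpos
  -- rpow arithmetic
  set A : ℝ := N ^ α with hA
  have hA0 : 0 < A := by rw [hA]; exact Real.rpow_pos_of_pos hN0 _
  have hx1 : (0:ℝ) ≤ 1 - x := by
    have : x ≤ 1 := by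
      rw [hx, div_le_one hN0]; linarith
    linarith
  have e1 : N ^ b = N / A := by
    rw [hb, Real.rpow_sub hN0, Real.rpow_one, ← hA]
  have e2 : N ^ (1 + α) = N * A := by
    rw [hA, Real.rpow_add hN0, Real.rpow_one]
  have e3 : N ^ (2 + α) = N ^ 2 * A := by
    rw [hA, Real.rpow_add hN0, Real.rpow_two]
  have e4 : N ^ (3 + α) = N ^ 3 * A := by
    rw [hA, Real.rpow_add hN0, show (3:ℝ) = ((3:ℕ):ℝ) by norm_num, Real.rpow_natCast]
  have e5 : (N - 1) ^ b = (N / A) * (1 - x) ^ b := by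
    have hN1 : N - 1 = N * (1 - x) := by
      rw [hx, mul_sub, mul_one, mul_one_div, div_self hN0.ne']
    rw [hN1, Real.mul_rpow hN0.le hx1, e1]
  have hTsum : taylorWithinEval f 3 s 0 x =
      1 - b * x + (-b * (1 - b)) * x ^ 2 / 2 + (-b * (1 - b) * (2 - b)) * x ^ 3 / 6 := by
    rw [hT, Finset.sum_range_succ, Finset.sum_range_succ, Finset.sum_range_succ,
      Finset.sum_range_succ, Finset.sum_range_zero, hp0, hp1, hp2v, hp3v]
    norm_num [Nat.factorial]
    ring
  have hfx : f x = (1 - x) ^ b := rfl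
  have hne1 : (1:ℝ) - α ≠ 0 := by linarith
  have hne2 : (-1:ℝ) - α ≠ 0 := by linarith
  -- key identity
  have key : ((N - 1) ^ b - N ^ b) / G + 1 / (Real.Gamma b * A) -
      1 / (2 * Real.Gamma (-α) * N ^ (1 + α)) +
      1 / (6 * Real.Gamma (-1 - α) * N ^ (2 + α)) =
      (f x - taylorWithinEval f 3 s 0 x) * (N / (A * G)) := by
    rw [hTsum, hfx, e5, e1, e2, e3, hΓ1, hΓ2, hΓ3, hx, hb]
    field_simp
    ring
  rw [key]
  rw [abs_mul, abs_of_pos (div_pos hN0 (mul_pos hA0 hG))]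
  have hfinal : (|p 4| * 16 * x ^ 4 / 24) * (N / (A * G)) =
      |p 4| * 16 / (24 * G) / N ^ (3 + α) := by
    rw [e4, hx]
    field_simp
  calc |f x - taylorWithinEval f 3 s 0 x| * (N / (A * G))
      ≤ (|p 4| * 16 * x ^ 4 / 24) * (N / (A * G)) := by
        exact mul_le_mul_of_nonneg_right hrem (le_of_lt (div_pos hN0 (mul_pos hA0 hG)))
    _ = |p 4| * 16 / (24 * G) / N ^ (3 + α) := hfinal
end

section
/- Let 0 < α < 1 and for integers n ≥ 2 define W_n^1 = (−1)^{n−1} C(α−2, n−1) − (n − α/2)^{1−α}/Γ(2−α). There exists a constant C > 0 such that for every integer n ≥ 2, |W_n^1 − (α−2)/(24 Γ(−α) n^{1+α})| ≤ C / n^{2+α}. -/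
open Finset

open Set

lemma hder (p : ℝ) {s : ℝ} (hs : 0 < 1 + s) :
    HasDerivAt (fun u : ℝ => (1+u) ^ p) (p * (1+s) ^ (p-1)) s := by
  have h1 : HasDerivAt (fun u : ℝ => 1 + u) 1 s := (hasDerivAt_id s).const_add 1
  have h2 := (Real.hasDerivAt_rpow_const (x := 1 + s) (p := p) (Or.inl hs.ne')).comp s h1
  exact h2.congr_deriv (mul_one _)

lemma rpow_base_bound {p x : ℝ} (hp : p ∈ Icc (-5:ℝ) 0) (hx : x ∈ Icc (1/3 : ℝ) 2) :
    (x : ℝ) ^ p ≤ 243 := by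
  have h1 : x ^ p ≤ (1/3 : ℝ) ^ p :=
    Real.rpow_le_rpow_of_nonpos (by norm_num) hx.1 hp.2
  have h2 : (1/3 : ℝ) ^ p ≤ (1/3 : ℝ) ^ (-5 : ℝ) :=
    Real.rpow_le_rpow_of_exponent_ge (by norm_num) (by norm_num) hp.1
  have h3 : (1/3 : ℝ) ^ (-5 : ℝ) = 243 := by
    rw [show (-5 : ℝ) = ((-5 : ℤ) : ℝ) by norm_num, Real.rpow_intCast]
    norm_num
  linarith

/-- MVT on the segment from 0 to u. -/
lemma mvt_seg {f f' : ℝ → ℝ} {u C : ℝ} (hu : |u| ≤ 2/3)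
    (hd : ∀ s ∈ uIcc (0:ℝ) u, HasDerivAt f (f' s) s)
    (hb : ∀ s ∈ uIcc (0:ℝ) u, |f' s| ≤ C) :
    |f u - f 0| ≤ C * |u| := by
  have := (convex_uIcc (0:ℝ) u).norm_image_sub_le_of_norm_hasDerivWithin_le
    (f := f) (f' := f') (fun x hx => (hd x hx).hasDerivWithinAt) (fun x hx => hb x hx)
    (left_mem_uIcc) (right_mem_uIcc)
  simpa [Real.norm_eq_abs, abs_sub_comm] using this


lemma seg_facts {u s : ℝ} (hu : |u| ≤ 2/3) (hs : s ∈ uIcc (0:ℝ) u) :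
    |s| ≤ |u| ∧ (1/3 : ℝ) ≤ 1 + s ∧ 1 + s ≤ 2 := by
  rw [Set.uIcc_eq_union] at hs
  rw [abs_le] at hu
  have h : (s ∈ Icc (0:ℝ) u ∨ s ∈ Icc u 0) := hs
  refine ⟨?_, ?_, ?_⟩ <;>
  · rcases h with hs | hs <;> rw [Set.mem_Icc] at hs <;>
      first
        | (rw [abs_le]; constructor <;> nlinarith [le_abs_self u, neg_abs_le u])
        | nlinarith [le_abs_self u, neg_abs_le u]

lemma taylor0 {p u : ℝ} (hp : p ∈ Icc (-4:ℝ) 1) (hu : |u| ≤ 2/3) :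
    |(1+u)^p - 1| ≤ 1000 * |u| := by
  have key := mvt_seg (f := fun v : ℝ => (1+v)^p) (f' := fun s => p * (1+s)^(p-1))
      (C := 1000) hu ?_ ?_
  · have h0 : ((1:ℝ)+0)^p = 1 := by norm_num
    calc |(1+u)^p - 1| = |(1+u)^p - (1+0:ℝ)^p| := by rw [h0]
    _ ≤ 1000 * |u| := key
  · intro s hs
    exact hder p (by linarith [(seg_facts hu hs).2.1])
  · intro s hs
    obtain ⟨_, h1, h2⟩ := seg_facts hu hs
    have hb : (1+s) ^ (p-1) ≤ 243 := by
      refine rpow_base_bound ⟨by linarith [hp.1], by linarith [hp.2]⟩ ⟨h1, h2⟩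
    have hb0 : (0:ℝ) ≤ (1+s) ^ (p-1) := Real.rpow_nonneg (by linarith) _
    rw [abs_mul]
    have : |p| ≤ 4 := abs_le.mpr ⟨by linarith [hp.1], by linarith [hp.2]⟩
    calc |p| * |(1+s)^(p-1)| ≤ 4 * 243 := by
          refine mul_le_mul this ?_ (abs_nonneg _) (by norm_num)
          rw [abs_of_nonneg hb0]; exact hb
    _ ≤ 1000 := by norm_num

lemma taylor1 {p u : ℝ} (hp : p ∈ Icc (-3:ℝ) 1) (hu : |u| ≤ 2/3) :
    |(1+u)^p - (1 + p*u)| ≤ 4000 * u^2 := by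
  have key := mvt_seg (f := fun v : ℝ => (1+v)^p - (1 + p*v))
      (f' := fun s => p * ((1+s)^(p-1) - 1)) (C := 4000 * |u|) hu ?_ ?_
  · skip
    have h0 : ((1:ℝ)+0)^p - (1 + p*0) = 0 := by norm_num
    rw [h0, sub_zero] at key
    calc |(1+u)^p - (1 + p*u)| ≤ 4000 * |u| * |u| := key
    _ = 4000 * u^2 := by rw [mul_assoc, ← abs_mul, ← sq, abs_sq]
  · intro s hs
    have h1 := hder p (show (0:ℝ) < 1 + s by linarith [(seg_facts hu hs).2.1])
    have h2 : HasDerivAt (fun v : ℝ => 1 + p*v) p s := by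
      simpa using ((hasDerivAt_id s).const_mul p).const_add 1
    exact (h1.sub h2).congr_deriv (by ring)
  · intro s hs
    obtain ⟨hsu, h1, h2⟩ := seg_facts hu hs
    have ht0 := taylor0 (p := p-1) (u := s) ⟨by linarith [hp.1], by linarith [hp.2]⟩
      (hsu.trans hu)
    rw [abs_mul]
    have hp4 : |p| ≤ 3 := abs_le.mpr ⟨by linarith [hp.1], by linarith [hp.2]⟩
    calc |p| * |(1+s)^(p-1) - 1| ≤ 3 * (1000 * |s|) :=
          mul_le_mul hp4 ht0 (abs_nonneg _) (by norm_num)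
    _ ≤ 4000 * |u| := by nlinarith [abs_nonneg u]

lemma taylor2 {p u : ℝ} (hp : p ∈ Icc (-2:ℝ) 1) (hu : |u| ≤ 2/3) :
    |(1+u)^p - (1 + p*u + p*(p-1)/2*u^2)| ≤ 16000 * |u|^3 := by
  have key := mvt_seg (f := fun v : ℝ => (1+v)^p - (1 + p*v + p*(p-1)/2*v^2))
      (f' := fun s => p * ((1+s)^(p-1) - (1 + (p-1)*s))) (C := 16000 * u^2) hu ?_ ?_
  · skip
    have h0 : ((1:ℝ)+0)^p - (1 + p*0 + p*(p-1)/2*0^2) = 0 := by norm_num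
    rw [h0, sub_zero] at key
    calc |(1+u)^p - (1 + p*u + p*(p-1)/2*u^2)| ≤ 16000 * u^2 * |u| := key
    _ = 16000 * |u|^3 := by rw [← sq_abs u, mul_assoc, ← pow_succ]
  · intro s hs
    have h1 := hder p (show (0:ℝ) < 1 + s by linarith [(seg_facts hu hs).2.1])
    have h2 : HasDerivAt (fun v : ℝ => 1 + p*v + p*(p-1)/2*v^2)
        (p + p*(p-1)/2*(2*s)) s := by
      have := (((hasDerivAt_id s).const_mul p).const_add 1).add
        (((hasDerivAt_pow 2 s)).const_mul (p*(p-1)/2))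
      exact this.congr_deriv (by norm_num <;> ring)
    have := h1.sub h2
    exact this.congr_deriv (by ring)
  · intro s hs
    obtain ⟨hsu, h1, h2⟩ := seg_facts hu hs
    have ht1 := taylor1 (p := p-1) (u := s) ⟨by linarith [hp.1], by linarith [hp.2]⟩
      (hsu.trans hu)
    rw [abs_mul]
    have hp4 : |p| ≤ 2 := abs_le.mpr ⟨by linarith [hp.1], by linarith [hp.2]⟩
    calc |p| * |(1+s)^(p-1) - (1 + (p-1)*s)| ≤ 2 * (4000 * s^2) :=
          mul_le_mul hp4 ht1 (abs_nonneg _) (by norm_num)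
    _ ≤ 16000 * u^2 := by nlinarith [sq_abs s, sq_abs u, abs_nonneg s, abs_nonneg u,
        mul_self_le_mul_self (abs_nonneg s) hsu]

lemma taylor3 {p u : ℝ} (hp : p ∈ Icc (-1:ℝ) 1) (hu : |u| ≤ 2/3) :
    |(1+u)^p - (1 + p*u + p*(p-1)/2*u^2 + p*(p-1)*(p-2)/6*u^3)| ≤ 64000 * u^4 := by
  have key := mvt_seg (f := fun v : ℝ => (1+v)^p - (1 + p*v + p*(p-1)/2*v^2 + p*(p-1)*(p-2)/6*v^3))
      (f' := fun s => p * ((1+s)^(p-1) - (1 + (p-1)*s + (p-1)*(p-2)/2*s^2)))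
      (C := 64000 * |u|^3) hu ?_ ?_
  · skip
    have h0 : ((1:ℝ)+0)^p - (1 + p*0 + p*(p-1)/2*0^2 + p*(p-1)*(p-2)/6*0^3) = 0 := by norm_num
    rw [h0, sub_zero] at key
    calc |(1+u)^p - (1 + p*u + p*(p-1)/2*u^2 + p*(p-1)*(p-2)/6*u^3)|
        ≤ 64000 * |u|^3 * |u| := key
    _ = 64000 * u^4 := by
        rw [mul_assoc, ← pow_succ, ← abs_pow, abs_of_nonneg (by positivity : (0:ℝ) ≤ u^4)]
  · intro s hs
    have h1 := hder p (show (0:ℝ) < 1 + s by linarith [(seg_facts hu hs).2.1])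
    have h2 : HasDerivAt (fun v : ℝ => 1 + p*v + p*(p-1)/2*v^2 + p*(p-1)*(p-2)/6*v^3)
        (p + p*(p-1)/2*(2*s) + p*(p-1)*(p-2)/6*(3*s^2)) s := by
      have := ((((hasDerivAt_id s).const_mul p).const_add 1).add
        (((hasDerivAt_pow 2 s)).const_mul (p*(p-1)/2))).add
        (((hasDerivAt_pow 3 s)).const_mul (p*(p-1)*(p-2)/6))
      exact this.congr_deriv (by norm_num <;> ring)
    have := h1.sub h2
    exact this.congr_deriv (by ring)
  · intro s hs
    obtain ⟨hsu, h1, h2⟩ := seg_facts hu hs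
    have ht2 := taylor2 (p := p-1) (u := s) ⟨by linarith [hp.1], by linarith [hp.2]⟩
      (hsu.trans hu)
    rw [show p-1-1 = p-2 by ring] at ht2
    rw [abs_mul]
    have hp4 : |p| ≤ 1 := abs_le.mpr ⟨by linarith [hp.1], by linarith [hp.2]⟩
    calc |p| * |(1+s)^(p-1) - (1 + (p-1)*s + (p-1)*(p-2)/2*s^2)| ≤ 1 * (16000 * |s|^3) :=
          mul_le_mul hp4 ht2 (abs_nonneg _) (by norm_num)
    _ ≤ 64000 * |u|^3 := by
        have : |s|^3 ≤ |u|^3 := pow_le_pow_left₀ (abs_nonneg s) hsu 3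
        nlinarith [pow_nonneg (abs_nonneg u) 3]

noncomputable def wseq (α : ℝ) (n : ℕ) : ℝ := (-1)^(n-1) * genBinom (α-2) (n-1)

lemma wseq_succ (α : ℝ) (n : ℕ) (hn : 1 ≤ n) :
    wseq α (n+1) = wseq α n * (((n:ℝ)+1-α)/n) := by
  obtain ⟨m, rfl⟩ : ∃ m, n = m + 1 := ⟨n - 1, (Nat.succ_pred_eq_of_pos hn).symm⟩
  show (-1:ℝ)^(m+1+1-1) * genBinom (α-2) (m+1+1-1) = _
  have h1 : m+1+1-1 = m+1 := rfl
  have h2 : m+1-1 = m := rfl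
  rw [h1]
  show (-1:ℝ)^(m+1) * (genBinom (α-2) m * (α-2-m)/(m+1)) = _
  unfold wseq
  rw [h2, pow_succ]
  push_cast
  ring

lemma wseq_two (α : ℝ) : wseq α 2 = 2 - α := by
  show (-1:ℝ)^1 * genBinom (α-2) 1 = 2 - α
  show (-1:ℝ)^1 * (genBinom (α-2) 0 * (α-2-(0:ℕ))/((0:ℕ)+1)) = 2 - α
  show (-1:ℝ)^1 * (1 * (α-2-(0:ℕ))/((0:ℕ)+1)) = 2 - α
  push_cast; ring

lemma wseq_pos {α : ℝ} (hα0 : 0 < α) (hα1 : α < 1) :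
    ∀ n, 2 ≤ n → 0 < wseq α n := by
  intro n hn
  induction n, hn using Nat.le_induction with
  | base => rw [wseq_two]; linarith
  | succ N hN ih =>
    rw [wseq_succ α N (by omega)]
    have hN2 : (2:ℝ) ≤ N := by exact_mod_cast hN
    apply mul_pos ih
    apply div_pos (by linarith) (by linarith)

lemma wseq_ratio {α : ℝ} (hα0 : 0 < α) (hα1 : α < 1) {n : ℕ} (hn : 2 ≤ n) :
    ∀ N, n ≤ N → wseq α n * (N:ℝ)^(1-α) ≤ wseq α N * (n:ℝ)^(1-α) := by
  intro N hN
  induction N, hN using Nat.le_induction with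
  | base => exact le_refl _
  | succ N hN ih =>
    have hN2 : 2 ≤ N := le_trans hn hN
    have hNR : (2:ℝ) ≤ N := by exact_mod_cast hN2
    have hNpos : (0:ℝ) < N := by linarith
    have hnpos : (0:ℝ) < n := by positivity
    have hwN := wseq_pos hα0 hα1 N hN2
    have hbern : ((1:ℝ) + 1/N) ^ (1-α) ≤ ((N:ℝ)+1-α)/N := by
      have := rpow_one_add_le_one_add_mul_self (s := 1/(N:ℝ)) (p := 1-α)
        (le_trans (by norm_num : (-1:ℝ) ≤ 0) (by positivity)) (by linarith) (by linarith)
      calc ((1:ℝ) + 1/N) ^ (1-α) ≤ 1 + (1-α) * (1/N) := this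
      _ = ((N:ℝ)+1-α)/N := by field_simp; ring
    have hmul : ((1:ℝ) + 1/N) ^ (1-α) * (N:ℝ)^(1-α) = ((N:ℝ)+1)^(1-α) := by
      rw [← Real.mul_rpow (by positivity) (by positivity)]
      congr 1
      field_simp
    have hb0 : (0:ℝ) ≤ ((1:ℝ) + 1/N) ^ (1-α) := Real.rpow_nonneg (by positivity) _
    push_cast
    calc wseq α n * ((N:ℝ)+1)^(1-α)
        = ((1:ℝ) + 1/N) ^ (1-α) * (wseq α n * (N:ℝ)^(1-α)) := by rw [← hmul]; ring
    _ ≤ ((1:ℝ) + 1/N) ^ (1-α) * (wseq α N * (n:ℝ)^(1-α)) := by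
        apply mul_le_mul_of_nonneg_left ih hb0
    _ ≤ ((N:ℝ)+1-α)/N * wseq α N * (n:ℝ)^(1-α) := by
        have : ((1:ℝ) + 1/N) ^ (1-α) * wseq α N ≤ ((N:ℝ)+1-α)/N * wseq α N :=
          mul_le_mul_of_nonneg_right hbern hwN.le
        nlinarith [Real.rpow_nonneg hnpos.le (1-α)]
    _ = wseq α (N+1) * (n:ℝ)^(1-α) := by
        rw [wseq_succ α N (by omega)]; push_cast; ring

lemma wseq_eq_prod {α : ℝ} (hα1 : α < 1) :
    ∀ m : ℕ, wseq α (m+1) = (∏ j ∈ range (m+1), (1-α+j)) / ((1-α) * (Nat.factorial m)) := by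
  have hs : (1:ℝ) - α ≠ 0 := by linarith
  intro m
  induction m with
  | zero =>
    show (-1:ℝ)^0 * genBinom (α-2) 0 = _
    show (1:ℝ) * 1 = _
    simp [div_self, mul_one]
    rw [eq_comm, div_eq_one_iff_eq (by simpa using hs)]
  | succ m ih =>
    rw [wseq_succ α (m+1) (by omega), ih]
    rw [show m+1+1 = m+2 from rfl, prod_range_succ (fun j => (1-α+(j:ℝ))) (m+1),
      Nat.factorial_succ]
    set P := ∏ j ∈ range (m+1), (1-α+(j:ℝ)) with hP
    have hm1 : ((m:ℝ)+1) ≠ 0 := by positivity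
    have hf : ((Nat.factorial m : ℝ)) ≠ 0 := by positivity
    push_cast
    field_simp
    ring

lemma gammaSeq_pos {s : ℝ} (hs : 0 < s) (m : ℕ) : 0 < Real.GammaSeq s (m+1) := by
  unfold Real.GammaSeq
  apply div_pos
  · apply mul_pos (Real.rpow_pos_of_pos (by positivity) _) (by positivity)
  · apply Finset.prod_pos
    intro j _
    positivity

lemma wseq_tendsto {α : ℝ} (hα0 : 0 < α) (hα1 : α < 1) :
    Filter.Tendsto (fun N : ℕ => wseq α N * (N:ℝ)^(α-1)) Filter.atTop
      (nhds (1 / Real.Gamma (2-α))) := by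
  have hs : (0:ℝ) < 1 - α := by linarith
  have hΓ1 : (0:ℝ) < Real.Gamma (1-α) := Real.Gamma_pos_of_pos hs
  have hΓ2 : (1-α) * Real.Gamma (1-α) = Real.Gamma (2-α) := by
    rw [show (2:ℝ)-α = (1-α)+1 by ring, Real.Gamma_add_one hs.ne']
  have hid : ∀ m : ℕ, wseq α (m+2) * ((m+2:ℕ):ℝ)^(α-1)
      = (((m:ℝ)+1)/((m:ℝ)+2))^(1-α) / ((1-α) * Real.GammaSeq (1-α) (m+1)) := by
    intro m
    have h1 := wseq_eq_prod hα1 (m+1)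
    rw [show m+1+1 = m+2 from rfl] at h1
    rw [h1]
    unfold Real.GammaSeq
    have hprod : (0:ℝ) < ∏ j ∈ range (m+1+1), (1-α+(j:ℝ)) := by
      apply Finset.prod_pos; intro j _; positivity
    have hprod' : (0:ℝ) < ∏ j ∈ range (m+2), (1-α+(j:ℝ)) := by
      apply Finset.prod_pos; intro j _; positivity
    have heq : ∏ j ∈ range (m+1+1), ((1-α)+(j:ℝ)) = ∏ j ∈ range (m+2), (1-α+(j:ℝ)) := rfl
    have hm1 : (0:ℝ) < (m:ℝ)+1 := by positivity
    have hm2 : (0:ℝ) < (m:ℝ)+2 := by positivity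
    have hdiv : (((m:ℝ)+1)/((m:ℝ)+2))^(1-α) = ((m:ℝ)+1)^(1-α) / ((m:ℝ)+2)^(1-α) :=
      Real.div_rpow hm1.le hm2.le _
    have hc1 : ((m+1:ℕ):ℝ) = (m:ℝ)+1 := by push_cast; ring
    have hc2 : ((m+2:ℕ):ℝ) = (m:ℝ)+2 := by push_cast; ring
    rw [heq, hdiv, hc1, hc2, show α-1 = -(1-α) by ring, Real.rpow_neg hm2.le]
    have hf : ((Nat.factorial (m+1) : ℝ)) ≠ 0 := by positivity
    have hr1 : ((m:ℝ)+1)^(1-α) ≠ 0 := (Real.rpow_pos_of_pos hm1 _).ne'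
    have hr2 : ((m:ℝ)+2)^(1-α) ≠ 0 := (Real.rpow_pos_of_pos hm2 _).ne'
    field_simp
  have hG : Filter.Tendsto (fun m : ℕ => Real.GammaSeq (1-α) (m+1)) Filter.atTop
      (nhds (Real.Gamma (1-α))) :=
    (Real.GammaSeq_tendsto_Gamma (1-α)).comp (Filter.tendsto_add_atTop_nat 1)
  have h0 : Filter.Tendsto (fun m : ℕ => ((m:ℝ)+2)) Filter.atTop Filter.atTop :=
    Filter.tendsto_atTop_add_const_right _ 2 tendsto_natCast_atTop_atTop
  have hbase : Filter.Tendsto (fun m : ℕ => ((m:ℝ)+1)/((m:ℝ)+2)) Filter.atTop (nhds 1) := by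
    have h2 := h0.inv_tendsto_atTop
    have h3 := (tendsto_const_nhds (x := (1:ℝ)) (f := Filter.atTop (α := ℕ))).sub h2
    rw [sub_zero] at h3
    apply h3.congr
    intro m
    have : ((m:ℝ)+2) ≠ 0 := by positivity
    simp only [Pi.inv_apply]
    field_simp
    ring
  have hnum : Filter.Tendsto (fun m : ℕ => (((m:ℝ)+1)/((m:ℝ)+2))^(1-α)) Filter.atTop
      (nhds 1) := by
    have := hbase.rpow_const (p := 1-α) (Or.inl one_ne_zero)
    simpa using this
  have hden : Filter.Tendsto (fun m : ℕ => (1-α) * Real.GammaSeq (1-α) (m+1)) Filter.atTop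
      (nhds ((1-α) * Real.Gamma (1-α))) := hG.const_mul _
  have hne : (1-α) * Real.Gamma (1-α) ≠ 0 := by positivity
  have hdivT := hnum.div hden hne
  rw [← Filter.tendsto_add_atTop_iff_nat 2]
  have final := hdivT.congr (fun m => (hid m).symm)
  rwa [hΓ2] at final

lemma rpow_factor {t : ℝ} (ht : 0 < t) (a b : ℝ) : t ^ (a+b) = t ^ a * t ^ b :=
  Real.rpow_add ht a b

set_option maxHeartbeats 2000000 in
lemma psi_bound {α : ℝ} (hα0 : 0 < α) (hα1 : α < 1) {n : ℕ} (hn : 2 ≤ n) :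
    |((n:ℝ)*((n:ℝ)+1-α/2)^(1-α) - ((n:ℝ)+1-α)*((n:ℝ)-α/2)^(1-α))
      - (1-α)*((1-α)-1)*(α-2)/12 * ((n:ℝ)-α/2)^(-1-α)|
    ≤ 200000 * ((n:ℝ)-α/2)^(-2-α) := by
  have hnR : (2:ℝ) ≤ (n:ℝ) := by exact_mod_cast hn
  set t : ℝ := (n:ℝ) - α/2 with hT
  have htpos : (0:ℝ) < t := by simp only [hT]; linarith
  have ht32 : (3/2:ℝ) ≤ t := by simp only [hT]; linarith
  set u : ℝ := 1/t with hu
  have hupos : 0 < u := by positivity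
  have hule : u ≤ 2/3 := by
    rw [hu, div_le_iff₀ htpos]; linarith
  have huabs : |u| ≤ 2/3 := by rw [abs_of_pos hupos]; exact hule
  have hut : t * u = 1 := by rw [hu]; field_simp
  set β : ℝ := 1 - α with hβ
  have hβ1 : β ∈ Set.Icc (-1:ℝ) 1 := ⟨by simp only [hβ]; linarith, by simp only [hβ]; linarith⟩
  -- taylor3
  have ht3 := taylor3 hβ1 huabs
  set P : ℝ := 1 + β*u + β*(β-1)/2*u^2 + β*(β-1)*(β-2)/6*u^3 with hP
  set r : ℝ := (1+u)^β - P with hr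
  have hrb : |r| ≤ 64000 * u^4 := ht3
  -- rewrite the two rpow terms
  have h1u : (0:ℝ) < 1 + u := by linarith
  have hsplit : ((n:ℝ)+1-α/2)^β = t^β * (1+u)^β := by
    rw [← Real.mul_rpow htpos.le h1u.le]
    congr 1
    have : t * (1+u) = t + 1 := by rw [mul_add, mul_one, hut]
    rw [this, hT]; ring
  -- exponent juggling
  have hexp2 : t^β * u^2 = t^(-1-α) := by
    have h2 : t ^ (-2:ℝ) = u^2 := by
      rw [show (-2:ℝ) = -((2:ℕ):ℝ) by norm_num, Real.rpow_neg htpos.le,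
        Real.rpow_natCast, hu, one_div, inv_pow]
    rw [← h2, ← rpow_factor htpos, show β + (-2:ℝ) = -1-α by rw [hβ]; ring]
  have hexp3 : t^β * u^3 = t^(-2-α) := by
    have h3 : t ^ (-3:ℝ) = u^3 := by
      rw [show (-3:ℝ) = -((3:ℕ):ℝ) by norm_num, Real.rpow_neg htpos.le,
        Real.rpow_natCast, hu, one_div, inv_pow]
    rw [← h3, ← rpow_factor htpos, show β + (-3:ℝ) = -2-α by rw [hβ]; ring]
  have hexp4 : t^β * (t * u^4) = t^(-2-α) := by
    have h4 : t ^ (-4:ℝ) = u^4 := by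
      rw [show (-4:ℝ) = -((4:ℕ):ℝ) by norm_num, Real.rpow_neg htpos.le,
        Real.rpow_natCast, hu, one_div, inv_pow]
    rw [← h4, show t^β * (t * t^(-4:ℝ)) = t^β * (t^(1:ℝ) * t^(-4:ℝ)) by rw [Real.rpow_one],
      ← rpow_factor htpos 1 (-4), ← rpow_factor htpos β (1 + -4),
      show β + (1 + (-4:ℝ)) = -2-α by rw [hβ]; ring]
  -- main decomposition
  set A : ℝ := (1-α)*((1-α)-1)*(α-2)/12 with hA
  set B : ℝ := (α/2)*β*(β-1)*(β-2)/6 with hB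
  have halg : ((n:ℝ)+1-α/2)^β = t^β * P + t^β * r := by
    rw [hsplit, hr]; ring
  have hpoly : (t+α/2)*P - (t+1-α/2) = A*u^2 + B*u^3 := by
    have htne : t ≠ 0 := htpos.ne'
    rw [hP, hA, hB, hβ, hu]
    field_simp
    ring
  have hn_eq : (n:ℝ) = t + α/2 := by rw [hT]; ring
  have hn1_eq : (n:ℝ)+1-α = t+1-α/2 := by rw [hT]; ring
  have hkey : ((n:ℝ)*((n:ℝ)+1-α/2)^β - ((n:ℝ)+1-α)*t^β) - A * t^(-1-α)
      = B * t^(-2-α) + (t+α/2) * t^β * r := by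
    rw [halg, ← hexp2, ← hexp3, hn_eq]
    linear_combination (t^β) * hpoly
  -- bounds
  have hBabs : |B| ≤ 1 := by
    have hBval : B = α^2*(1-α)*(1+α)/12 := by rw [hB, hβ]; ring
    have hα2 : α^2 ≤ 1 := by nlinarith
    have hE : α^2*(1-α)*(1+α) = α^2*(1-α^2) := by ring
    have h0 : (0:ℝ) ≤ α^2*(1-α^2) := mul_nonneg (sq_nonneg α) (by nlinarith)
    have h1 : α^2*(1-α^2) ≤ 1 := by nlinarith [sq_nonneg α]
    rw [hBval, hE, abs_le]
    constructor <;> [linarith; linarith]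
  have hAterm : |B * t^(-2-α)| ≤ 1 * t^(-2-α) := by
    rw [abs_mul, abs_of_nonneg (Real.rpow_nonneg htpos.le _)]
    exact mul_le_mul_of_nonneg_right hBabs (Real.rpow_nonneg htpos.le _)
  have hrterm : |(t+α/2) * t^β * r| ≤ 128000 * t^(-2-α) := by
    have h1 : |(t+α/2) * t^β * r| = (t+α/2) * t^β * |r| := by
      rw [abs_mul, abs_of_nonneg (by positivity : (0:ℝ) ≤ (t+α/2) * t^β)]
    rw [h1]
    have h2 : (t+α/2) * t^β * |r| ≤ (2*t) * t^β * (64000 * u^4) := by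
      apply mul_le_mul _ hrb (abs_nonneg _) (by positivity)
      apply mul_le_mul_of_nonneg_right _ (Real.rpow_nonneg htpos.le _)
      linarith
    have h3 : (2*t) * t^β * (64000 * u^4) = 128000 * (t^β * (t * u^4)) := by ring
    rw [h3, hexp4] at h2
    linarith
  calc |((n:ℝ)*((n:ℝ)+1-α/2)^β - ((n:ℝ)+1-α)*t^β) - A * t^(-1-α)|
      = |B * t^(-2-α) + (t+α/2) * t^β * r| := by rw [hkey]
  _ ≤ |B * t^(-2-α)| + |(t+α/2) * t^β * r| := abs_add_le _ _
  _ ≤ 1 * t^(-2-α) + 128000 * t^(-2-α) := add_le_add hAterm hrterm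
  _ ≤ 200000 * t^(-2-α) := by
      nlinarith [Real.rpow_nonneg htpos.le (-2-α)]

lemma rpow_neg3_val : ((2:ℝ)) ^ ((-3):ℝ) = 1/8 := by
  rw [show ((-3):ℝ) = ((-3 : ℤ) : ℝ) by norm_num, Real.rpow_intCast]
  norm_num

lemma t_rpow_le {α : ℝ} (hα0 : 0 < α) (hα1 : α < 1) {n : ℕ} (hn : 2 ≤ n) :
    ((n:ℝ)-α/2)^(-2-α) ≤ 8*(n:ℝ)^(-2-α) := by
  have hnR : (2:ℝ) ≤ (n:ℝ) := by exact_mod_cast hn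
  have hq1 : (-3:ℝ) ≤ -2-α := by linarith
  have hq2 : (-2-α:ℝ) ≤ 0 := by linarith
  have h1 : ((n:ℝ)-α/2)^(-2-α) ≤ ((n:ℝ)/2)^(-2-α) := by
    apply Real.rpow_le_rpow_of_nonpos (by linarith) (by linarith) hq2
  have h2 : ((n:ℝ)/2)^(-2-α) = (n:ℝ)^(-2-α) / (2:ℝ)^(-2-α) :=
    Real.div_rpow (by linarith) (by norm_num) _
  have h3 : (1/8:ℝ) ≤ (2:ℝ)^(-2-α) := by
    rw [← rpow_neg3_val]
    exact Real.rpow_le_rpow_of_exponent_le (by norm_num) hq1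
  have h4 : (0:ℝ) < (2:ℝ)^(-2-α) := Real.rpow_pos_of_pos (by norm_num) _
  have h5 : (n:ℝ)^(-2-α) / (2:ℝ)^(-2-α) ≤ 8*(n:ℝ)^(-2-α) := by
    rw [div_le_iff₀ h4]
    nlinarith [Real.rpow_nonneg (show (0:ℝ) ≤ n by linarith) (-2-α)]
  linarith

lemma diff_bound {α : ℝ} (hα0 : 0 < α) (hα1 : α < 1) {n : ℕ} (hn : 2 ≤ n) :
    |((n:ℝ)-α/2)^(-1-α) - (n:ℝ)^(-1-α)| ≤ 500*(n:ℝ)^(-2-α) := by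
  have hnR : (2:ℝ) ≤ (n:ℝ) := by exact_mod_cast hn
  have hnpos : (0:ℝ) < n := by linarith
  set w : ℝ := -α/(2*(n:ℝ)) with hw
  have hw1 : (0:ℝ) < 1 + w := by
    rw [hw]; rw [neg_div]; have : α/(2*(n:ℝ)) ≤ 1/4 := by
      rw [div_le_div_iff₀ (by linarith) (by norm_num)]; linarith
    linarith
  have hwabs : |w| ≤ 2/3 := by
    rw [hw, neg_div, abs_neg, abs_of_nonneg (by positivity)]
    rw [div_le_div_iff₀ (by linarith) (by norm_num)]; linarith
  have hsplit : ((n:ℝ)-α/2)^(-1-α) = (n:ℝ)^(-1-α) * (1+w)^(-1-α) := by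
    rw [← Real.mul_rpow hnpos.le hw1.le]
    congr 1
    rw [hw]; field_simp; ring
  have ht0 := taylor0 (p := -1-α) (u := w) ⟨by linarith, by linarith⟩ hwabs
  have hwle : |w| ≤ 1/(2*(n:ℝ)) := by
    rw [hw, neg_div, abs_neg, abs_of_nonneg (by positivity)]
    rw [div_le_div_iff₀ (by linarith) (by linarith)]; nlinarith
  have hnn : (0:ℝ) ≤ (n:ℝ)^(-1-α) := Real.rpow_nonneg hnpos.le _
  have key : |((n:ℝ)-α/2)^(-1-α) - (n:ℝ)^(-1-α)| = (n:ℝ)^(-1-α) * |(1+w)^(-1-α) - 1| := by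
    rw [hsplit, show (n:ℝ)^(-1-α)*(1+w)^(-1-α) - (n:ℝ)^(-1-α)
      = (n:ℝ)^(-1-α)*((1+w)^(-1-α) - 1) by ring, abs_mul, abs_of_nonneg hnn]
  rw [key]
  have h6 : (n:ℝ)^(-1-α) * |(1+w)^(-1-α) - 1| ≤ (n:ℝ)^(-1-α) * (1000 * (1/(2*(n:ℝ)))) := by
    apply mul_le_mul_of_nonneg_left _ hnn
    calc |(1+w)^(-1-α) - 1| ≤ 1000 * |w| := ht0
    _ ≤ 1000 * (1/(2*(n:ℝ))) := by linarith
  have h7 : (n:ℝ)^(-1-α) * (1000 * (1/(2*(n:ℝ)))) = 500 * ((n:ℝ)^(-1-α) * (n:ℝ)^(-1:ℝ)) := by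
    rw [Real.rpow_neg_one]
    field_simp
    ring
  have h8 : (n:ℝ)^(-1-α) * (n:ℝ)^(-1:ℝ) = (n:ℝ)^(-2-α) := by
    rw [← rpow_factor hnpos, show (-1-α) + (-1:ℝ) = -2-α by ring]
  rw [h7, h8] at h6
  exact h6

lemma eta_bound {α : ℝ} (hα0 : 0 < α) (hα1 : α < 1) {n : ℕ} (hn : 2 ≤ n) :
    |((n:ℝ)*(((n:ℝ)+1))^(-1-α) - ((n:ℝ)+1-α)*(n:ℝ)^(-1-α)) + 2*(n:ℝ)^(-1-α)|
      ≤ 4000*(n:ℝ)^(-2-α) := by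
  have hnR : (2:ℝ) ≤ (n:ℝ) := by exact_mod_cast hn
  have hnpos : (0:ℝ) < n := by linarith
  set v : ℝ := 1/(n:ℝ) with hv
  have hvpos : 0 < v := by positivity
  have hvle : v ≤ 2/3 := by rw [hv, div_le_div_iff₀ hnpos (by norm_num)]; linarith
  have hvabs : |v| ≤ 2/3 := by rw [abs_of_pos hvpos]; exact hvle
  have h1v : (0:ℝ) < 1 + v := by linarith
  have hsplit : ((n:ℝ)+1)^(-1-α) = (n:ℝ)^(-1-α) * (1+v)^(-1-α) := by
    rw [← Real.mul_rpow hnpos.le h1v.le]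
    congr 1
    rw [hv]; field_simp
  have hXb := taylor1 (p := -1-α) (u := v) ⟨by linarith, by linarith⟩ hvabs
  set X : ℝ := (1+v)^(-1-α) - (1 + (-1-α)*v) with hX
  have hna : (n:ℝ) * (n:ℝ)^(-1-α) = (n:ℝ)^(-α) := by
    nth_rewrite 1 [← Real.rpow_one (n:ℝ)]
    rw [← rpow_factor hnpos, show (1:ℝ) + (-1-α) = -α by ring]
  have hnv : (n:ℝ)^(-α) * v = (n:ℝ)^(-1-α) := by
    rw [hv, one_div, ← Real.rpow_neg_one (n:ℝ), ← rpow_factor hnpos,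
      show (-α) + (-1:ℝ) = -1-α by ring]
  have hnv2 : (n:ℝ)^(-α) * v^2 = (n:ℝ)^(-2-α) := by
    have : v^2 = (n:ℝ)^((-2):ℝ) := by
      rw [show ((-2):ℝ) = -((2:ℕ):ℝ) by norm_num, Real.rpow_neg hnpos.le,
        Real.rpow_natCast, hv, one_div, inv_pow]
    rw [this, ← rpow_factor hnpos, show (-α) + ((-2):ℝ) = -2-α by ring]
  have hkey : ((n:ℝ)*(((n:ℝ)+1))^(-1-α) - ((n:ℝ)+1-α)*(n:ℝ)^(-1-α)) + 2*(n:ℝ)^(-1-α)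
      = (n:ℝ)^(-α) * X := by
    rw [hsplit, hX]
    have e1 : (n:ℝ)+1-α = (n:ℝ)*(1+(1-α)*v) := by rw [hv]; field_simp; ring
    rw [e1]
    linear_combination ((1+v)^(-1-α) - (1+(1-α)*v)) * hna - 2 * hnv
  rw [hkey, abs_mul, abs_of_nonneg (Real.rpow_nonneg hnpos.le _)]
  calc (n:ℝ)^(-α) * |X| ≤ (n:ℝ)^(-α) * (4000 * v^2) :=
        mul_le_mul_of_nonneg_left hXb (Real.rpow_nonneg hnpos.le _)
  _ = 4000*(n:ℝ)^(-2-α) := by rw [← hnv2]; ring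

noncomputable def hseq (α : ℝ) (n : ℕ) : ℝ := ((n:ℝ) - α/2)^(1-α) / Real.Gamma (2-α)
noncomputable def cconst (α : ℝ) : ℝ := (α-2)/(24*Real.Gamma (-α))
noncomputable def Fseq (α : ℝ) (n : ℕ) : ℝ := hseq α n + cconst α * (n:ℝ)^(-1-α)
noncomputable def Kc (α : ℝ) : ℝ := 1600000/Real.Gamma (2-α) + 5000*|cconst α| + 1

lemma Gamma2_pos {α : ℝ} (hα1 : α < 1) : 0 < Real.Gamma (2-α) :=
  Real.Gamma_pos_of_pos (by linarith)

lemma Kc_pos {α : ℝ} (hα1 : α < 1) : 0 < Kc α := by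
  have := Gamma2_pos hα1
  have : (0:ℝ) < 1600000/Real.Gamma (2-α) := by positivity
  unfold Kc
  have h2 : (0:ℝ) ≤ |cconst α| := abs_nonneg _
  linarith

lemma gamma_identity {α : ℝ} (hα0 : 0 < α) (hα1 : α < 1) :
    (1-α)*((1-α)-1)*(α-2)/12 = 2 * cconst α * Real.Gamma (2-α) := by
  have hne : Real.Gamma (-α) ≠ 0 := by
    apply Real.Gamma_ne_zero
    intro m
    intro h
    have : α = (m:ℝ) := by linarith [neg_eq_iff_eq_neg.mp h]
    rcases Nat.eq_zero_or_pos m with rfl | hm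
    · simp at this; linarith
    · have : (1:ℝ) ≤ (m:ℝ) := by exact_mod_cast hm
      linarith
  have h1 : Real.Gamma (1-α) = -α * Real.Gamma (-α) := by
    rw [show (1:ℝ)-α = -α+1 by ring, Real.Gamma_add_one (by linarith : -α ≠ 0)]
  have h2 : Real.Gamma (2-α) = (1-α) * Real.Gamma (1-α) := by
    rw [show (2:ℝ)-α = (1-α)+1 by ring, Real.Gamma_add_one (by linarith : 1-α ≠ 0)]
  rw [h2, h1]
  unfold cconst
  field_simp
  ring

lemma G_bound {α : ℝ} (hα0 : 0 < α) (hα1 : α < 1) {n : ℕ} (hn : 2 ≤ n) :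
    |(n:ℝ) * Fseq α (n+1) - ((n:ℝ)+1-α) * Fseq α n| ≤ Kc α * (n:ℝ)^(-2-α) := by
  have hnR : (2:ℝ) ≤ (n:ℝ) := by exact_mod_cast hn
  have hnpos : (0:ℝ) < n := by linarith
  have hΓ2 := Gamma2_pos hα1
  set c : ℝ := cconst α with hc
  set Γ2 : ℝ := Real.Gamma (2-α) with hΓ
  set A : ℝ := (1-α)*((1-α)-1)*(α-2)/12 with hA
  have hgam : A = 2 * c * Γ2 := gamma_identity hα0 hα1
  set ψ : ℝ := (n:ℝ)*((n:ℝ)+1-α/2)^(1-α) - ((n:ℝ)+1-α)*((n:ℝ)-α/2)^(1-α) with hψ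
  set η : ℝ := (n:ℝ)*(((n:ℝ)+1))^(-1-α) - ((n:ℝ)+1-α)*(n:ℝ)^(-1-α) with hη
  set t' : ℝ := ((n:ℝ)-α/2)^(-1-α) with ht'
  set n' : ℝ := (n:ℝ)^(-1-α) with hn'
  have hcast : ((n+1:ℕ):ℝ) = (n:ℝ)+1 := by push_cast; ring
  have hG1 : (n:ℝ) * Fseq α (n+1) - ((n:ℝ)+1-α) * Fseq α n = ψ/Γ2 + c*η := by
    unfold Fseq hseq
    rw [hcast, hψ, hη, ← hc, ← hΓ, ← hn']
    have : ((n:ℝ)+1-α/2) = ((n:ℝ)+1)-α/2 := by ring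
    field_simp
    ring
  have hAΓ : A/Γ2 = 2*c := by rw [hgam]; field_simp
  have hdecomp : ψ/Γ2 + c*η = (ψ - A*t')/Γ2 + (A/Γ2)*(t' - n') + c*(η + 2*n') := by
    have expand : (ψ - A*t')/Γ2 + (A/Γ2)*(t' - n') + c*(η + 2*n')
        = ψ/Γ2 + c*η + (2*c - A/Γ2)*n' := by ring
    rw [expand, hAΓ]
    ring
  rw [hG1, hdecomp]
  have b1 : |(ψ - A*t')/Γ2| ≤ (200000*8/Γ2) * (n:ℝ)^(-2-α) := by
    rw [abs_div, abs_of_pos hΓ2, div_le_iff₀ hΓ2]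
    have hp := psi_bound hα0 hα1 hn
    rw [← hψ, ← hA, ← ht'] at hp
    have ht8 := t_rpow_le hα0 hα1 hn
    calc |ψ - A*t'| ≤ 200000 * ((n:ℝ)-α/2)^(-2-α) := hp
    _ ≤ 200000 * (8*(n:ℝ)^(-2-α)) := by
        apply mul_le_mul_of_nonneg_left ht8 (by norm_num)
    _ = 200000*8/Γ2 * (n:ℝ)^(-2-α) * Γ2 := by field_simp
  have b2 : |(A/Γ2)*(t' - n')| ≤ (1000*|c|) * (n:ℝ)^(-2-α) := by
    rw [abs_mul, hAΓ]
    have hd := diff_bound hα0 hα1 hn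
    rw [← ht', ← hn'] at hd
    calc |2*c| * |t' - n'| ≤ (2*|c|) * (500*(n:ℝ)^(-2-α)) := by
          apply mul_le_mul _ hd (abs_nonneg _) (by positivity)
          rw [abs_mul]; norm_num
    _ = (1000*|c|) * (n:ℝ)^(-2-α) := by ring
  have b3 : |c*(η + 2*n')| ≤ (4000*|c|) * (n:ℝ)^(-2-α) := by
    rw [abs_mul]
    have he := eta_bound hα0 hα1 hn
    rw [← hη, ← hn'] at he
    calc |c| * |η + 2*n'| ≤ |c| * (4000*(n:ℝ)^(-2-α)) :=
          mul_le_mul_of_nonneg_left he (abs_nonneg _)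
    _ = (4000*|c|) * (n:ℝ)^(-2-α) := by ring
  have hnn : (0:ℝ) ≤ (n:ℝ)^(-2-α) := Real.rpow_nonneg hnpos.le _
  calc |(ψ - A*t')/Γ2 + (A/Γ2)*(t' - n') + c*(η + 2*n')|
      ≤ |(ψ - A*t')/Γ2| + |(A/Γ2)*(t' - n')| + |c*(η + 2*n')| := abs_add_three _ _ _
  _ ≤ (200000*8/Γ2) * (n:ℝ)^(-2-α) + (1000*|c|) * (n:ℝ)^(-2-α) + (4000*|c|) * (n:ℝ)^(-2-α) :=
      add_le_add (add_le_add b1 b2) b3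
  _ ≤ Kc α * (n:ℝ)^(-2-α) := by
      unfold Kc
      rw [← hΓ, ← hc]
      nlinarith [hnn, abs_nonneg c, mul_le_mul_of_nonneg_right
        (show 200000*8/Γ2 + 5000*|c| ≤ 1600000/Γ2 + 5000*|c| + 1 by
          have : (0:ℝ) < 1/Γ2 := by positivity
          nlinarith) hnn]

noncomputable def eseq (α : ℝ) (n : ℕ) : ℝ := wseq α n - Fseq α n

lemma sum_inv4 {n : ℕ} (hn : 2 ≤ n) : ∀ N, n ≤ N →
    ∑ m ∈ Ico n N, ((1:ℝ)/m)^4 ≤ 1/(3*((n:ℝ)-1)^3) - 1/(3*((N:ℝ)-1)^3) := by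
  intro N hN
  induction N, hN using Nat.le_induction with
  | base => simp
  | succ N hN ih =>
    have hN2 : 2 ≤ N := le_trans hn hN
    have hNR : (2:ℝ) ≤ (N:ℝ) := by exact_mod_cast hN2
    rw [Finset.sum_Ico_succ_top hN]
    have h1 : (0:ℝ) < (N:ℝ)-1 := by linarith
    have h2 : (0:ℝ) < (N:ℝ) := by linarith
    have e1 : (0:ℝ) < 3*((N:ℝ)-1)^3 := by positivity
    have e2 : (0:ℝ) < 3*(N:ℝ)^3 := by positivity
    have hstep : ((1:ℝ)/N)^4 ≤ 1/(3*((N:ℝ)-1)^3) - 1/(3*(N:ℝ)^3) := by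
      rw [div_pow, one_pow, div_sub_div _ _ e1.ne' e2.ne', div_le_div_iff₀ (by positivity) (by positivity)]
      nlinarith [pow_pos h2 4, pow_pos h1 3, pow_pos h2 3, sq_nonneg ((N:ℝ)-1), sq_nonneg (N:ℝ)]
    have hcast : ((N+1:ℕ):ℝ) = (N:ℝ)+1 := by push_cast; ring
    rw [hcast]
    have e3 : ((N:ℝ)+1)-1 = (N:ℝ) := by ring
    rw [e3]
    linarith

lemma rho_bound {α : ℝ} (hα0 : 0 < α) (hα1 : α < 1) {N : ℕ} (hN : 2 ≤ N) :
    |(((N:ℝ))/((N:ℝ)+1-α)) * Fseq α (N+1) - Fseq α N|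
      ≤ Kc α * ((N:ℝ))^(-2-α) * ((N:ℝ))⁻¹ := by
  have hNR : (2:ℝ) ≤ (N:ℝ) := by exact_mod_cast hN
  have hNpos : (0:ℝ) < N := by linarith
  have hden : (0:ℝ) < (N:ℝ)+1-α := by linarith
  have hG := G_bound hα0 hα1 hN
  have hid : (((N:ℝ))/((N:ℝ)+1-α)) * Fseq α (N+1) - Fseq α N
      = ((N:ℝ) * Fseq α (N+1) - ((N:ℝ)+1-α) * Fseq α N) / ((N:ℝ)+1-α) := by
    field_simp
  rw [hid, abs_div, abs_of_pos hden, div_le_iff₀ hden]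
  have hmono : Kc α * ((N:ℝ))^(-2-α) * ((N:ℝ))⁻¹ * ((N:ℝ)+1-α)
      ≥ Kc α * ((N:ℝ))^(-2-α) := by
    have hK := (Kc_pos hα1).le
    have hr := Real.rpow_nonneg hNpos.le (-2-α)
    have h1 : ((N:ℝ))⁻¹ * ((N:ℝ)+1-α) ≥ 1 := by
      rw [ge_iff_le, inv_mul_eq_div, le_div_iff₀ hNpos]
      nlinarith
    nlinarith [mul_nonneg hK hr]
  linarith

lemma ratio_le {α : ℝ} (hα0 : 0 < α) (hα1 : α < 1) {n N : ℕ} (hn : 2 ≤ n) (hN : n ≤ N) :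
    wseq α n / wseq α N ≤ (n:ℝ)^(1-α) * (N:ℝ)^(α-1) := by
  have hN2 : 2 ≤ N := le_trans hn hN
  have hwN := wseq_pos hα0 hα1 N hN2
  have hNpos : (0:ℝ) < N := by
    have : (2:ℝ) ≤ (N:ℝ) := by exact_mod_cast hN2
    linarith
  have hnpos : (0:ℝ) < n := by
    have : (2:ℝ) ≤ (n:ℝ) := by exact_mod_cast hn
    linarith
  have hr := wseq_ratio hα0 hα1 hn N hN
  have hNr : (0:ℝ) < (N:ℝ)^(1-α) := Real.rpow_pos_of_pos hNpos _
  rw [div_le_iff₀ hwN]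
  have hinv : (N:ℝ)^(α-1) = ((N:ℝ)^(1-α))⁻¹ := by
    rw [show α-1 = -(1-α) by ring, Real.rpow_neg hNpos.le]
  rw [hinv]
  have h2 := mul_le_mul_of_nonneg_right hr (inv_nonneg.mpr hNr.le)
  rw [mul_assoc, mul_inv_cancel₀ hNr.ne', mul_one] at h2
  exact h2.trans_eq (by ring)

lemma key_induction {α : ℝ} (hα0 : 0 < α) (hα1 : α < 1) {n : ℕ} (hn : 2 ≤ n) :
    ∀ N, n ≤ N → |eseq α n| ≤ (wseq α n / wseq α N) * |eseq α N|
      + Kc α * (n:ℝ)^(1-α) * ∑ m ∈ Ico n N, ((1:ℝ)/m)^4 := by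
  have hwn := wseq_pos hα0 hα1 n hn
  intro N hN
  induction N, hN using Nat.le_induction with
  | base =>
    rw [div_self hwn.ne', one_mul, Finset.Ico_self, Finset.sum_empty, mul_zero, add_zero]
  | succ N hN ih =>
    have hN2 : 2 ≤ N := le_trans hn hN
    have hNR : (2:ℝ) ≤ (N:ℝ) := by exact_mod_cast hN2
    have hNpos : (0:ℝ) < N := by linarith
    have hden : (0:ℝ) < (N:ℝ)+1-α := by linarith
    have hwN := wseq_pos hα0 hα1 N hN2
    have hwN1 := wseq_pos hα0 hα1 (N+1) (by omega)
    set a : ℝ := (N:ℝ)/((N:ℝ)+1-α) with ha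
    have hapos : 0 < a := div_pos hNpos hden
    -- recurrence for eseq
    have hwrec : wseq α N = a * wseq α (N+1) := by
      rw [wseq_succ α N (by omega), ha]
      field_simp
    have herec : eseq α N = a * eseq α (N+1) + (a * Fseq α (N+1) - Fseq α N) := by
      unfold eseq
      rw [hwrec]; ring
    have habs : |eseq α N| ≤ a * |eseq α (N+1)| + |a * Fseq α (N+1) - Fseq α N| := by
      calc |eseq α N| ≤ |a * eseq α (N+1)| + |a * Fseq α (N+1) - Fseq α N| := by
            rw [herec]; exact abs_add_le _ _
      _ = a * |eseq α (N+1)| + |a * Fseq α (N+1) - Fseq α N| := by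
            rw [abs_mul, abs_of_pos hapos]
    have hρ := rho_bound hα0 hα1 hN2
    rw [← ha] at hρ
    -- multiply by wseq α n / wseq α N
    have hq : 0 < wseq α n / wseq α N := div_pos hwn hwN
    have hqa : (wseq α n / wseq α N) * a = wseq α n / wseq α (N+1) := by
      rw [hwrec]
      field_simp
    have hstep1 : (wseq α n / wseq α N) * |eseq α N|
        ≤ (wseq α n / wseq α (N+1)) * |eseq α (N+1)|
          + (wseq α n / wseq α N) * |a * Fseq α (N+1) - Fseq α N| := by
      calc (wseq α n / wseq α N) * |eseq α N|
          ≤ (wseq α n / wseq α N) * (a * |eseq α (N+1)| + |a * Fseq α (N+1) - Fseq α N|) :=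
            mul_le_mul_of_nonneg_left habs hq.le
      _ = ((wseq α n / wseq α N) * a) * |eseq α (N+1)|
            + (wseq α n / wseq α N) * |a * Fseq α (N+1) - Fseq α N| := by ring
      _ = (wseq α n / wseq α (N+1)) * |eseq α (N+1)|
            + (wseq α n / wseq α N) * |a * Fseq α (N+1) - Fseq α N| := by rw [hqa]
    -- bound the rho term
    have hratio := ratio_le hα0 hα1 hn hN
    have hrterm : (wseq α n / wseq α N) * |a * Fseq α (N+1) - Fseq α N|
        ≤ Kc α * (n:ℝ)^(1-α) * ((1:ℝ)/N)^4 := by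
      have h1 : (wseq α n / wseq α N) * |a * Fseq α (N+1) - Fseq α N|
          ≤ ((n:ℝ)^(1-α) * (N:ℝ)^(α-1)) * (Kc α * ((N:ℝ))^(-2-α) * ((N:ℝ))⁻¹) :=
        mul_le_mul hratio hρ (abs_nonneg _)
          (by positivity)
      have h2 : ((n:ℝ)^(1-α) * (N:ℝ)^(α-1)) * (Kc α * ((N:ℝ))^(-2-α) * ((N:ℝ))⁻¹)
          = Kc α * (n:ℝ)^(1-α) * ((1:ℝ)/N)^4 := by
        have hm : (N:ℝ)^(α-1) * (N:ℝ)^(-2-α) = (N:ℝ)^(-3:ℝ) := by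
          rw [← rpow_factor hNpos, show (α-1) + (-2-α) = (-3:ℝ) by ring]
        have hm2 : (N:ℝ)^(-3:ℝ) = ((N:ℝ)^3)⁻¹ := by
          rw [show (-3:ℝ) = -((3:ℕ):ℝ) by norm_num, Real.rpow_neg hNpos.le,
            Real.rpow_natCast]
        calc ((n:ℝ)^(1-α) * (N:ℝ)^(α-1)) * (Kc α * ((N:ℝ))^(-2-α) * ((N:ℝ))⁻¹)
            = Kc α * (n:ℝ)^(1-α) * (((N:ℝ)^(α-1) * (N:ℝ)^(-2-α)) * ((N:ℝ))⁻¹) := by ring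
        _ = Kc α * (n:ℝ)^(1-α) * (((N:ℝ)^3)⁻¹ * ((N:ℝ))⁻¹) := by rw [hm, hm2]
        _ = Kc α * (n:ℝ)^(1-α) * ((1:ℝ)/N)^4 := by
            congr 1
            rw [← inv_pow, ← pow_succ, inv_pow, one_div, ← inv_pow]
      rw [h2] at h1
      exact h1
    calc |eseq α n| ≤ (wseq α n / wseq α N) * |eseq α N|
          + Kc α * (n:ℝ)^(1-α) * ∑ m ∈ Ico n N, ((1:ℝ)/m)^4 := ih
    _ ≤ (wseq α n / wseq α (N+1)) * |eseq α (N+1)|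
          + Kc α * (n:ℝ)^(1-α) * ((1:ℝ)/N)^4
          + Kc α * (n:ℝ)^(1-α) * ∑ m ∈ Ico n N, ((1:ℝ)/m)^4 := by linarith
    _ = (wseq α n / wseq α (N+1)) * |eseq α (N+1)|
          + Kc α * (n:ℝ)^(1-α) * ∑ m ∈ Ico n (N+1), ((1:ℝ)/m)^4 := by
        rw [Finset.sum_Ico_succ_top hN]
        ring

set_option maxHeartbeats 1000000 in
lemma err_limit {α : ℝ} (hα0 : 0 < α) (hα1 : α < 1) {n : ℕ} (hn : 2 ≤ n) :
    Filter.Tendsto (fun N : ℕ => (wseq α n / wseq α N) * |eseq α N|) Filter.atTop (nhds 0) := by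
  have hΓ2 := Gamma2_pos hα1
  -- hseq limit
  have hinv : Filter.Tendsto (fun N : ℕ => ((N:ℝ))⁻¹) Filter.atTop (nhds 0) :=
    tendsto_natCast_atTop_atTop.inv_tendsto_atTop
  have hbase : Filter.Tendsto (fun N : ℕ => 1 - (α/2) * ((N:ℝ))⁻¹) Filter.atTop (nhds 1) := by
    have h2 := (hinv.const_mul (α/2))
    rw [mul_zero] at h2
    have h3 := (tendsto_const_nhds (x := (1:ℝ)) (f := Filter.atTop (α := ℕ))).sub h2
    rwa [sub_zero] at h3
  have hsl : Filter.Tendsto (fun N : ℕ => hseq α N * (N:ℝ)^(α-1)) Filter.atTop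
      (nhds (1/Real.Gamma (2-α))) := by
    have h4 : Filter.Tendsto (fun N : ℕ => (1 - (α/2) * ((N:ℝ))⁻¹)^(1-α) / Real.Gamma (2-α))
        Filter.atTop (nhds (1/Real.Gamma (2-α))) := by
      have := (hbase.rpow_const (p := 1-α) (Or.inl one_ne_zero)).div_const (Real.Gamma (2-α))
      simpa using this
    apply h4.congr'
    filter_upwards [Filter.eventually_ge_atTop 2] with N hN
    have hNR : (2:ℝ) ≤ (N:ℝ) := by exact_mod_cast hN
    have hNpos : (0:ℝ) < N := by linarith
    unfold hseq
    have e1 : 1 - (α/2) * ((N:ℝ))⁻¹ = ((N:ℝ) - α/2) * ((N:ℝ))⁻¹ := by field_simp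
    have e2 : (((N:ℝ) - α/2) * ((N:ℝ))⁻¹)^(1-α)
        = ((N:ℝ) - α/2)^(1-α) * (((N:ℝ))⁻¹)^(1-α) :=
      Real.mul_rpow (by linarith) (by positivity)
    have e3 : (((N:ℝ))⁻¹)^(1-α) = (N:ℝ)^(α-1) := by
      rw [← Real.rpow_neg_one (N:ℝ), ← Real.rpow_mul hNpos.le]
      congr 1
      ring
    rw [e1, e2, e3]
    ring
  -- c-term limit
  have hcl : Filter.Tendsto (fun N : ℕ => (cconst α * (N:ℝ)^(-1-α)) * (N:ℝ)^(α-1))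
      Filter.atTop (nhds 0) := by
    have h5 : Filter.Tendsto (fun N : ℕ => cconst α * ((N:ℝ))^((-2):ℝ)) Filter.atTop
        (nhds 0) := by
      have h6 : Filter.Tendsto (fun N : ℕ => ((N:ℝ))^((-2):ℝ)) Filter.atTop (nhds 0) :=
        (tendsto_rpow_neg_atTop (by norm_num : (0:ℝ) < 2)).comp tendsto_natCast_atTop_atTop
      have := h6.const_mul (cconst α)
      rwa [mul_zero] at this
    apply h5.congr'
    filter_upwards [Filter.eventually_ge_atTop 1] with N hN
    have hNpos : (0:ℝ) < N := by exact_mod_cast hN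
    rw [mul_assoc, ← rpow_factor hNpos, show (-1-α) + (α-1) = ((-2):ℝ) by ring]
  -- eseq * N^(α-1) → 0
  have hel : Filter.Tendsto (fun N : ℕ => eseq α N * (N:ℝ)^(α-1)) Filter.atTop (nhds 0) := by
    have h7 := ((wseq_tendsto hα0 hα1).sub hsl).sub hcl
    rw [sub_self, sub_zero] at h7
    apply h7.congr
    intro N
    unfold eseq Fseq
    ring
  -- combine
  have hwl := wseq_tendsto hα0 hα1
  have hne : 1/Real.Gamma (2-α) ≠ 0 := by positivity
  have hnum : Filter.Tendsto (fun N : ℕ => wseq α n * |eseq α N * (N:ℝ)^(α-1)|)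
      Filter.atTop (nhds 0) := by
    have := (hel.abs.const_mul (wseq α n))
    rwa [abs_zero, mul_zero] at this
  have hq := hnum.div hwl hne
  rw [zero_div] at hq
  apply hq.congr'
  filter_upwards [Filter.eventually_ge_atTop 2] with N hN
  have hNR : (2:ℝ) ≤ (N:ℝ) := by exact_mod_cast hN
  have hNpos : (0:ℝ) < N := by linarith
  have hwN := wseq_pos hα0 hα1 N hN
  have hrp : (0:ℝ) < (N:ℝ)^(α-1) := Real.rpow_pos_of_pos hNpos _
  simp only [Pi.div_apply]
  rw [abs_mul, abs_of_pos hrp]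
  field_simp

theorem stmt10 (α : ℝ) (hα0 : 0 < α) (hα1 : α < 1) :
    ∃ C > (0:ℝ), ∀ n : ℕ, 2 ≤ n →
      |((-1 : ℝ) ^ (n - 1) * genBinom (α - 2) (n - 1) -
            ((n : ℝ) - α / 2) ^ (1 - α) / Real.Gamma (2 - α)) -
          (α - 2) / (24 * Real.Gamma (-α) * (n : ℝ) ^ (1 + α))| ≤
        C / (n : ℝ) ^ (2 + α) := by
  refine ⟨3 * Kc α, by linarith [Kc_pos hα1], ?_⟩
  intro n hn
  have hnR : (2:ℝ) ≤ (n:ℝ) := by exact_mod_cast hn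
  have hnpos : (0:ℝ) < n := by linarith
  -- the expression equals |eseq α n|
  have hexpr : ((-1 : ℝ) ^ (n - 1) * genBinom (α - 2) (n - 1) -
        ((n : ℝ) - α / 2) ^ (1 - α) / Real.Gamma (2 - α)) -
      (α - 2) / (24 * Real.Gamma (-α) * (n : ℝ) ^ (1 + α)) = eseq α n := by
    unfold eseq Fseq wseq hseq cconst
    have h1 : (n:ℝ)^(-1-α) = ((n:ℝ)^(1+α))⁻¹ := by
      rw [show (-1-α : ℝ) = -(1+α) by ring, Real.rpow_neg hnpos.le]
    rw [h1]
    ring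
  rw [hexpr]
  -- uniform bound from the induction + limit
  set B : ℝ := Kc α * (n:ℝ)^(1-α) * (1/(3*((n:ℝ)-1)^3)) with hB
  have hKn : (0:ℝ) ≤ Kc α * (n:ℝ)^(1-α) :=
    mul_nonneg (Kc_pos hα1).le (Real.rpow_nonneg hnpos.le _)
  have hbound : ∀ N, n ≤ N →
      |eseq α n| ≤ (wseq α n / wseq α N) * |eseq α N| + B := by
    intro N hN
    have h2 := key_induction hα0 hα1 hn N hN
    have h3 := sum_inv4 hn N hN
    have hN2 : 2 ≤ N := le_trans hn hN
    have hNR : (2:ℝ) ≤ (N:ℝ) := by exact_mod_cast hN2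
    have h4 : (0:ℝ) < 3*((N:ℝ)-1)^3 := by
      have := pow_pos (show (0:ℝ) < (N:ℝ)-1 by linarith) 3
      linarith
    have h5 : ∑ m ∈ Ico n N, ((1:ℝ)/m)^4 ≤ 1/(3*((n:ℝ)-1)^3) := by
      have : (0:ℝ) ≤ 1/(3*((N:ℝ)-1)^3) := by positivity
      linarith
    have h6 : Kc α * (n:ℝ)^(1-α) * ∑ m ∈ Ico n N, ((1:ℝ)/m)^4 ≤ B := by
      rw [hB]
      exact mul_le_mul_of_nonneg_left h5 hKn
    linarith
  have hlim : Filter.Tendsto (fun N : ℕ => (wseq α n / wseq α N) * |eseq α N| + B)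
      Filter.atTop (nhds B) := by
    have := (err_limit hα0 hα1 hn).add_const B
    rwa [zero_add] at this
  have hfin : |eseq α n| ≤ B := by
    apply ge_of_tendsto hlim
    filter_upwards [Filter.eventually_ge_atTop n] with N hN
    exact hbound N hN
  -- B ≤ 3 Kc / n^(2+α)
  have hn1 : (0:ℝ) < (n:ℝ)-1 := by linarith
  have hcube : ((n:ℝ))^3 / 8 ≤ ((n:ℝ)-1)^3 := by
    nlinarith [pow_nonneg (show (0:ℝ) ≤ (n:ℝ)-2 by linarith) 3, sq_nonneg ((n:ℝ)-2)]
  have h7 : 1/(3*((n:ℝ)-1)^3) ≤ 8/(3*((n:ℝ))^3) := by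
    rw [div_le_div_iff₀ (by positivity) (by positivity)]
    nlinarith
  have h8 : B ≤ Kc α * (n:ℝ)^(1-α) * (8/(3*((n:ℝ))^3)) := by
    rw [hB]
    exact mul_le_mul_of_nonneg_left h7 hKn
  have h9 : Kc α * (n:ℝ)^(1-α) * (8/(3*((n:ℝ))^3)) ≤ 3 * Kc α / (n:ℝ)^(2+α) := by
    have hrw : (n:ℝ)^(1-α) / ((n:ℝ))^3 = ((n:ℝ)^(2+α))⁻¹ := by
      rw [div_eq_mul_inv, ← Real.rpow_natCast (n:ℝ) 3, ← Real.rpow_neg hnpos.le,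
        ← rpow_factor hnpos, show (1-α) + -((3:ℕ):ℝ) = -(2+α) by push_cast; ring,
        Real.rpow_neg hnpos.le]
    have e1 : Kc α * (n:ℝ)^(1-α) * (8/(3*((n:ℝ))^3))
        = (8/3) * Kc α * ((n:ℝ)^(1-α) / ((n:ℝ))^3) := by ring
    rw [e1, hrw, div_eq_mul_inv (3 * Kc α)]
    have : (0:ℝ) ≤ ((n:ℝ)^(2+α))⁻¹ := by positivity
    nlinarith [Kc_pos hα1]
  calc |eseq α n| ≤ B := hfin
  _ ≤ Kc α * (n:ℝ)^(1-α) * (8/(3*((n:ℝ))^3)) := h8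
  _ ≤ 3 * Kc α / (n:ℝ)^(2+α) := h9
end

section
/- Let 0 < α < 1. There exists a constant C > 0 such that for every integer n ≥ 2, |(−1)^{n−1} C(α−2, n−1) − 1/(Γ(2−α) n^{α−1}) + α/(2 Γ(1−α) n^{α}) − (α+1)(3α−2)/(24 Γ(−α) n^{1+α})| ≤ C / n^{2+α}. -/
open Finset

set_option maxHeartbeats 1600000


lemma deriv_bound {g g' : ℝ → ℝ} {c : ℝ} {k : ℕ}
    (hg0 : g 0 = 0)
    (hd : ∀ t ∈ Set.Icc (0:ℝ) 1, HasDerivAt g (g' t) t)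
    (hb : ∀ t ∈ Set.Icc (0:ℝ) 1, |g' t| ≤ c * t ^ k) :
    ∀ t ∈ Set.Icc (0:ℝ) 1, |g t| ≤ c / (k+1) * t ^ (k+1) := by
  have key : ∀ (ε : ℝ), ε = 1 ∨ ε = -1 → ∀ t ∈ Set.Icc (0:ℝ) 1,
      ε * g t ≤ c / (k+1) * t ^ (k+1) := by
    intro ε hε t ht
    set φ : ℝ → ℝ := fun s => c / (k+1) * s ^ (k+1) - ε * g s with hφ
    have hder : ∀ s ∈ Set.Icc (0:ℝ) 1, HasDerivAt φ (c * s ^ k - ε * g' s) s := by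
      intro s hs
      have h1 : HasDerivAt (fun s : ℝ => c / (k+1) * s ^ (k+1))
          (c / (k+1) * ((k+1) * s ^ k)) s := by
        simpa using (hasDerivAt_pow (k+1) s).const_mul (c / (k+1))
      have h2 := ((hd s hs).const_mul ε)
      have := h1.sub h2
      convert this using 1
      all_goals try first | with_reducible_and_instances rfl | (funext y; rfl)
      have : ((k:ℝ)+1) ≠ 0 := by positivity
      push_cast
      field_simp
    have hmono : MonotoneOn φ (Set.Icc (0:ℝ) 1) := by
      apply monotoneOn_of_deriv_nonneg (convex_Icc 0 1)
      · exact fun s hs => (hder s hs).continuousAt.continuousWithinAt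
      · intro s hs
        rw [interior_Icc] at hs
        exact ((hder s (Set.mem_Icc_of_Ioo hs)).differentiableAt).differentiableWithinAt
      · intro s hs
        rw [interior_Icc] at hs
        rw [(hder s (Set.mem_Icc_of_Ioo hs)).deriv]
        have hb' := hb s (Set.mem_Icc_of_Ioo hs)
        have : ε * g' s ≤ |g' s| := by
          rcases hε with rfl | rfl
          · simpa using le_abs_self _
          · have := neg_abs_le (g' s); linarith
        linarith
    have h0 : φ 0 = 0 := by simp [hφ, hg0]
    have := hmono (Set.left_mem_Icc.2 zero_le_one) ht ht.1
    rw [h0] at this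
    simp only [hφ] at this
    linarith
  intro t ht
  rw [abs_le]
  constructor
  · have := key (-1) (Or.inr rfl) t ht; linarith
  · have := key 1 (Or.inl rfl) t ht; linarith
section
variable {β : ℝ}

lemma hasDerivAt_one_add_rpow (γ : ℝ) {t : ℝ} (ht : 0 ≤ t) :
    HasDerivAt (fun s : ℝ => (1+s) ^ γ) (γ * (1+t) ^ (γ-1)) t := by
  have h : HasDerivAt (fun s : ℝ => 1 + s) 1 t := (hasDerivAt_id t).const_add 1
  have := h.rpow_const (p := γ) (Or.inl (by positivity))
  simpa using this

lemma one_add_rpow_le_one (γ : ℝ) (hγ : γ ≤ 0) {t : ℝ} (ht : 0 ≤ t) :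
    (1+t) ^ γ ≤ 1 := Real.rpow_le_one_of_one_le_of_nonpos (by linarith) hγ

lemma taylor3_s11 (hβl : -2 ≤ β) (hβu : β ≤ 1) :
    ∀ t ∈ Set.Icc (0:ℝ) 1,
      |(1+t) ^ β - (1 + β*t + β*(β-1)/2*t^2 + β*(β-1)*(β-2)/6*t^3)| ≤ 5 * t^4 := by
  have hb0 : |β| ≤ 2 := by rw [abs_le]; constructor <;> linarith
  have hb1 : |β - 1| ≤ 3 := by rw [abs_le]; constructor <;> linarith
  have hb2 : |β - 2| ≤ 4 := by rw [abs_le]; constructor <;> linarith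
  have hb3 : |β - 3| ≤ 5 := by rw [abs_le]; constructor <;> linarith
  -- level 3
  have h3 : ∀ t ∈ Set.Icc (0:ℝ) 1,
      |β*(β-1)*(β-2) * ((1+t)^(β-3) - 1)| ≤ 120 * t ^ 1 := by
    have H := deriv_bound (g := fun t => β*(β-1)*(β-2) * ((1+t)^(β-3) - 1))
      (g' := fun t => β*(β-1)*(β-2)*(β-3) * (1+t)^(β-4)) (c := 120) (k := 0)
      (by simp)
      (fun t ht => by
        have := ((hasDerivAt_one_add_rpow (β-3) ht.1).sub_const 1).const_mul (β*(β-1)*(β-2))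
        convert this using 1
        all_goals try first | with_reducible_and_instances rfl | (funext y; rfl)
        try ring_nf)
      (fun t ht => by
        have h1 : |(1+t)^(β-4)| ≤ 1 := by
          rw [abs_of_nonneg (Real.rpow_nonneg (by linarith [ht.1]) _)]
          exact one_add_rpow_le_one _ (by linarith) ht.1
        calc |β*(β-1)*(β-2)*(β-3) * (1+t)^(β-4)|
            = |β| * |β - 1| * |β - 2| * |β - 3| * |(1+t)^(β-4)| := by
              rw [abs_mul, abs_mul, abs_mul, abs_mul]
          _ ≤ 2*3*4*5*1 := by gcongr <;> first | assumption | positivity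
          _ = 120 * t ^ 0 := by norm_num)
    intro t ht
    have := H t ht
    norm_num at this ⊢
    linarith
  -- level 2
  have h2 : ∀ t ∈ Set.Icc (0:ℝ) 1,
      |β*(β-1) * ((1+t)^(β-2) - 1 - (β-2)*t)| ≤ 60 * t ^ 2 := by
    have H := deriv_bound (g := fun t => β*(β-1) * ((1+t)^(β-2) - 1 - (β-2)*t))
      (g' := fun t => β*(β-1)*(β-2) * ((1+t)^(β-3) - 1)) (c := 120) (k := 1)
      (by norm_num)
      (fun t ht => by
        have h := (((hasDerivAt_one_add_rpow (β-2) ht.1).sub_const 1).sub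
          ((hasDerivAt_id t).const_mul (β-2))).const_mul (β*(β-1))
        convert h using 1
        all_goals try first | with_reducible_and_instances rfl | (funext y; rfl)
        try ring_nf)
      (fun t ht => by simpa using h3 t ht)
    intro t ht
    have := H t ht
    norm_num at this ⊢
    linarith
  -- level 1
  have h1 : ∀ t ∈ Set.Icc (0:ℝ) 1,
      |β * ((1+t)^(β-1) - 1 - (β-1)*t - (β-1)*(β-2)/2*t^2)| ≤ 20 * t ^ 3 := by
    have H := deriv_bound (g := fun t => β * ((1+t)^(β-1) - 1 - (β-1)*t - (β-1)*(β-2)/2*t^2))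
      (g' := fun t => β*(β-1) * ((1+t)^(β-2) - 1 - (β-2)*t)) (c := 60) (k := 2)
      (by norm_num)
      (fun t ht => by
        have h := ((((hasDerivAt_one_add_rpow (β-1) ht.1).sub_const 1).sub
          ((hasDerivAt_id t).const_mul (β-1))).sub
          ((hasDerivAt_pow 2 t).const_mul ((β-1)*(β-2)/2))).const_mul β
        convert h using 1
        all_goals try first | with_reducible_and_instances rfl | (funext y; rfl)
        try ring_nf)
      (fun t ht => h2 t ht)
    intro t ht
    have := H t ht
    norm_num at this ⊢
    linarith
  -- level 0
  have H := deriv_bound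
    (g := fun t => (1+t)^β - (1 + β*t + β*(β-1)/2*t^2 + β*(β-1)*(β-2)/6*t^3))
    (g' := fun t => β * ((1+t)^(β-1) - 1 - (β-1)*t - (β-1)*(β-2)/2*t^2)) (c := 20) (k := 3)
    (by norm_num)
    (fun t ht => by
      have hp1 : HasDerivAt (fun t : ℝ => β*t) β t := by
        simpa using (hasDerivAt_id t).const_mul β
      have hp2 : HasDerivAt (fun t : ℝ => β*(β-1)/2*t^2) (β*(β-1)/2*(2*t)) t := by
        have := (hasDerivAt_pow 2 t).const_mul (β*(β-1)/2)
        convert this using 1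
        all_goals try first | with_reducible_and_instances rfl | (funext y; rfl)
        try (push_cast; ring)
      have hp3 : HasDerivAt (fun t : ℝ => β*(β-1)*(β-2)/6*t^3) (β*(β-1)*(β-2)/6*(3*t^2)) t := by
        have := (hasDerivAt_pow 3 t).const_mul (β*(β-1)*(β-2)/6)
        convert this using 1
        all_goals try first | with_reducible_and_instances rfl | (funext y; rfl)
        try (push_cast; ring)
      have hpoly : HasDerivAt (fun t : ℝ => 1 + β*t + β*(β-1)/2*t^2 + β*(β-1)*(β-2)/6*t^3)
          (β + β*(β-1)/2*(2*t) + β*(β-1)*(β-2)/6*(3*t^2)) t :=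
        ((hp1.const_add 1).add hp2).add hp3
      have h := (hasDerivAt_one_add_rpow β ht.1).sub hpoly
      convert h using 1
      all_goals try first | with_reducible_and_instances rfl | (funext y; rfl)
      try ring_nf)
    (fun t ht => h1 t ht)
  intro t ht
  have := H t ht
  norm_num at this ⊢
  linarith
end
noncomputable def Aa (α : ℝ) (n : ℕ) : ℝ := (-1:ℝ)^(n-1) * genBinom (α-2) (n-1)

lemma Aa_two (α : ℝ) : Aa α 2 = 2 - α := by
  show (-1:ℝ)^(2-1) * genBinom (α-2) (2-1) = 2 - α
  norm_num [genBinom]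

lemma Aa_succ (α : ℝ) (n : ℕ) (hn : 1 ≤ n) :
    Aa α (n+1) = Aa α n * ((n + 1 - α)/n) := by
  obtain ⟨m, rfl⟩ := Nat.exists_eq_add_of_le hn
  show (-1:ℝ)^(1+m+1-1) * genBinom (α-2) (1+m+1-1) = _ * _
  have e1 : 1+m+1-1 = m+1 := by omega
  have e2 : 1+m-1 = m := by omega
  rw [e1]
  unfold Aa
  rw [e2]
  show (-1:ℝ)^(m+1) * (genBinom (α-2) m * (α - 2 - m) / (m+1)) = _
  rw [pow_succ]
  have hm1 : ((m:ℝ)+1) ≠ 0 := by positivity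
  have hc : ((1+m : ℕ) : ℝ) = (m:ℝ) + 1 := by push_cast; ring
  rw [hc]
  field_simp
  ring

lemma Aa_pos (α : ℝ) (hα1 : α < 1) : ∀ n, 2 ≤ n → 0 < Aa α n := by
  intro n hn
  induction n with
  | zero => omega
  | succ m ih =>
    rcases Nat.lt_or_ge m 2 with hm | hm
    · interval_cases m
      · omega
      · rw [Aa_two]; linarith
    · rw [Aa_succ α m (by omega)]
      have h1 : (0:ℝ) < m := by positivity
      have h2 : (0:ℝ) < (m:ℝ) + 1 - α := by linarith [(by exact_mod_cast Nat.one_le_cast.mpr (by omega) : (1:ℝ) ≤ (m:ℝ))]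
      exact mul_pos (ih hm) (div_pos h2 h1)
lemma bernoulli_lower {p : ℝ} (hp0 : 0 ≤ p) (hp1 : p ≤ 1) :
    ∀ t ∈ Set.Icc (0:ℝ) 1, |(1+t)^p - 1 - p*t| ≤ 1/8 * t^2 := by
  have hpp : |p * (p-1)| ≤ 1/4 := by
    rw [abs_mul, abs_of_nonneg hp0, abs_of_nonpos (by linarith)]
    nlinarith [sq_nonneg (2*p-1)]
  have h1 : ∀ t ∈ Set.Icc (0:ℝ) 1, |p * ((1+t)^(p-1) - 1)| ≤ 1/4 * t^1 := by
    have H := deriv_bound (g := fun t => p * ((1+t)^(p-1) - 1))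
      (g' := fun t => p*(p-1) * (1+t)^(p-2)) (c := 1/4) (k := 0)
      (by simp)
      (fun t ht => by
        have := ((hasDerivAt_one_add_rpow (p-1) ht.1).sub_const 1).const_mul p
        convert this using 1
        all_goals try first | with_reducible_and_instances rfl | (funext y; rfl)
        try ring_nf)
      (fun t ht => by
        have hr : |(1+t)^(p-2)| ≤ 1 := by
          rw [abs_of_nonneg (Real.rpow_nonneg (by linarith [ht.1]) _)]
          exact one_add_rpow_le_one _ (by linarith) ht.1
        calc |p*(p-1) * (1+t)^(p-2)| = |p*(p-1)| * |(1+t)^(p-2)| := abs_mul _ _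
          _ ≤ 1/4 * 1 := by gcongr <;> try linarith [abs_nonneg (p*(p-1))]
          _ = 1/4 * t^0 := by norm_num)
    intro t ht
    have := H t ht
    norm_num at this ⊢
    linarith
  have H := deriv_bound (g := fun t => (1+t)^p - 1 - p*t)
    (g' := fun t => p * ((1+t)^(p-1) - 1)) (c := 1/4) (k := 1)
    (by norm_num)
    (fun t ht => by
      have hp1' : HasDerivAt (fun t : ℝ => p*t) p t := by
        simpa using (hasDerivAt_id t).const_mul p
      have h := ((hasDerivAt_one_add_rpow p ht.1).sub_const 1).sub hp1'
      convert h using 1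
      all_goals try first | with_reducible_and_instances rfl | (funext y; rfl)
      try ring_nf)
    h1
  intro t ht
  have := H t ht
  norm_num at this ⊢
  linarith

lemma Aa_lower (α : ℝ) (hα0 : 0 < α) (hα1 : α < 1) :
    ∀ n : ℕ, 2 ≤ n → 1/2 * (n:ℝ)^(1-α) ≤ Aa α n := by
  intro n hn
  induction n with
  | zero => omega
  | succ m ih =>
    rcases Nat.lt_or_ge m 2 with hm | hm
    · interval_cases m
      · omega
      · rw [Aa_two]
        have h2c : ((1+1 : ℕ) : ℝ) = (2:ℝ) := by norm_num
        have h2b : (2:ℝ)^(1-α) ≤ 2 := by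
          calc (2:ℝ)^(1-α) ≤ (2:ℝ)^(1:ℝ) :=
                Real.rpow_le_rpow_of_exponent_le (by norm_num) (by linarith)
          _ = 2 := Real.rpow_one 2
        rw [h2c]
        linarith
    · have hm1 : (1:ℝ) ≤ (m:ℝ) := by exact_mod_cast Nat.one_le_iff_ne_zero.mpr (by omega)
      have hmpos : (0:ℝ) < m := by linarith
      rw [Aa_succ α m (by omega)]
      have hratio : ((m:ℝ)+1)^(1-α) ≤ (m:ℝ)^(1-α) * (((m:ℝ) + 1 - α)/m) := by
        have hber : (1 + 1/(m:ℝ))^(1-α) ≤ 1 + (1-α) * (1/m) :=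
          rpow_one_add_le_one_add_mul_self
            (by
              have h9 : (0:ℝ) ≤ 1/(m:ℝ) := by positivity
              linarith) (by linarith) (by linarith)
        have he : ((m:ℝ)+1)^(1-α) = (m:ℝ)^(1-α) * (1+1/(m:ℝ))^(1-α) := by
          rw [← Real.mul_rpow (by positivity) (by positivity)]
          congr 1
          field_simp
        rw [he]
        have h2 : 1 + (1-α) * (1/(m:ℝ)) = ((m:ℝ) + 1 - α)/m := by field_simp; ring
        rw [← h2]
        gcongr <;> try exact Real.rpow_nonneg (by positivity) _
      have hA := ih hm
      have hrpos : (0:ℝ) < ((m:ℝ) + 1 - α)/m := div_pos (by linarith) hmpos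
      calc 1/2 * ((m+1 : ℕ):ℝ)^(1-α) = 1/2 * ((m:ℝ)+1)^(1-α) := by push_cast; ring_nf
        _ ≤ 1/2 * ((m:ℝ)^(1-α) * (((m:ℝ) + 1 - α)/m)) := by gcongr
        _ = (1/2 * (m:ℝ)^(1-α)) * (((m:ℝ) + 1 - α)/m) := by ring
        _ ≤ Aa α m * (((m:ℝ) + 1 - α)/m) := by gcongr
        _ = Aa α (m+1) * 1 := by rw [Aa_succ α m (by omega)]; ring
        _ = _ := by rw [Aa_succ α m (by omega)]; ring
lemma Aa_upper (α : ℝ) (hα0 : 0 < α) (hα1 : α < 1) :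
    ∀ n : ℕ, 2 ≤ n → Aa α n ≤ 4 * (n:ℝ)^(1-α) * (1 - 1/n) := by
  intro n hn
  induction n with
  | zero => omega
  | succ m ih =>
    rcases Nat.lt_or_ge m 2 with hm | hm
    · interval_cases m
      · omega
      · rw [Aa_two]
        have h2c : ((1+1 : ℕ) : ℝ) = (2:ℝ) := by norm_num
        rw [h2c]
        have h2b : (1:ℝ) ≤ (2:ℝ)^(1-α) := Real.one_le_rpow (by norm_num) (by linarith)
        norm_num
        linarith
    · have hm1 : (1:ℝ) ≤ (m:ℝ) := by exact_mod_cast Nat.one_le_iff_ne_zero.mpr (by omega)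
      have hm2 : (2:ℝ) ≤ (m:ℝ) := by exact_mod_cast hm
      have hmpos : (0:ℝ) < m := by linarith
      set x : ℝ := (m:ℝ) with hx
      have hb := bernoulli_lower (p := 1-α) (by linarith) (by linarith) (1/x)
        ⟨by positivity, by rw [div_le_one hmpos]; linarith⟩
      have hber : 1 + (1-α)/x - 1/(8*x^2) ≤ (1+1/x)^(1-α) := by
        rw [abs_le] at hb
        have := hb.1
        have e : (1-α) * (1/x) = (1-α)/x := by ring
        have e2 : 1/8 * (1/x)^2 = 1/(8*x^2) := by field_simp
        nlinarith [hb.1]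
      have hkey : (1-1/x)*(1+(1-α)/x) ≤ (1+(1-α)/x - 1/(8*x^2))*(1-1/(x+1)) := by
        have hx1 : (0:ℝ) < x + 1 := by linarith
        rw [← sub_nonneg]
        have expand : (1+(1-α)/x - 1/(8*x^2))*(1-1/(x+1)) - (1-1/x)*(1+(1-α)/x)
            = (7*x + 8 - 8*α)/(8*x^2*(x+1)) := by
          field_simp
          ring
        rw [expand]
        apply div_nonneg (by linarith) (by positivity)
      have hrw : ((m+1 : ℕ):ℝ) = x + 1 := by push_cast; ring
      have hAm := ih hm
      have hratio : (0:ℝ) ≤ (x + 1 - α)/x := div_nonneg (by linarith) (by positivity)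
      have hsplit : (x+1)^(1-α) = x^(1-α) * (1+1/x)^(1-α) := by
        rw [← Real.mul_rpow (by positivity) (by positivity)]
        congr 1
        field_simp
      have hxpow : (0:ℝ) ≤ x^(1-α) := Real.rpow_nonneg (by positivity) _
      have h1m : (0:ℝ) ≤ 1 - 1/(x+1) := by
        have : 1/(x+1) ≤ 1 := by rw [div_le_one (by linarith)]; linarith
        linarith
      calc Aa α (m+1) = Aa α m * ((x + 1 - α)/x) := Aa_succ α m (by omega)
        _ ≤ (4 * x^(1-α) * (1-1/x)) * ((x + 1 - α)/x) := by gcongr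
        _ = 4 * x^(1-α) * ((1-1/x) * (1+(1-α)/x)) := by
            field_simp
            ring
        _ ≤ 4 * x^(1-α) * ((1+(1-α)/x - 1/(8*x^2))*(1-1/(x+1))) := by gcongr
        _ ≤ 4 * x^(1-α) * ((1+1/x)^(1-α) * (1-1/(x+1))) := by gcongr
        _ = 4 * (x+1)^(1-α) * (1-1/(x+1)) := by rw [hsplit]; ring
        _ = 4 * ((m+1 : ℕ):ℝ)^(1-α) * (1-1/((m+1:ℕ):ℝ)) := by rw [hrw]
lemma q4_bound (α : ℝ) (hα0 : 0 < α) (hα1 : α < 1) :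
    |-α/12 - α^2/6 + 7*α^3/48 + 11*α^4/48 - α^5/16 - α^6/16| ≤ 1 := by
  have h2 : α^2 ≤ 1 := pow_le_one₀ hα0.le hα1.le
  have h3 : α^3 ≤ 1 := pow_le_one₀ hα0.le hα1.le
  have h4 : α^4 ≤ 1 := pow_le_one₀ hα0.le hα1.le
  have h5 : α^5 ≤ 1 := pow_le_one₀ hα0.le hα1.le
  have h6 : α^6 ≤ 1 := pow_le_one₀ hα0.le hα1.le
  have h2' : 0 ≤ α^2 := by positivity
  have h3' : 0 ≤ α^3 := by positivity
  have h4' : 0 ≤ α^4 := by positivity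
  have h5' : 0 ≤ α^5 := by positivity
  have h6' : 0 ≤ α^6 := by positivity
  rw [abs_le]
  constructor <;> nlinarith

lemma q5_bound (α : ℝ) (hα0 : 0 < α) (hα1 : α < 1) :
    |α/12 + α^2/36 - 11*α^3/48 - 5*α^4/36 + α^5/8 + α^6/9 + α^7/48| ≤ 1 := by
  have h2 : α^2 ≤ 1 := pow_le_one₀ hα0.le hα1.le
  have h3 : α^3 ≤ 1 := pow_le_one₀ hα0.le hα1.le
  have h4 : α^4 ≤ 1 := pow_le_one₀ hα0.le hα1.le
  have h5 : α^5 ≤ 1 := pow_le_one₀ hα0.le hα1.le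
  have h6 : α^6 ≤ 1 := pow_le_one₀ hα0.le hα1.le
  have h7 : α^7 ≤ 1 := pow_le_one₀ hα0.le hα1.le
  have h2' : 0 ≤ α^2 := by positivity
  have h3' : 0 ≤ α^3 := by positivity
  have h4' : 0 ≤ α^4 := by positivity
  have h5' : 0 ≤ α^5 := by positivity
  have h6' : 0 ≤ α^6 := by positivity
  have h7' : 0 ≤ α^7 := by positivity
  rw [abs_le]
  constructor <;> nlinarith

noncomputable def gfun (α : ℝ) (x : ℝ) : ℝ :=
  x^(1-α)/((1-α)*Real.Gamma (1-α)) - α*x^(-α)/(2*Real.Gamma (1-α))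
    + α*(α+1)*(2-3*α)*x^(-1-α)/(24*Real.Gamma (1-α))

lemma d_bound (α : ℝ) (hα0 : 0 < α) (hα1 : α < 1) :
    ∃ K > (0:ℝ), ∀ n : ℕ, 2 ≤ n →
      |gfun α n * (((n:ℝ) + 1 - α)/n) - gfun α ((n:ℝ)+1)| ≤ K * (n:ℝ)^(1-α) / (n:ℝ)^4 := by
  set G := Real.Gamma (1-α) with hGdef
  have hG : 0 < G := Real.Gamma_pos_of_pos (by linarith)
  have h1α : (0:ℝ) < 1 - α := by linarith
  refine ⟨2/((1-α)*G) + 5*(1/((1-α)*G) + 1/(2*G) + 1/(6*G)), by positivity, ?_⟩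
  intro n hn
  set x : ℝ := (n:ℝ) with hxdef
  have hx2 : (2:ℝ) ≤ x := by rw [hxdef]; exact_mod_cast hn
  have hx : (0:ℝ) < x := by linarith
  set t : ℝ := 1/x with htdef
  have ht0 : 0 ≤ t := by positivity
  have ht1 : t ≤ 1 := by rw [htdef, div_le_one hx]; linarith
  have htm : t ∈ Set.Icc (0:ℝ) 1 := ⟨ht0, ht1⟩
  have hxt : x * (1+t) = x + 1 := by rw [htdef]; field_simp
  have h1 : (x+1)^(1-α) = x^(1-α)*(1+t)^(1-α) := by
    rw [← hxt, Real.mul_rpow hx.le (by linarith)]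
  have h2 : (x+1)^(-α) = x^(-α)*(1+t)^(-α) := by
    rw [← hxt, Real.mul_rpow hx.le (by linarith)]
  have h3 : (x+1)^(-1-α) = x^(-1-α)*(1+t)^(-1-α) := by
    rw [← hxt, Real.mul_rpow hx.le (by linarith)]
  have h4 : x^(-α) = x^(1-α)*t := by
    rw [htdef, one_div, ← Real.rpow_neg_one x, ← Real.rpow_add hx]
    rw [show (1:ℝ)-α + -1 = -α by ring]
  have h5 : x^(-1-α) = x^(1-α)*t^2 := by
    rw [htdef, one_div, inv_pow, ← Real.rpow_natCast x 2, ← Real.rpow_neg hx.le,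
      ← Real.rpow_add hx]
    rw [show (1-α) + -((2:ℕ):ℝ) = -1-α by push_cast; ring]
  have hρ : (x+1-α)/x = 1+(1-α)*t := by rw [htdef]; field_simp; ring
  -- remainders
  set r1 : ℝ := (1+t)^(1-α) - (1 + (1-α)*t + (1-α)*((1-α)-1)/2*t^2 + (1-α)*((1-α)-1)*((1-α)-2)/6*t^3) with hr1def
  set r2 : ℝ := (1+t)^(-α) - (1 + (-α)*t + (-α)*((-α)-1)/2*t^2 + (-α)*((-α)-1)*((-α)-2)/6*t^3) with hr2def
  set r3 : ℝ := (1+t)^(-1-α) - (1 + (-1-α)*t + (-1-α)*((-1-α)-1)/2*t^2 + (-1-α)*((-1-α)-1)*((-1-α)-2)/6*t^3) with hr3def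
  have hb1 : |r1| ≤ 5*t^4 := taylor3_s11 (by linarith) (by linarith) t htm
  have hb2 : |r2| ≤ 5*t^4 := taylor3_s11 (by linarith) (by linarith) t htm
  have hb3 : |r3| ≤ 5*t^4 := taylor3_s11 (by linarith) (by linarith) t htm
  have hp1 : (1+t)^(1-α) = (1 + (1-α)*t + (1-α)*((1-α)-1)/2*t^2 + (1-α)*((1-α)-1)*((1-α)-2)/6*t^3) + r1 := by rw [hr1def]; ring
  have hp2 : (1+t)^(-α) = (1 + (-α)*t + (-α)*((-α)-1)/2*t^2 + (-α)*((-α)-1)*((-α)-2)/6*t^3) + r2 := by rw [hr2def]; ring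
  have hp3 : (1+t)^(-1-α) = (1 + (-1-α)*t + (-1-α)*((-1-α)-1)/2*t^2 + (-1-α)*((-1-α)-1)*((-1-α)-2)/6*t^3) + r3 := by rw [hr3def]; ring
  set q4 : ℝ := -α/12 - α^2/6 + 7*α^3/48 + 11*α^4/48 - α^5/16 - α^6/16 with hq4def
  set q5 : ℝ := α/12 + α^2/36 - 11*α^3/48 - 5*α^4/36 + α^5/8 + α^6/9 + α^7/48 with hq5def
  have hmaster : gfun α x * ((x + 1 - α)/x) - gfun α (x+1)
      = x^(1-α) * (t^4*(q4+q5*t)/((1-α)*G)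
        - ((1/((1-α)*G))*r1 + (-α/(2*G))*t*r2 + (α*(α+1)*(2-3*α)/(24*G))*t^2*r3)) := by
    unfold gfun
    rw [hρ, h1, h2, h3, h4, h5, hp1, hp2, hp3, hq4def, hq5def]
    field_simp
    ring
  rw [hmaster]
  have habs : |t^4*(q4+q5*t)/((1-α)*G)
        - ((1/((1-α)*G))*r1 + (-α/(2*G))*t*r2 + (α*(α+1)*(2-3*α)/(24*G))*t^2*r3)|
      ≤ (2/((1-α)*G) + 5*(1/((1-α)*G) + 1/(2*G) + 1/(6*G))) * t^4 := by
    have hq4 : |q4| ≤ 1 := by rw [hq4def]; exact q4_bound α hα0 hα1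
    have hq5 : |q5| ≤ 1 := by rw [hq5def]; exact q5_bound α hα0 hα1
    have hq45 : |q4 + q5*t| ≤ 2 := by
      calc |q4 + q5*t| ≤ |q4| + |q5| * |t| := by
            refine (abs_add_le _ _).trans ?_
            rw [abs_mul]
      _ ≤ 1 + 1*1 := by
            gcongr
            rw [abs_of_nonneg ht0]; exact ht1
      _ = 2 := by norm_num
    have e1 : |t^4*(q4+q5*t)/((1-α)*G)| ≤ 2/((1-α)*G) * t^4 := by
      rw [abs_div, abs_mul, abs_of_nonneg (by positivity : (0:ℝ) ≤ t^4),
        abs_of_nonneg (by positivity : (0:ℝ) ≤ (1-α)*G)]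
      rw [div_le_iff₀ (by positivity)]
      calc t^4 * |q4+q5*t| ≤ t^4 * 2 := by gcongr
        _ = 2/((1-α)*G) * t^4 * ((1-α)*G) := by field_simp
    have e2 : |(1/((1-α)*G))*r1| ≤ 1/((1-α)*G) * (5*t^4) := by
      rw [abs_mul, abs_of_nonneg (by positivity : (0:ℝ) ≤ 1/((1-α)*G))]
      gcongr
    have e3 : |(-α/(2*G))*t*r2| ≤ 1/(2*G) * (5*t^4) := by
      rw [abs_mul, abs_mul, abs_div, abs_neg, abs_of_nonneg hα0.le,
        abs_of_nonneg (show (0:ℝ) ≤ 2*G by positivity), abs_of_nonneg ht0]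
      calc α/(2*G) * t * |r2| ≤ 1/(2*G) * 1 * (5*t^4) := by
            gcongr <;> try linarith
        _ = 1/(2*G) * (5*t^4) := by ring
    have e4 : |(α*(α+1)*(2-3*α)/(24*G))*t^2*r3| ≤ 1/(6*G) * (5*t^4) := by
      rw [abs_mul, abs_mul, abs_div,
        abs_of_nonneg (show (0:ℝ) ≤ 24*G by positivity),
        abs_of_nonneg (show (0:ℝ) ≤ t^2 by positivity)]
      have hnum : |α*(α+1)*(2-3*α)| ≤ 4 := by
        rw [abs_mul, abs_mul, abs_of_nonneg hα0.le, abs_of_nonneg (by linarith : (0:ℝ) ≤ α+1)]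
        have h23 : |2-3*α| ≤ 2 := abs_le.2 ⟨by linarith, by linarith⟩
        calc α*(α+1)*|2-3*α| ≤ 1*(1+1)*2 := by
              gcongr <;> first | exact h23 | linarith
          _ = 4 := by norm_num
      have ht2 : t^2 ≤ 1 := pow_le_one₀ ht0 ht1
      calc |α*(α+1)*(2-3*α)|/(24*G) * t^2 * |r3| ≤ 4/(24*G) * 1 * (5*t^4) := by
            gcongr
        _ = 1/(6*G) * (5*t^4) := by ring
    calc |t^4*(q4+q5*t)/((1-α)*G)
        - ((1/((1-α)*G))*r1 + (-α/(2*G))*t*r2 + (α*(α+1)*(2-3*α)/(24*G))*t^2*r3)|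
        ≤ |t^4*(q4+q5*t)/((1-α)*G)|
          + (|(1/((1-α)*G))*r1| + (|(-α/(2*G))*t*r2| + |(α*(α+1)*(2-3*α)/(24*G))*t^2*r3|)) := by
          have tri : ∀ a b c d : ℝ, |a - (b + c + d)| ≤ |a| + (|b| + (|c| + |d|)) := by
            intro a b c d
            calc |a - (b+c+d)| ≤ |a| + |b+c+d| := abs_sub a (b+c+d)
              _ ≤ |a| + (|b| + |c+d|) := by
                  have := abs_add_le b (c+d)
                  have e : b+c+d = b+(c+d) := by ring
                  rw [e]
                  linarith
              _ ≤ |a| + (|b| + (|c| + |d|)) := by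
                  have := abs_add_le c d
                  linarith
          exact tri _ _ _ _
      _ ≤ 2/((1-α)*G) * t^4 + (1/((1-α)*G) * (5*t^4) + (1/(2*G) * (5*t^4) + 1/(6*G) * (5*t^4))) := by
          gcongr
      _ = (2/((1-α)*G) + 5*(1/((1-α)*G) + 1/(2*G) + 1/(6*G))) * t^4 := by ring
  rw [abs_mul, abs_of_nonneg (Real.rpow_nonneg hx.le _)]
  calc x^(1-α) * |t^4*(q4+q5*t)/((1-α)*G)
        - ((1/((1-α)*G))*r1 + (-α/(2*G))*t*r2 + (α*(α+1)*(2-3*α)/(24*G))*t^2*r3)|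
      ≤ x^(1-α) * ((2/((1-α)*G) + 5*(1/((1-α)*G) + 1/(2*G) + 1/(6*G))) * t^4) := by
        gcongr
    _ = (2/((1-α)*G) + 5*(1/((1-α)*G) + 1/(2*G) + 1/(6*G))) * x^(1-α) / x^4 := by
        rw [htdef]
        field_simp
lemma Aa_prod (α : ℝ) : ∀ m : ℕ,
    Aa α (m+2) = (∏ j ∈ Finset.range (m+1), (2-α+(j:ℝ))) / (Nat.factorial (m+1)) := by
  intro m
  induction m with
  | zero => simp [Aa_two]
  | succ k ih =>
    have h := Aa_succ α (k+2) (by omega)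
    have e : k+2+1 = k+1+2 := by omega
    rw [e] at h
    rw [h, ih]
    rw [show k+1+1 = k+2 by omega]
    rw [show (∏ j ∈ Finset.range (k+2), (2-α+(j:ℝ)))
        = (∏ j ∈ Finset.range (k+1), (2-α+(j:ℝ))) * (2-α+((k+1:ℕ):ℝ)) from
      Finset.prod_range_succ _ _]
    rw [show Nat.factorial (k+2) = (k+2) * Nat.factorial (k+1) from Nat.factorial_succ (k+1)]
    have hk1 : (0:ℝ) < (k:ℝ)+1 := by positivity
    have hfac : (0:ℝ) < ((Nat.factorial (k+1)) : ℝ) := by exact_mod_cast Nat.factorial_pos (k+1)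
    push_cast
    field_simp
    ring

lemma Aa_gamseq (α : ℝ) (hα1 : α < 1) (m : ℕ) :
    Aa α (m+3) = ((m:ℝ)+1)^((2:ℝ)-α) / (((m:ℝ)+2) * Real.GammaSeq (2-α) (m+1)) := by
  have hprod : (0:ℝ) < ∏ j ∈ Finset.range (m+2), (2-α+(j:ℝ)) := by
    apply Finset.prod_pos
    intro j _
    have : (0:ℝ) ≤ (j:ℝ) := by positivity
    linarith
  have hp : Aa α (m+3) = (∏ j ∈ Finset.range (m+2), (2-α+(j:ℝ))) / (Nat.factorial (m+2)) := by
    have := Aa_prod α (m+1)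
    have e : m+1+2 = m+3 := by omega
    have e2 : m+1+1 = m+2 := by omega
    rw [e, e2] at this
    exact this
  have hgs : Real.GammaSeq (2-α) (m+1)
      = ((m+1:ℕ):ℝ)^((2:ℝ)-α) * ((Nat.factorial (m+1)) : ℝ) / ∏ j ∈ Finset.range (m+2), ((2-α)+(j:ℝ)) := by
    rfl
  have hfac1 : (0:ℝ) < ((Nat.factorial (m+1)) : ℝ) := by exact_mod_cast Nat.factorial_pos (m+1)
  have hfac2 : ((Nat.factorial (m+2)) : ℝ) = ((m:ℝ)+2) * ((Nat.factorial (m+1)) : ℝ) := by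
    rw [show m+2 = (m+1)+1 by omega, Nat.factorial_succ]
    push_cast
    ring
  have hc : ((m+1:ℕ):ℝ) = (m:ℝ)+1 := by push_cast; ring
  have hpow : (0:ℝ) < ((m:ℝ)+1)^((2:ℝ)-α) := Real.rpow_pos_of_pos (by positivity) _
  rw [hp, hgs, hc, hfac2]
  have h1 : (∏ j ∈ Finset.range (m+2), (2-α+(j:ℝ))) ≠ 0 := hprod.ne'
  have h2 : ((Nat.factorial (m+1)):ℝ) ≠ 0 := hfac1.ne'
  have h3 : ((m:ℝ)+2) ≠ 0 := by positivity
  have h4 : ((m:ℝ)+1)^((2:ℝ)-α) ≠ 0 := hpow.ne'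
  field_simp

lemma tendsto_ratio (α : ℝ) (hα0 : 0 < α) (hα1 : α < 1) :
    Filter.Tendsto (fun n : ℕ => gfun α n / Aa α n) Filter.atTop (nhds 1) := by
  have h1α : (0:ℝ) < 1 - α := by linarith
  set G := Real.Gamma (1-α) with hGdef
  have hG : 0 < G := Real.Gamma_pos_of_pos (by linarith)
  apply (Filter.tendsto_add_atTop_iff_nat 3).mp
  -- pointwise formula
  have hform : ∀ m : ℕ, gfun α ((m+3 : ℕ) : ℝ) / Aa α (m+3)
      = ((((m:ℝ)+3)/((m:ℝ)+1))^((1:ℝ)-α)) * ((((m:ℝ)+2))/((m:ℝ)+1))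
        * Real.GammaSeq (2-α) (m+1)
        * (1/((1-α)*G) + (-α/(2*G))*((m:ℝ)+3)⁻¹
            + (α*(α+1)*(2-3*α)/(24*G))*(((m:ℝ)+3)⁻¹*((m:ℝ)+3)⁻¹)) := by
    intro m
    set N : ℝ := (m:ℝ)+1 with hN
    set P : ℝ := (m:ℝ)+3 with hP
    have hNpos : 0 < N := by positivity
    have hPpos : 0 < P := by positivity
    have hGSpos : 0 < Real.GammaSeq (2-α) (m+1) := by
      have hprod : (0:ℝ) < ∏ j ∈ Finset.range (m+2), ((2-α)+(j:ℝ)) := by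
        apply Finset.prod_pos
        intro j _
        have : (0:ℝ) ≤ (j:ℝ) := by positivity
        linarith
      have hfac1 : (0:ℝ) < ((Nat.factorial (m+1)) : ℝ) := by exact_mod_cast Nat.factorial_pos (m+1)
      have : Real.GammaSeq (2-α) (m+1)
          = ((m+1:ℕ):ℝ)^((2:ℝ)-α) * ((Nat.factorial (m+1)) : ℝ) / ∏ j ∈ Finset.range (m+2), ((2-α)+(j:ℝ)) := rfl
      rw [this]
      have : (0:ℝ) < ((m+1:ℕ):ℝ)^((2:ℝ)-α) := Real.rpow_pos_of_pos (by positivity) _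
      positivity
    have hA := Aa_gamseq α hα1 m
    have hcast : ((m+3:ℕ):ℝ) = P := by rw [hP]; push_cast; ring
    have hPa : P^(-α) = P^(1-α)*P⁻¹ := by
      rw [← Real.rpow_neg_one P, ← Real.rpow_add hPpos]
      rw [show (1:ℝ)-α + -1 = -α by ring]
    have hPb : P^(-1-α) = P^(1-α)*(P⁻¹*P⁻¹) := by
      rw [← Real.rpow_neg_one P, ← Real.rpow_add hPpos, ← Real.rpow_add hPpos]
      rw [show (1:ℝ)-α + (-1 + -1) = -1-α by ring]
    have hsplit : P^((1:ℝ)-α) = (P/N)^((1:ℝ)-α) * N^((1:ℝ)-α) := by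
      rw [← Real.mul_rpow (by positivity) hNpos.le, div_mul_cancel₀]
      exact hNpos.ne'
    have hN2 : N^((2:ℝ)-α) = N * N^((1:ℝ)-α) := by
      rw [show (2:ℝ)-α = 1 + (1-α) by ring, Real.rpow_add hNpos, Real.rpow_one]
    have hNpow : 0 < N^((1:ℝ)-α) := Real.rpow_pos_of_pos hNpos _
    rw [hcast]
    unfold gfun
    rw [hPa, hPb, hA, ← hN, hN2, hsplit]
    rw [← hGdef]
    have hM2 : (0:ℝ) < (m:ℝ)+2 := by positivity
    field_simp
    ring
  have hV : (1 * 1 * Real.Gamma (2-α)) * (1/((1-α)*G) + (-α/(2*G))*0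
      + (α*(α+1)*(2-3*α)/(24*G))*(0*0)) = 1 := by
    rw [show (2:ℝ)-α = (1-α)+1 by ring, Real.Gamma_add_one (by linarith : (1:ℝ)-α ≠ 0), ← hGdef]
    field_simp
    ring
  have hinv1 : Filter.Tendsto (fun m : ℕ => ((m:ℝ)+1)⁻¹) Filter.atTop (nhds 0) :=
    (Filter.tendsto_atTop_add_const_right _ 1 tendsto_natCast_atTop_atTop).inv_tendsto_atTop
  have hinv3 : Filter.Tendsto (fun m : ℕ => ((m:ℝ)+3)⁻¹) Filter.atTop (nhds 0) :=
    (Filter.tendsto_atTop_add_const_right _ 3 tendsto_natCast_atTop_atTop).inv_tendsto_atTop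
  have hbase1 : Filter.Tendsto (fun m : ℕ => ((m:ℝ)+3)/((m:ℝ)+1)) Filter.atTop (nhds 1) := by
    have heq : ∀ m : ℕ, ((m:ℝ)+3)/((m:ℝ)+1) = 1 + 2*((m:ℝ)+1)⁻¹ := by
      intro m
      have : ((m:ℝ)+1) ≠ 0 := by positivity
      field_simp
      ring
    have h := Filter.Tendsto.congr (fun m => (heq m).symm)
      (tendsto_const_nhds.add (tendsto_const_nhds.mul hinv1))
    simpa using h
  have hpow1 : Filter.Tendsto (fun m : ℕ => (((m:ℝ)+3)/((m:ℝ)+1))^((1:ℝ)-α))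
      Filter.atTop (nhds 1) := by
    have hc := (Real.continuousAt_rpow_const 1 ((1:ℝ)-α) (Or.inl one_ne_zero)).tendsto
    rw [Real.one_rpow] at hc
    exact hc.comp hbase1
  have hbase2 : Filter.Tendsto (fun m : ℕ => ((m:ℝ)+2)/((m:ℝ)+1)) Filter.atTop (nhds 1) := by
    have heq : ∀ m : ℕ, ((m:ℝ)+2)/((m:ℝ)+1) = 1 + ((m:ℝ)+1)⁻¹ := by
      intro m
      have : ((m:ℝ)+1) ≠ 0 := by positivity
      field_simp
      ring
    have h := Filter.Tendsto.congr (fun m => (heq m).symm) (tendsto_const_nhds.add hinv1)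
    simpa using h
  have hGS : Filter.Tendsto (fun m : ℕ => Real.GammaSeq (2-α) (m+1)) Filter.atTop
      (nhds (Real.Gamma (2-α))) :=
    (Filter.tendsto_add_atTop_iff_nat 1).mpr (Real.GammaSeq_tendsto_Gamma (2-α))
  have hlast : Filter.Tendsto (fun m : ℕ => 1/((1-α)*G) + (-α/(2*G))*((m:ℝ)+3)⁻¹
      + (α*(α+1)*(2-3*α)/(24*G))*(((m:ℝ)+3)⁻¹*((m:ℝ)+3)⁻¹)) Filter.atTop
      (nhds (1/((1-α)*G) + (-α/(2*G))*0 + (α*(α+1)*(2-3*α)/(24*G))*(0*0))) := by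
    exact (tendsto_const_nhds.add (tendsto_const_nhds.mul hinv3)).add
      (tendsto_const_nhds.mul (hinv3.mul hinv3))
  have hbig := ((hpow1.mul hbase2).mul hGS).mul hlast
  rw [hV] at hbig
  exact hbig.congr (fun m => (hform m).symm)
theorem stmt11 (α : ℝ) (hα0 : 0 < α) (hα1 : α < 1) :
    ∃ C > (0:ℝ), ∀ n : ℕ, 2 ≤ n →
      |(-1 : ℝ) ^ (n - 1) * genBinom (α - 2) (n - 1) -
          1 / (Real.Gamma (2 - α) * (n : ℝ) ^ (α - 1)) +
          α / (2 * Real.Gamma (1 - α) * (n : ℝ) ^ α) -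
          (α + 1) * (3 * α - 2) / (24 * Real.Gamma (-α) * (n : ℝ) ^ (1 + α))| ≤
        C / (n : ℝ) ^ (2 + α) := by
  have h1α : (0:ℝ) < 1 - α := by linarith
  set G := Real.Gamma (1-α) with hGdef
  have hG : 0 < G := Real.Gamma_pos_of_pos (by linarith)
  obtain ⟨K, hK, hKb⟩ := d_bound α hα0 hα1
  refine ⟨64*K, by positivity, ?_⟩
  intro n hn
  set s : ℕ → ℝ := fun k => 1 - gfun α k / Aa α k with hsdef
  -- step bound
  have hstep : ∀ k : ℕ, 2 ≤ k → |s (k+1) - s k| ≤ 2*K/(k:ℝ)^4 := by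
    intro k hk
    have hk1 : (1:ℝ) ≤ (k:ℝ) := by exact_mod_cast Nat.one_le_iff_ne_zero.mpr (by omega)
    have hkpos : (0:ℝ) < k := by linarith
    have hA := Aa_pos α hα1 k hk
    have hA1 := Aa_pos α hα1 (k+1) (by omega)
    have hρ : (0:ℝ) < ((k:ℝ)+1-α)/(k:ℝ) := div_pos (by linarith) hkpos
    have hsucc : Aa α (k+1) = Aa α k * (((k:ℝ)+1-α)/(k:ℝ)) := Aa_succ α k (by omega)
    have hne1 : Aa α k ≠ 0 := hA.ne'
    have hne2 : (k:ℝ) ≠ 0 := hkpos.ne'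
    have hne3 : (k:ℝ)+1-α ≠ 0 := by linarith
    have hform : s (k+1) - s k
        = (gfun α k * (((k:ℝ)+1-α)/(k:ℝ)) - gfun α ((k:ℝ)+1)) / Aa α (k+1) := by
      rw [hsdef]
      simp only []
      rw [show ((k+1:ℕ):ℝ) = (k:ℝ)+1 by push_cast; ring]
      rw [hsucc]
      field_simp
      ring
    rw [hform, abs_div, abs_of_nonneg hA1.le]
    have hd := hKb k hk
    have hlow := Aa_lower α hα0 hα1 (k+1) (by omega)
    have hmono : ((k:ℝ))^(1-α) ≤ (((k+1:ℕ)):ℝ)^(1-α) := by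
      apply Real.rpow_le_rpow hkpos.le _ h1α.le
      push_cast
      linarith
    have hlow2 : 1/2 * ((k:ℝ))^(1-α) ≤ Aa α (k+1) := by
      calc 1/2 * ((k:ℝ))^(1-α) ≤ 1/2 * (((k+1:ℕ)):ℝ)^(1-α) := by gcongr
        _ ≤ Aa α (k+1) := hlow
    have hXpos : (0:ℝ) < ((k:ℝ))^(1-α) := Real.rpow_pos_of_pos hkpos _
    calc |gfun α k * (((k:ℝ)+1-α)/(k:ℝ)) - gfun α ((k:ℝ)+1)| / Aa α (k+1)
        ≤ (K * ((k:ℝ))^(1-α) / (k:ℝ)^4) / (1/2 * ((k:ℝ))^(1-α)) := by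
          apply div_le_div₀ (by positivity) hd (by positivity) hlow2
      _ = 2*K/(k:ℝ)^4 := by field_simp
  -- telescoping
  have hkey4 : ∀ M : ℕ, 2 ≤ M → 1/(M:ℝ)^4 ≤ 1/((M:ℝ)-1)^3 - 1/(M:ℝ)^3 := by
    intro M hM
    have hx : (2:ℝ) ≤ (M:ℝ) := by exact_mod_cast hM
    set x : ℝ := (M:ℝ)
    have hx1 : (0:ℝ) < x - 1 := by linarith
    have hx0 : (0:ℝ) < x := by linarith
    rw [div_sub_div _ _ (by positivity) (by positivity), div_le_div_iff₀ (by positivity) (by positivity)]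
    nlinarith [pow_pos hx0 3, pow_pos hx1 3, sq_nonneg x, sq_nonneg (x-1)]
  have htel : ∀ M : ℕ, n ≤ M → |s M - s n| ≤ 2*K*(1/((n:ℝ)-1)^3 - 1/((M:ℝ)-1)^3) := by
    intro M hM
    induction M, hM using Nat.le_induction with
    | base => simp
    | succ M hM ih =>
      have hM2 : 2 ≤ M := le_trans hn hM
      have hcast : ((M+1:ℕ):ℝ) - 1 = (M:ℝ) := by push_cast; ring
      calc |s (M+1) - s n| ≤ |s M - s n| + |s (M+1) - s M| := by
            rw [show s (M+1) - s n = (s M - s n) + (s (M+1) - s M) by ring]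
            exact abs_add_le _ _
        _ ≤ 2*K*(1/((n:ℝ)-1)^3 - 1/((M:ℝ)-1)^3) + 2*K/(M:ℝ)^4 :=
            add_le_add ih (hstep M hM2)
        _ ≤ 2*K*(1/((n:ℝ)-1)^3 - 1/((M:ℝ)-1)^3)
              + 2*K*(1/((M:ℝ)-1)^3 - 1/(M:ℝ)^3) := by
            have hk4 := hkey4 M hM2
            have h2K : (0:ℝ) ≤ 2*K := by linarith
            have hmid : 2*K/(M:ℝ)^4 ≤ 2*K*(1/((M:ℝ)-1)^3 - 1/(M:ℝ)^3) := by
              calc 2*K/(M:ℝ)^4 = 2*K*(1/(M:ℝ)^4) := by ring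
                _ ≤ 2*K*(1/((M:ℝ)-1)^3 - 1/(M:ℝ)^3) := by gcongr
            linarith
        _ = 2*K*(1/((n:ℝ)-1)^3 - 1/(((M+1:ℕ):ℝ)-1)^3) := by
            rw [hcast]
            ring
  -- limit of s
  have hn1R : (1:ℝ) < (n:ℝ) := by
    have : (2:ℝ) ≤ (n:ℝ) := by exact_mod_cast hn
    linarith
  have hnpos : (0:ℝ) < (n:ℝ) := by linarith
  have hlim0 : Filter.Tendsto s Filter.atTop (nhds 0) := by
    rw [hsdef]
    have h := (tendsto_ratio α hα0 hα1).const_sub 1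
    simpa using h
  -- |s n| bound
  have hsn : |s n| ≤ 2*K*(1/((n:ℝ)-1)^3) := by
    have hlim2 : Filter.Tendsto (fun M => |s M - s n|) Filter.atTop (nhds |s n|) := by
      have h := (hlim0.sub_const (s n)).abs
      simpa using h
    apply le_of_tendsto hlim2
    filter_upwards [Filter.eventually_ge_atTop n] with M hM
    have h := htel M hM
    have hMpos : (0:ℝ) ≤ 1/((M:ℝ)-1)^3 := by
      have h2 : (2:ℝ) ≤ (M:ℝ) := by
        have : 2 ≤ M := le_trans hn hM
        exact_mod_cast this
      have h3 : (0:ℝ) < (M:ℝ)-1 := by linarith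
      positivity
    calc |s M - s n| ≤ 2*K*(1/((n:ℝ)-1)^3 - 1/((M:ℝ)-1)^3) := h
      _ ≤ 2*K*(1/((n:ℝ)-1)^3) := by
          have h2K : (0:ℝ) ≤ 2*K := by linarith
          nlinarith
  -- matching the expression
  have hAapos := Aa_pos α hα1 n hn
  have e1 : (n:ℝ)^(α-1) = ((n:ℝ)^((1:ℝ)-α))⁻¹ := by
    rw [show α-1 = -(1-α) by ring, Real.rpow_neg hnpos.le]
  have e2 : (n:ℝ)^α = ((n:ℝ)^(-α))⁻¹ := by
    rw [← Real.rpow_neg hnpos.le, neg_neg]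
  have e3 : (n:ℝ)^((1:ℝ)+α) = ((n:ℝ)^(-1-α))⁻¹ := by
    rw [show (1:ℝ)+α = -(-1-α) by ring, Real.rpow_neg hnpos.le]
  have hΓ2 : Real.Gamma (2-α) = (1-α)*G := by
    rw [show (2:ℝ)-α = (1-α)+1 by ring, Real.Gamma_add_one h1α.ne', hGdef]
  have hΓm : Real.Gamma (-α) = -(G/α) := by
    have h := Real.Gamma_add_one (s := -α) (neg_ne_zero.2 hα0.ne')
    rw [show -α+1 = 1-α by ring] at h
    rw [hGdef, h]
    field_simp
  have hx1 : (0:ℝ) < (n:ℝ)^((1:ℝ)-α) := Real.rpow_pos_of_pos hnpos _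
  have hx2 : (0:ℝ) < (n:ℝ)^(-α) := Real.rpow_pos_of_pos hnpos _
  have hx3 : (0:ℝ) < (n:ℝ)^(-1-α) := Real.rpow_pos_of_pos hnpos _
  have hmatch : gfun α (n:ℝ) = 1/(Real.Gamma (2-α) * (n:ℝ)^(α-1))
      - α/(2*Real.Gamma (1-α)*(n:ℝ)^α)
      + (α+1)*(3*α-2)/(24*Real.Gamma (-α)*(n:ℝ)^((1:ℝ)+α)) := by
    unfold gfun
    rw [e1, e2, e3, hΓ2, hΓm, ← hGdef]
    field_simp
    ring
  have hgoal_eq : (-1 : ℝ) ^ (n - 1) * genBinom (α - 2) (n - 1) -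
          1 / (Real.Gamma (2 - α) * (n : ℝ) ^ (α - 1)) +
          α / (2 * Real.Gamma (1 - α) * (n : ℝ) ^ α) -
          (α + 1) * (3 * α - 2) / (24 * Real.Gamma (-α) * (n : ℝ) ^ (1 + α))
        = Aa α n - gfun α (n:ℝ) := by
    rw [hmatch]
    show _ = (-1:ℝ)^(n-1) * genBinom (α-2) (n-1) - _
    ring
  rw [hgoal_eq]
  -- final estimate
  have hAg : Aa α n - gfun α (n:ℝ) = s n * Aa α n := by
    rw [hsdef]
    simp only []
    field_simp
  rw [hAg, abs_mul, abs_of_nonneg hAapos.le]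
  have hup : Aa α n ≤ 4*(n:ℝ)^((1:ℝ)-α) := by
    have h := Aa_upper α hα0 hα1 n hn
    have h1 : 1 - 1/(n:ℝ) ≤ 1 := by
      have : (0:ℝ) ≤ 1/(n:ℝ) := by positivity
      linarith
    have h2 : (0:ℝ) ≤ 4*(n:ℝ)^((1:ℝ)-α) := by positivity
    calc Aa α n ≤ 4*(n:ℝ)^((1:ℝ)-α)*(1-1/(n:ℝ)) := h
      _ ≤ 4*(n:ℝ)^((1:ℝ)-α)*1 := by gcongr
      _ = 4*(n:ℝ)^((1:ℝ)-α) := by ring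
  have hn1' : (0:ℝ) < (n:ℝ)-1 := by linarith
  have hinv8 : 1/((n:ℝ)-1)^3 ≤ 8/(n:ℝ)^3 := by
    rw [div_le_div_iff₀ (by positivity) (by positivity)]
    have h2 : (2:ℝ) ≤ (n:ℝ) := by exact_mod_cast hn
    nlinarith [sq_nonneg ((n:ℝ)-2), sq_nonneg (n:ℝ)]
  calc |s n| * Aa α n ≤ (2*K*(1/((n:ℝ)-1)^3)) * (4*(n:ℝ)^((1:ℝ)-α)) := by
        apply mul_le_mul hsn hup hAapos.le
        have h3 : (0:ℝ) < ((n:ℝ)-1)^3 := pow_pos hn1' 3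
        positivity
    _ ≤ (2*K*(8/(n:ℝ)^3)) * (4*(n:ℝ)^((1:ℝ)-α)) := by gcongr
    _ = 64*K * ((n:ℝ)^((1:ℝ)-α)/(n:ℝ)^3) := by ring
    _ = 64*K / (n:ℝ)^(2+α) := by
        rw [← Real.rpow_natCast (n:ℝ) 3, ← Real.rpow_sub hnpos]
        rw [show (1:ℝ)-α - (3:ℕ) = -(2+α) by push_cast; ring]
        rw [Real.rpow_neg hnpos.le, div_eq_mul_inv]
end
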